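/- arXiv:1003.2749 — 6 statements merged into one kernel-verified Lean document; each statement's English description precedes it below -/
import Mathlib

section
/- Let P be a weighted CSMA chain for (G,W) with stationary distribution π. Then Σ_{σ∈I(G)} π_σ (Σ_{i∈σ} log W_i) ≥ (max_{ρ∈I(G)} Σ_{i∈ρ} log W_i) − 13·n·2^n·log 2. -/
/-- An independent set of a graph, as a `Finset` of vertices. -/
def IsIndep {V : Type*} (G : SimpleGraph V) (s : Finset V) : Prop :=
  ∀ i ∈ s, ∀ j ∈ s, ¬ G.Adj i j

instance {V : Type*} (G : SimpleGraph V) [DecidableRel G.Adj] :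
    DecidablePred (IsIndep G) := fun s =>
  inferInstanceAs (Decidable (∀ i ∈ s, ∀ j ∈ s, ¬ G.Adj i j))

instance {V : Type*} (G : SimpleGraph V) :
    Nonempty {s : Finset V // IsIndep G s} :=
  ⟨⟨∅, fun i hi => absurd hi (Finset.notMem_empty i)⟩⟩

open Finset Function

namespace CSMAaux

open scoped Classical

section Tree

variable {S : Type*} [Fintype S] [DecidableEq S]

def Conn (f : S → S) (r : S) : Prop := ∀ v, ∃ k, f^[k] v = r

noncomputable def Bset (r : S) : Finset (S → S) :=
  Finset.univ.filter (fun f => Conn f r ∧ f r = r)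

lemma mem_Bset {r : S} {f : S → S} : f ∈ Bset r ↔ Conn f r ∧ f r = r := by
  simp [Bset]

variable (P : S → S → ℝ)

noncomputable def wtr (r : S) (f : S → S) : ℝ := ∏ v ∈ Finset.univ.erase r, P v (f v)

noncomputable def wtt (f : S → S) : ℝ := ∏ v, P v (f v)

noncomputable def Nw (r : S) : ℝ := ∑ f ∈ Bset r, wtr P r f

lemma wtt_eq (τ : S) (f : S → S) : wtt P f = P τ (f τ) * wtr P τ f := by
  rw [wtt, wtr, ← Finset.mul_prod_erase Finset.univ _ (Finset.mem_univ τ)]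

lemma wtr_congr {r : S} {f g : S → S} (h : ∀ v, v ≠ r → f v = g v) :
    wtr P r f = wtr P r g := by
  apply Finset.prod_congr rfl
  intro v hv
  rw [h v (Finset.ne_of_mem_erase hv)]

lemma wtr_nonneg (hP0 : ∀ x y, 0 ≤ P x y) (r : S) (f : S → S) : 0 ≤ wtr P r f :=
  Finset.prod_nonneg fun v _ => hP0 _ _

section agree

variable {f g : S → S} {a : S}

omit [Fintype S] [DecidableEq S] in
lemma agree_iter (h : ∀ x, x ≠ a → g x = f x) :
    ∀ k v, f^[k] v = a → ∃ j, g^[j] v = a := by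
  intro k
  induction k with
  | zero => intro v hv; exact ⟨0, hv⟩
  | succ k ih =>
    intro v hv
    by_cases hva : v = a
    · exact ⟨0, hva⟩
    · rw [Function.iterate_succ_apply] at hv
      obtain ⟨j, hj⟩ := ih (f v) hv
      exact ⟨j + 1, by rw [Function.iterate_succ_apply, h v hva, hj]⟩

omit [Fintype S] [DecidableEq S] in
lemma conn_of_agree (h : ∀ x, x ≠ a → g x = f x) (hf : Conn f a) : Conn g a := by
  intro v
  obtain ⟨k, hk⟩ := hf v
  exact agree_iter h k v hk

omit [Fintype S] [DecidableEq S] in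
lemma iter_agree (h : ∀ x, x ≠ a → g x = f x) {v : S} :
    ∀ j, (∀ i, i < j → f^[i] v ≠ a) → g^[j] v = f^[j] v := by
  intro j
  induction j with
  | zero => intro _; rfl
  | succ j ih =>
    intro hj
    rw [Function.iterate_succ_apply', Function.iterate_succ_apply',
      ih (fun i hi => hj i (Nat.lt_succ_of_lt hi)),
      h _ (hj j (Nat.lt_succ_self j))]

end agree

noncomputable def hitT (f : S → S) (v a : S) : ℕ := sInf {k | f^[k] v = a}

noncomputable def retT (f : S → S) (σ : S) : ℕ := sInf {m | 0 < m ∧ f^[m] σ = σ}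

omit [Fintype S] [DecidableEq S] in
lemma hitT_spec {f : S → S} {v a : S} (hex : ∃ k, f^[k] v = a) :
    f^[hitT f v a] v = a := Nat.sInf_mem hex

omit [Fintype S] [DecidableEq S] in
lemma hitT_min {f : S → S} {v a : S} {i : ℕ} (hi : i < hitT f v a) : f^[i] v ≠ a :=
  Nat.notMem_of_lt_sInf hi

omit [Fintype S] [DecidableEq S] in
lemma hitT_le {f : S → S} {v a : S} {k : ℕ} (hk : f^[k] v = a) : hitT f v a ≤ k :=
  Nat.sInf_le hk

omit [Fintype S] in
lemma key_forward {g : S → S} {τ : S} (hg : Conn g τ) (σ : S) :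
    Conn (Function.update g τ σ) σ := by
  intro v
  obtain ⟨k, hk⟩ := hg v
  obtain ⟨j, hj⟩ := agree_iter (f := g) (g := Function.update g τ σ) (a := τ)
      (fun x hx => Function.update_of_ne hx _ _) k v hk
  exact ⟨j + 1, by rw [Function.iterate_succ_apply', hj, Function.update_self]⟩

omit [Fintype S] in
lemma key_recover {g : S → S} {τ : S} (hg : Conn g τ) (σ : S) :
    retT (Function.update g τ σ) σ = hitT g σ τ + 1 ∧
    (Function.update g τ σ)^[hitT g σ τ] σ = τ := by
  set f := Function.update g τ σ with hf
  set k := hitT g σ τ with hk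
  have hgk : g^[k] σ = τ := hitT_spec (hg σ)
  have hagree : ∀ x, x ≠ τ → f x = g x := fun x hx => Function.update_of_ne hx _ _
  have hiter : ∀ j, j ≤ k → f^[j] σ = g^[j] σ := by
    intro j hj
    exact iter_agree hagree j (fun i hi => hitT_min (lt_of_lt_of_le hi hj))
  have hfk : f^[k] σ = τ := (hiter k le_rfl).trans hgk
  have hfk1 : f^[k+1] σ = σ := by
    rw [Function.iterate_succ_apply', hfk]; exact Function.update_self ..
  have hnoret : ∀ m, 0 < m → m ≤ k → f^[m] σ ≠ σ := by
    intro m hm hmk heq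
    have h1 : f^[k - m + m] σ = τ := by rw [Nat.sub_add_cancel hmk]; exact hfk
    rw [Function.iterate_add_apply, heq] at h1
    have h2 : g^[k - m] σ = τ := by rw [← hiter _ (Nat.sub_le _ _)]; exact h1
    exact hitT_min (by omega) h2
  refine ⟨le_antisymm (Nat.sInf_le ⟨Nat.succ_pos k, hfk1⟩) ?_, hfk⟩
  by_contra hlt
  push_neg at hlt
  have hmem : 0 < retT f σ ∧ f^[retT f σ] σ = σ :=
    Nat.sInf_mem (⟨k+1, Nat.succ_pos k, hfk1⟩ : ∃ m, 0 < m ∧ f^[m] σ = σ)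
  exact hnoret _ hmem.1 (Nat.lt_succ_iff.mp hlt) hmem.2

omit [Fintype S] [DecidableEq S] in
lemma retT_spec {f : S → S} {σ : S} (hf : Conn f σ) :
    0 < retT f σ ∧ f^[retT f σ] σ = σ := by
  have hex : ∃ m, 0 < m ∧ f^[m] σ = σ := by
    obtain ⟨k, hk⟩ := hf (f σ)
    exact ⟨k+1, Nat.succ_pos k, by rw [Function.iterate_succ_apply]; exact hk⟩
  exact Nat.sInf_mem hex

omit [Fintype S] in
lemma key_backward {f : S → S} {σ : S} (hf : Conn f σ) :
    f (f^[retT f σ - 1] σ) = σ ∧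
    Conn (Function.update f (f^[retT f σ - 1] σ) (f^[retT f σ - 1] σ))
      (f^[retT f σ - 1] σ) := by
  obtain ⟨hm0, hmret⟩ := retT_spec hf
  set m := retT f σ
  have hfτ : f (f^[m-1] σ) = σ := by
    have h' : f^[(m-1)+1] σ = σ := by rw [Nat.sub_add_cancel hm0]; exact hmret
    calc f (f^[m-1] σ) = f^[(m-1)+1] σ := (Function.iterate_succ_apply' f (m-1) σ).symm
    _ = σ := h'
  refine ⟨hfτ, ?_⟩
  intro v
  obtain ⟨k, hk⟩ := hf v
  have hreach : f^[(m-1) + k] v = f^[m-1] σ := by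
    rw [Function.iterate_add_apply, hk]
  exact agree_iter (fun x hx => Function.update_of_ne hx _ _) _ v hreach

lemma claimA (hrow : ∀ x, ∑ y, P x y = 1) (σ : S) :
    ∑ f ∈ Finset.univ.filter (fun f => Conn f σ), wtt P f = Nw P σ := by
  have h1 : Nw P σ = ∑ q ∈ (Bset σ) ×ˢ (Finset.univ : Finset S),
      wtr P σ q.1 * P σ q.2 := by
    rw [Finset.sum_product, Nw]
    apply Finset.sum_congr rfl
    intro g _
    show wtr P σ g = ∑ y, wtr P σ g * P σ y
    rw [← Finset.mul_sum, hrow, mul_one]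
  rw [h1]
  apply Finset.sum_nbij' (i := fun f => (Function.update f σ σ, f σ))
    (j := fun q => Function.update q.1 σ q.2)
  · intro f hf
    simp only [Finset.mem_filter, Finset.mem_univ, true_and] at hf
    simp only [Finset.mem_product, Finset.mem_univ, and_true, mem_Bset]
    refine ⟨conn_of_agree (a := σ) (fun x hx => Function.update_of_ne hx _ _) hf, ?_⟩
    exact Function.update_self ..
  · intro q hq
    simp only [Finset.mem_product, mem_Bset] at hq
    simp only [Finset.mem_filter, Finset.mem_univ, true_and]
    exact conn_of_agree (a := σ) (fun x hx => Function.update_of_ne hx _ _) hq.1.1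
  · intro f hf
    show Function.update (Function.update f σ σ) σ (f σ) = f
    rw [Function.update_idem]
    exact Function.update_eq_self σ f
  · intro q hq
    simp only [Finset.mem_product, mem_Bset] at hq
    have h2 : q.1 σ = σ := hq.1.2
    have h3 : Function.update q.1 σ σ = q.1 := by
      funext x
      by_cases hx : x = σ
      · subst hx; rw [Function.update_self, h2]
      · rw [Function.update_of_ne hx]
    show (Function.update (Function.update q.1 σ q.2) σ σ, Function.update q.1 σ q.2 σ) = q
    rw [Function.update_idem, Function.update_self, h3]
  · intro f hf
    show wtt P f = wtr P σ (Function.update f σ σ) * P σ (f σ)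
    rw [wtt_eq P σ f, mul_comm]
    congr 1
    apply wtr_congr
    intro v hv
    rw [Function.update_of_ne hv]

lemma claimB (σ : S) :
    ∑ f ∈ Finset.univ.filter (fun f => Conn f σ), wtt P f = ∑ τ, Nw P τ * P τ σ := by
  have h1 : ∑ τ, Nw P τ * P τ σ
      = ∑ q ∈ (Finset.univ : Finset S).sigma (fun τ => Bset τ),
          wtr P q.1 q.2 * P q.1 σ := by
    rw [Finset.sum_sigma]
    apply Finset.sum_congr rfl
    intro τ _
    rw [Nw, Finset.sum_mul]
  rw [h1]
  apply Finset.sum_nbij'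
    (i := fun f => (⟨f^[retT f σ - 1] σ,
        Function.update f (f^[retT f σ - 1] σ) (f^[retT f σ - 1] σ)⟩ : Σ _ : S, (S → S)))
    (j := fun q => Function.update q.2 q.1 σ)
  · intro f hf
    simp only [Finset.mem_filter, Finset.mem_univ, true_and] at hf
    obtain ⟨h1', h2'⟩ := key_backward hf
    simp only [Finset.mem_sigma, Finset.mem_univ, true_and, mem_Bset]
    exact ⟨h2', Function.update_self ..⟩
  · intro q hq
    simp only [Finset.mem_sigma, mem_Bset] at hq
    simp only [Finset.mem_filter, Finset.mem_univ, true_and]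
    exact key_forward hq.2.1 σ
  · -- left inverse : j (i f) = f
    intro f hf
    simp only [Finset.mem_filter, Finset.mem_univ, true_and] at hf
    have hfτ := (key_backward hf).1
    show Function.update
        (Function.update f (f^[retT f σ - 1] σ) (f^[retT f σ - 1] σ))
        (f^[retT f σ - 1] σ) σ = f
    rw [Function.update_idem]
    funext x
    by_cases hx : x = f^[retT f σ - 1] σ
    · rw [hx, Function.update_self]; exact hfτ.symm
    · rw [Function.update_of_ne hx]
  · -- right inverse : i (j q) = q
    intro q hq
    obtain ⟨τ, g⟩ := q
    simp only [Finset.mem_sigma, Finset.mem_univ, true_and, mem_Bset] at hq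
    obtain ⟨hg, hgτ⟩ := hq
    obtain ⟨hret, hτ⟩ := key_recover hg σ
    show (⟨(Function.update g τ σ)^[retT (Function.update g τ σ) σ - 1] σ,
        Function.update (Function.update g τ σ)
          ((Function.update g τ σ)^[retT (Function.update g τ σ) σ - 1] σ)
          ((Function.update g τ σ)^[retT (Function.update g τ σ) σ - 1] σ)⟩
        : Σ _ : S, (S → S)) = ⟨τ, g⟩
    rw [hret]
    simp only [Nat.add_sub_cancel]
    rw [hτ, Function.update_idem]
    have hupd : Function.update g τ τ = g := by
      funext x
      by_cases hx : x = τ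
      · rw [hx, Function.update_self]; exact hgτ.symm
      · rw [Function.update_of_ne hx]
    rw [hupd]
  · -- weights
    intro f hf
    simp only [Finset.mem_filter, Finset.mem_univ, true_and] at hf
    obtain ⟨hfτ, -⟩ := key_backward hf
    show wtt P f = wtr P (f^[retT f σ - 1] σ)
        (Function.update f (f^[retT f σ - 1] σ) (f^[retT f σ - 1] σ))
        * P (f^[retT f σ - 1] σ) σ
    rw [wtt_eq P (f^[retT f σ - 1] σ) f, hfτ, mul_comm]
    congr 1
    apply wtr_congr
    intro v hv
    rw [Function.update_of_ne hv]

lemma Nw_stationary (hrow : ∀ x, ∑ y, P x y = 1) (σ : S) :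
    ∑ τ, Nw P τ * P τ σ = Nw P σ :=
  (claimB P σ).symm.trans (claimA P hrow σ)

-- continuing inside section Tree, after Nw_stationary

noncomputable def reroot (g : S → S) (a b : S) : S → S := fun x =>
  if (∃ i, i ≤ hitT g b a ∧ g^[i] b = x) then
    (if hitT g b x = 0 then b else g^[hitT g b x - 1] b)
  else g x

section Reroot

variable {g : S → S} {a b : S}

omit [Fintype S] [DecidableEq S] in
lemma path_no_repeat (hg : Conn g a) :
    ∀ {i j : ℕ}, i < j → j ≤ hitT g b a → g^[i] b ≠ g^[j] b := by
  intro i j hij hj heq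
  have hk : g^[hitT g b a] b = a := hitT_spec (hg b)
  have h1 : g^[(hitT g b a - j) + j] b = a := by rw [Nat.sub_add_cancel hj]; exact hk
  rw [Function.iterate_add_apply, ← heq, ← Function.iterate_add_apply] at h1
  exact hitT_min (by omega) h1

omit [Fintype S] [DecidableEq S] in
lemma path_idx (hg : Conn g a) {j : ℕ} (hj : j ≤ hitT g b a) :
    hitT g b (g^[j] b) = j := by
  have h1 : hitT g b (g^[j] b) ≤ j := hitT_le rfl
  have h2 : g^[hitT g b (g^[j] b)] b = g^[j] b := hitT_spec ⟨j, rfl⟩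
  rcases lt_or_eq_of_le h1 with h | h
  · exact absurd h2 (path_no_repeat hg h hj)
  · exact h

omit [Fintype S] in
lemma reroot_at_path (hg : Conn g a) {j : ℕ} (hj0 : 0 < j) (hj : j ≤ hitT g b a) :
    reroot g a b (g^[j] b) = g^[j-1] b := by
  have hex : ∃ i, i ≤ hitT g b a ∧ g^[i] b = g^[j] b := ⟨j, hj, rfl⟩
  rw [reroot, if_pos hex, path_idx hg hj, if_neg (by omega)]

omit [Fintype S] in
lemma reroot_at_b : reroot g a b b = b := by
  have h0 : hitT g b b = 0 := Nat.le_zero.mp (hitT_le rfl)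
  rw [reroot, if_pos ⟨0, Nat.zero_le _, rfl⟩, h0, if_pos rfl]

omit [Fintype S] in
lemma reroot_off {x : S} (hx : ¬ ∃ i, i ≤ hitT g b a ∧ g^[i] b = x) :
    reroot g a b x = g x := by
  rw [reroot, if_neg hx]

omit [Fintype S] in
lemma reroot_desc (hg : Conn g a) :
    ∀ j, j ≤ hitT g b a → (reroot g a b)^[j] (g^[j] b) = b := by
  intro j
  induction j with
  | zero => intro _; rfl
  | succ j ih =>
    intro hj
    rw [Function.iterate_succ_apply, reroot_at_path hg (Nat.succ_pos j) hj]
    have : j + 1 - 1 = j := by omega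
    rw [this]
    exact ih (Nat.le_of_succ_le hj)

omit [Fintype S] in
lemma reroot_conn (hg : Conn g a) : Conn (reroot g a b) b := by
  have main : ∀ m, ∀ x, g^[m] x = a → ∃ j, (reroot g a b)^[j] x = b := by
    intro m
    induction m using Nat.strong_induction_on with
    | _ m ih =>
      intro x hx
      by_cases hxp : ∃ i, i ≤ hitT g b a ∧ g^[i] b = x
      · obtain ⟨i, hik, hi⟩ := hxp
        exact ⟨i, by rw [← hi]; exact reroot_desc hg i hik⟩
      · have hxa : x ≠ a := by
          intro hxa
          exact hxp ⟨hitT g b a, le_rfl, by rw [hitT_spec (hg b), hxa]⟩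
        have hm : m ≠ 0 := by
          rintro rfl
          exact hxa hx
        obtain ⟨m', rfl⟩ : ∃ m', m = m' + 1 := ⟨m - 1, by omega⟩
        rw [Function.iterate_succ_apply] at hx
        obtain ⟨j, hj⟩ := ih m' (by omega) (g x) hx
        refine ⟨j + 1, ?_⟩
        rw [Function.iterate_succ_apply, reroot_off hxp]
        exact hj
  intro x
  obtain ⟨m, hm⟩ := hg x
  exact main m x hm

omit [Fintype S] in
lemma reroot_iter (hg : Conn g a) (hga : g a = a) :
    ∀ j, j ≤ hitT g b a → (reroot g a b)^[j] a = g^[hitT g b a - j] b := by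
  intro j
  induction j with
  | zero => intro _; simp [hitT_spec (hg b)]
  | succ j ih =>
    intro hj
    rw [Function.iterate_succ_apply', ih (Nat.le_of_succ_le hj),
      reroot_at_path hg (by omega) (Nat.sub_le _ _), Nat.sub_sub]

omit [Fintype S] in
lemma hitT_reroot (hg : Conn g a) (hga : g a = a) :
    hitT (reroot g a b) a b = hitT g b a := by
  have h1 : (reroot g a b)^[hitT g b a] a = b := by
    rw [reroot_iter hg hga _ le_rfl]
    simp
  refine le_antisymm (hitT_le h1) ?_
  by_contra hlt
  push_neg at hlt
  have ht : (reroot g a b)^[hitT (reroot g a b) a b] a = b :=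
    hitT_spec ⟨_, h1⟩
  rw [reroot_iter hg hga _ (le_of_lt hlt)] at ht
  have h0 : (0:ℕ) < hitT g b a - hitT (reroot g a b) a b := by omega
  have := path_no_repeat (b := b) hg h0 (Nat.sub_le _ _)
  simp only [Function.iterate_zero_apply] at this
  exact this ht.symm

omit [Fintype S] in
lemma reroot_reroot (hg : Conn g a) (hga : g a = a) :
    reroot (reroot g a b) b a = g := by
  have hconn : Conn (reroot g a b) b := reroot_conn hg
  have hrb : reroot g a b b = b := reroot_at_b
  have hT : hitT (reroot g a b) a b = hitT g b a := hitT_reroot hg hga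
  funext x
  by_cases hx : ∃ i, i ≤ hitT g b a ∧ g^[i] b = x
  · obtain ⟨i, hik, hi⟩ := hx
    subst hi
    have hxw : (reroot g a b)^[hitT g b a - i] a = g^[i] b := by
      rw [reroot_iter hg hga _ (Nat.sub_le _ _)]
      congr 1
      omega
    have hex : ∃ i', i' ≤ hitT (reroot g a b) a b ∧ (reroot g a b)^[i'] a = g^[i] b :=
      ⟨hitT g b a - i, by rw [hT]; exact Nat.sub_le _ _, hxw⟩
    have hidx : hitT (reroot g a b) a (g^[i] b) = hitT g b a - i := by
      rw [← hxw]
      exact path_idx (b := a) hconn (by rw [hT]; exact Nat.sub_le _ _)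
    rcases Nat.eq_or_lt_of_le hik with heq | hlt
    · -- i = hitT g b a, x = a
      have hxa : g^[i] b = a := by rw [heq]; exact hitT_spec (hg b)
      rw [reroot, if_pos hex, hidx, if_pos (by omega), hxa, hga]
    · -- i < hitT g b a
      rw [reroot, if_pos hex, hidx, if_neg (by omega)]
      have h2 : hitT g b a - i - 1 ≤ hitT g b a := by omega
      rw [reroot_iter hg hga _ h2]
      have h3 : hitT g b a - (hitT g b a - i - 1) = i + 1 := by omega
      rw [h3, Function.iterate_succ_apply']
  · have hx' : ¬ ∃ i', i' ≤ hitT (reroot g a b) a b ∧ (reroot g a b)^[i'] a = x := by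
      rintro ⟨i', hi'le, hi'⟩
      rw [hT] at hi'le
      rw [reroot_iter hg hga _ hi'le] at hi'
      exact hx ⟨hitT g b a - i', Nat.sub_le _ _, hi'⟩
    rw [reroot_off hx', reroot_off hx]

lemma path_card (hg : Conn g a) : hitT g b a + 1 ≤ Fintype.card S := by
  have hinj : Function.Injective (fun i : Fin (hitT g b a + 1) => g^[i.1] b) := by
    intro i j hij
    rcases lt_trichotomy i.1 j.1 with h | h | h
    · exact absurd hij (path_no_repeat hg h (Nat.lt_succ_iff.mp j.2))
    · exact Fin.ext h
    · exact absurd hij.symm (path_no_repeat hg h (Nat.lt_succ_iff.mp i.2))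
  simpa using Fintype.card_le_of_injective _ hinj

end Reroot

section Weights

variable {g : S → S} {a b : S}

lemma wtr_reroot_ge (hP0 : ∀ x y, 0 ≤ P x y) (hdiag : ∀ x, 0 < P x x)
    {β : ℝ} (hβ0 : 0 < β) (hβ1 : β ≤ 1) (φ : S → ℝ)
    (hyp : ∀ x y, β * Real.exp (φ y - φ x) * P y x ≤ P x y)
    (hg : Conn g a) (hga : g a = a) (b : S) :
    β ^ (Fintype.card S) * Real.exp (φ b - φ a) * wtr P a g
      ≤ wtr P b (reroot g a b) := by
  classical
  set k := hitT g b a with hk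
  set pathF : Finset S := (Finset.range (k+1)).image (fun i => g^[i] b) with hpathF
  have hva : g^[k] b = a := hitT_spec (hg b)
  have hbmem : b ∈ pathF := by
    rw [hpathF]
    exact Finset.mem_image.mpr ⟨0, Finset.mem_range.mpr (Nat.succ_pos k), rfl⟩
  have hamem : a ∈ pathF := by
    rw [hpathF]
    exact Finset.mem_image.mpr ⟨k, Finset.mem_range.mpr (Nat.lt_succ_self k), hva⟩
  have hoff : ∀ x, x ∉ pathF → reroot g a b x = g x := by
    intro x hx
    apply reroot_off
    rintro ⟨i, hik, hix⟩
    exact hx (by rw [hpathF]; exact Finset.mem_image.mpr ⟨i, Finset.mem_range.mpr (by omega), hix⟩)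
  have hinj : ∀ i ∈ Finset.range (k+1), ∀ j ∈ Finset.range (k+1),
      g^[i] b = g^[j] b → i = j := by
    intro i hi j hj hij
    rcases lt_trichotomy i j with h | h | h
    · exact absurd hij (path_no_repeat hg h (Nat.lt_succ_iff.mp (Finset.mem_range.mp hj)))
    · exact h
    · exact absurd hij.symm (path_no_repeat hg h (Nat.lt_succ_iff.mp (Finset.mem_range.mp hi)))
  -- decomposition of total weights
  have hsplit : ∀ f : S → S, wtt P f
      = (∏ x ∈ Finset.univ \ pathF, P x (f x)) * ∏ i ∈ Finset.range (k+1), P (g^[i] b) (f (g^[i] b)) := by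
    intro f
    rw [wtt, ← Finset.prod_sdiff (Finset.subset_univ pathF)]
    congr 1
    rw [hpathF, Finset.prod_image hinj]
  have houtr : ∏ x ∈ Finset.univ \ pathF, P x (reroot g a b x)
      = ∏ x ∈ Finset.univ \ pathF, P x (g x) := by
    apply Finset.prod_congr rfl
    intro x hx
    rw [hoff x (Finset.mem_sdiff.mp hx).2]
  -- path products
  have hpg : ∏ i ∈ Finset.range (k+1), P (g^[i] b) (g (g^[i] b))
      = (∏ i ∈ Finset.range k, P (g^[i] b) (g^[i+1] b)) * P a a := by
    rw [Finset.prod_range_succ, hva, hga]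
    congr 1
    apply Finset.prod_congr rfl
    intro i _
    rw [← Function.iterate_succ_apply' g i b]
  have hph : ∏ i ∈ Finset.range (k+1), P (g^[i] b) (reroot g a b (g^[i] b))
      = (∏ i ∈ Finset.range k, P (g^[i+1] b) (g^[i] b)) * P b b := by
    rw [Finset.prod_range_succ']
    congr 1
    · apply Finset.prod_congr rfl
      intro i hi
      rw [reroot_at_path hg (Nat.succ_pos i) (Nat.succ_le_of_lt (Finset.mem_range.mp hi)),
        Nat.succ_sub_one]
    · show P (g^[0] b) (reroot g a b (g^[0] b)) = P b b
      rw [Function.iterate_zero_apply, reroot_at_b]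
  -- relate wtr to wtt
  have hwg : wtt P g = P a a * wtr P a g := by
    rw [wtt_eq P a g, hga]
  have hwh : wtt P (reroot g a b) = P b b * wtr P b (reroot g a b) := by
    rw [wtt_eq P b (reroot g a b), reroot_at_b]
  -- identities for wtr
  have hgid : wtr P a g
      = (∏ x ∈ Finset.univ \ pathF, P x (g x)) * ∏ i ∈ Finset.range k, P (g^[i] b) (g^[i+1] b) := by
    have h1 := hsplit g
    rw [hwg, hpg] at h1
    have := mul_left_cancel₀ (ne_of_gt (hdiag a)) (by linarith [h1] : P a a * wtr P a g
        = P a a * ((∏ x ∈ Finset.univ \ pathF, P x (g x)) * ∏ i ∈ Finset.range k, P (g^[i] b) (g^[i+1] b)))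
    exact this
  have hhid : wtr P b (reroot g a b)
      = (∏ x ∈ Finset.univ \ pathF, P x (g x)) * ∏ i ∈ Finset.range k, P (g^[i+1] b) (g^[i] b) := by
    have h1 := hsplit (reroot g a b)
    rw [hwh, hph, houtr] at h1
    have := mul_left_cancel₀ (ne_of_gt (hdiag b)) (by linarith [h1] : P b b * wtr P b (reroot g a b)
        = P b b * ((∏ x ∈ Finset.univ \ pathF, P x (g x)) * ∏ i ∈ Finset.range k, P (g^[i+1] b) (g^[i] b)))
    exact this
  -- comparison of path products
  have hcomp : β ^ k * Real.exp (φ b - φ a) * ∏ i ∈ Finset.range k, P (g^[i] b) (g^[i+1] b)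
      ≤ ∏ i ∈ Finset.range k, P (g^[i+1] b) (g^[i] b) := by
    have h1 : ∏ i ∈ Finset.range k, (β * Real.exp (φ (g^[i] b) - φ (g^[i+1] b)) * P (g^[i] b) (g^[i+1] b))
        ≤ ∏ i ∈ Finset.range k, P (g^[i+1] b) (g^[i] b) := by
      apply Finset.prod_le_prod
      · intro i _
        exact mul_nonneg (mul_nonneg hβ0.le (Real.exp_pos _).le) (hP0 _ _)
      · intro i _
        exact hyp (g^[i+1] b) (g^[i] b)
    have h2 : ∏ i ∈ Finset.range k, (β * Real.exp (φ (g^[i] b) - φ (g^[i+1] b)) * P (g^[i] b) (g^[i+1] b))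
        = β ^ k * Real.exp (φ b - φ a) * ∏ i ∈ Finset.range k, P (g^[i] b) (g^[i+1] b) := by
      rw [Finset.prod_mul_distrib, Finset.prod_mul_distrib, Finset.prod_const,
        Finset.card_range, ← Real.exp_sum, Finset.sum_range_sub']
      rw [show (g^[0] b) = b from rfl, hva]
    rw [← h2]
    exact h1
  -- conclude
  rw [hgid, hhid]
  have hout_nonneg : 0 ≤ ∏ x ∈ Finset.univ \ pathF, P x (g x) :=
    Finset.prod_nonneg fun x _ => hP0 _ _
  have hβk : β ^ (Fintype.card S) ≤ β ^ k := by
    apply pow_le_pow_of_le_one hβ0.le hβ1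
    have := path_card (b := b) hg
    omega
  have hfwd_nonneg : 0 ≤ ∏ i ∈ Finset.range k, P (g^[i] b) (g^[i+1] b) :=
    Finset.prod_nonneg fun i _ => hP0 _ _
  calc β ^ (Fintype.card S) * Real.exp (φ b - φ a)
        * ((∏ x ∈ Finset.univ \ pathF, P x (g x)) * ∏ i ∈ Finset.range k, P (g^[i] b) (g^[i+1] b))
      ≤ β ^ k * Real.exp (φ b - φ a)
        * ((∏ x ∈ Finset.univ \ pathF, P x (g x)) * ∏ i ∈ Finset.range k, P (g^[i] b) (g^[i+1] b)) := by
        apply mul_le_mul_of_nonneg_right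
        · apply mul_le_mul_of_nonneg_right hβk (Real.exp_pos _).le
        · exact mul_nonneg hout_nonneg hfwd_nonneg
    _ = (∏ x ∈ Finset.univ \ pathF, P x (g x))
        * (β ^ k * Real.exp (φ b - φ a) * ∏ i ∈ Finset.range k, P (g^[i] b) (g^[i+1] b)) := by ring
    _ ≤ (∏ x ∈ Finset.univ \ pathF, P x (g x)) * ∏ i ∈ Finset.range k, P (g^[i+1] b) (g^[i] b) :=
        mul_le_mul_of_nonneg_left hcomp hout_nonneg

end Weights

lemma Nw_le (hP0 : ∀ x y, 0 ≤ P x y) (hdiag : ∀ x, 0 < P x x)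
    {β : ℝ} (hβ0 : 0 < β) (hβ1 : β ≤ 1) (φ : S → ℝ)
    (hyp : ∀ x y, β * Real.exp (φ y - φ x) * P y x ≤ P x y) (a b : S) :
    β ^ (Fintype.card S) * Real.exp (φ b - φ a) * Nw P a ≤ Nw P b := by
  rw [Nw, Finset.mul_sum]
  have step1 : ∑ g ∈ Bset a, β ^ (Fintype.card S) * Real.exp (φ b - φ a) * wtr P a g
      ≤ ∑ g ∈ Bset a, wtr P b (reroot g a b) := by
    apply Finset.sum_le_sum
    intro g hgmem
    obtain ⟨hg, hga⟩ := mem_Bset.mp hgmem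
    exact wtr_reroot_ge P hP0 hdiag hβ0 hβ1 φ hyp hg hga b
  have step2 : ∑ g ∈ Bset a, wtr P b (reroot g a b)
      = ∑ h ∈ (Bset a).image (fun g => reroot g a b), wtr P b h := by
    rw [Finset.sum_image]
    intro g1 h1 g2 h2 heq
    obtain ⟨hg1, hga1⟩ := mem_Bset.mp h1
    obtain ⟨hg2, hga2⟩ := mem_Bset.mp h2
    calc g1 = reroot (reroot g1 a b) b a := (reroot_reroot hg1 hga1).symm
      _ = reroot (reroot g2 a b) b a := by rw [show reroot g1 a b = reroot g2 a b from heq]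
      _ = g2 := reroot_reroot hg2 hga2
  have step3 : ∑ h ∈ (Bset a).image (fun g => reroot g a b), wtr P b h ≤ Nw P b := by
    rw [Nw]
    apply Finset.sum_le_sum_of_subset_of_nonneg
    · intro h hmem
      obtain ⟨g, hgmem, rfl⟩ := Finset.mem_image.mp hmem
      obtain ⟨hg, hga⟩ := mem_Bset.mp hgmem
      exact mem_Bset.mpr ⟨reroot_conn hg, reroot_at_b⟩
    · intro h _ _
      exact wtr_nonneg P hP0 b h
  calc ∑ g ∈ Bset a, β ^ (Fintype.card S) * Real.exp (φ b - φ a) * wtr P a g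
      ≤ ∑ g ∈ Bset a, wtr P b (reroot g a b) := step1
    _ = ∑ h ∈ (Bset a).image (fun g => reroot g a b), wtr P b h := step2
    _ ≤ Nw P b := step3

lemma Nw_pos (hP0 : ∀ x y, 0 ≤ P x y) (e : S)
    (he1 : ∀ x, 0 < P x e) (he2 : ∀ x, 0 < P e x) (r : S) : 0 < Nw P r := by
  set g : S → S := fun v => if v = r then r else if v = e then r else e with hgdef
  have hge : g e = r := by
    by_cases h3 : e = r <;> simp [hgdef, h3]
  have hmem : g ∈ Bset r := by
    rw [mem_Bset]
    constructor
    · intro v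
      by_cases h1 : v = r
      · exact ⟨0, h1⟩
      by_cases h2 : v = e
      · refine ⟨1, ?_⟩
        show g v = r
        rw [h2, hge]
      · refine ⟨2, ?_⟩
        show g (g v) = r
        have hgv : g v = e := by simp [hgdef, h1, h2]
        rw [hgv, hge]
    · simp [hgdef]
  have hpos : 0 < wtr P r g := by
    apply Finset.prod_pos
    intro v hv
    have hvr : v ≠ r := Finset.ne_of_mem_erase hv
    by_cases h2 : v = e
    · have : g v = r := by rw [h2, hge]
      rw [this, h2]
      exact he2 r
    · have : g v = e := by simp [hgdef, hvr, h2]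
      rw [this]
      exact he1 v
  rw [Nw]
  exact Finset.sum_pos' (fun f _ => wtr_nonneg P hP0 r f) ⟨g, hmem, hpos⟩

lemma stat_prop [Nonempty S] (hP0 : ∀ x y, 0 ≤ P x y) (e : S)
    (he1 : ∀ x, 0 < P x e) (he2 : ∀ x, 0 < P e x)
    (π ν : S → ℝ) (hπpos : ∀ x, 0 < π x) (hνpos : ∀ x, 0 < ν x)
    (hπ : ∀ y, ∑ x, π x * P x y = π y) (hν : ∀ y, ∑ x, ν x * P x y = ν y) :
    ∃ r : ℝ, ∀ x, π x = r * ν x := by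
  set Q : S → S → ℝ := fun x y => ∑ z, P x z * P z y with hQ
  have hQpos : ∀ x y, 0 < Q x y := fun x y =>
    Finset.sum_pos' (fun z _ => mul_nonneg (hP0 _ _) (hP0 _ _))
      ⟨e, Finset.mem_univ e, mul_pos (he1 x) (he2 y)⟩
  have hstatQ : ∀ (μ : S → ℝ), (∀ y, ∑ x, μ x * P x y = μ y) →
      ∀ y, ∑ x, μ x * Q x y = μ y := by
    intro μ hμ y
    calc ∑ x, μ x * Q x y = ∑ x, ∑ z, (μ x * P x z) * P z y := by
          apply Finset.sum_congr rfl
          intro x _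
          rw [hQ, Finset.mul_sum]
          apply Finset.sum_congr rfl
          intro z _
          ring
      _ = ∑ z, (∑ x, μ x * P x z) * P z y := by
          rw [Finset.sum_comm]
          apply Finset.sum_congr rfl
          intro z _
          rw [Finset.sum_mul]
      _ = ∑ z, μ z * P z y := by
          apply Finset.sum_congr rfl
          intro z _
          rw [hμ z]
      _ = μ y := hμ y
  obtain ⟨σ0, -, hmin⟩ := Finset.exists_min_image Finset.univ (fun x => π x / ν x)
    Finset.univ_nonempty
  refine ⟨π σ0 / ν σ0, ?_⟩
  have hkey : ∀ x, 0 ≤ π x - (π σ0 / ν σ0) * ν x := by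
    intro x
    have h1 : π σ0 / ν σ0 ≤ π x / ν x := hmin x (Finset.mem_univ x)
    have h2 : π σ0 / ν σ0 * ν x ≤ π x := (le_div_iff₀ (hνpos x)).mp h1
    linarith
  have hzero : ∑ x, (π x - (π σ0 / ν σ0) * ν x) * Q x σ0 = 0 := by
    have e1 := hstatQ π hπ σ0
    have e2 := hstatQ ν hν σ0
    have e3 : ∑ x, (π x - (π σ0 / ν σ0) * ν x) * Q x σ0
        = (∑ x, π x * Q x σ0) - (π σ0 / ν σ0) * ∑ x, ν x * Q x σ0 := by
      rw [Finset.mul_sum, ← Finset.sum_sub_distrib]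
      apply Finset.sum_congr rfl
      intro x _
      ring
    rw [e3, e1, e2, div_mul_cancel₀ _ (ne_of_gt (hνpos σ0)), sub_self]
  intro x
  have hterm := (Finset.sum_eq_zero_iff_of_nonneg
    (fun y _ => mul_nonneg (hkey y) (hQpos y σ0).le)).mp hzero x (Finset.mem_univ x)
  rcases mul_eq_zero.mp hterm with h2 | h2
  · linarith
  · exact absurd h2 (ne_of_gt (hQpos x σ0))

end Tree

end CSMAaux

/-- For a weighted CSMA chain `P` for `(G, W)` with stationary
distribution `π`, the stationary expected weight satisfies
`Σ_σ π_σ (Σ_{i∈σ} log W_i) ≥ (max_{ρ∈I(G)} Σ_{i∈ρ} log W_i) - 13·n·2^n·log 2`. -/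
theorem csma_stationary_weight_close_to_max
    {V : Type*} [Fintype V] [DecidableEq V] [Nonempty V]
    (G : SimpleGraph V) [DecidableRel G.Adj]
    (W : V → ℝ) (hW : ∀ i, 1 ≤ W i)
    (P : {s : Finset V // IsIndep G s} → {s : Finset V // IsIndep G s} → ℝ)
    (hP0 : ∀ σ σ', 0 ≤ P σ σ')
    (hProw : ∀ σ, ∑ σ', P σ σ' = 1)
    (hPpos : ∀ σ σ', 0 < P σ σ' ↔ IsIndep G (σ.1 ∪ σ'.1))
    (hPform : ∀ σ, ∃ c : ℝ, 0 < c ∧ ∃ p : {s : Finset V // IsIndep G s} → ℝ,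
      (∀ σ', p σ' ∈ Set.Icc (((2 : ℝ) ^ (Fintype.card V))⁻¹) 1) ∧
      ∀ σ', IsIndep G (σ.1 ∪ σ'.1) →
        P σ σ' = c * (∏ i ∈ σ.1 \ σ'.1, (W i)⁻¹) * p σ')
    (π : {s : Finset V // IsIndep G s} → ℝ)
    (hπ0 : ∀ σ, 0 < π σ) (hπsum : ∑ σ, π σ = 1)
    (hπstat : ∀ σ', ∑ σ, π σ * P σ σ' = π σ')
    :
    (∑ σ : {s : Finset V // IsIndep G s}, π σ * ∑ i ∈ σ.1, Real.log (W i))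
      ≥ (Finset.univ.sup' Finset.univ_nonempty
          (fun ρ : {s : Finset V // IsIndep G s} => ∑ i ∈ ρ.1, Real.log (W i)))
        - 13 * (Fintype.card V) * 2 ^ (Fintype.card V) * Real.log 2 := by
  classical
  set n := Fintype.card V with hn
  set w : {s : Finset V // IsIndep G s} → ℝ := fun σ => ∑ i ∈ σ.1, Real.log (W i) with hw
  set M := Finset.univ.sup' Finset.univ_nonempty w with hM
  have hWpos : ∀ i, 0 < W i := fun i => lt_of_lt_of_le one_pos (hW i)
  have hlogW : ∀ i, 0 ≤ Real.log (W i) := fun i => Real.log_nonneg (hW i)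
  have hwM : ∀ σ, w σ ≤ M := fun σ => Finset.le_sup' w (Finset.mem_univ σ)
  -- basic matrix facts
  have hPzero : ∀ x y, ¬ IsIndep G (x.1 ∪ y.1) → P x y = 0 := by
    intro x y h
    rcases eq_or_lt_of_le (hP0 x y) with he | hlt
    · exact he.symm
    · exact absurd ((hPpos x y).mp hlt) h
  have hself : ∀ x : {s : Finset V // IsIndep G s}, IsIndep G (x.1 ∪ x.1) := by
    intro x
    rw [Finset.union_self]
    exact x.2
  have hdiag : ∀ x, 0 < P x x := fun x => (hPpos x x).mpr (hself x)
  set e : {s : Finset V // IsIndep G s} :=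
    ⟨∅, fun i hi => absurd hi (Finset.notMem_empty i)⟩ with he
  have he1 : ∀ x, 0 < P x e := by
    intro x
    apply (hPpos x e).mpr
    have : x.1 ∪ e.1 = x.1 := Finset.union_empty x.1
    rw [this]
    exact x.2
  have he2 : ∀ x, 0 < P e x := by
    intro x
    apply (hPpos e x).mpr
    have : e.1 ∪ x.1 = x.1 := Finset.empty_union x.1
    rw [this]
    exact x.2
  -- extract the structure
  choose c hc p hpicc hform using hPform
  have hp1 : ∀ x y, p x y ≤ 1 := fun x y => (hpicc x y).2
  have hp0 : ∀ x y, ((2:ℝ)^n)⁻¹ ≤ p x y := fun x y => (hpicc x y).1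
  have h2npos : (0:ℝ) < 2^n := by positivity
  have hppos : ∀ x y, 0 < p x y := fun x y => lt_of_lt_of_le (by positivity) (hp0 x y)
  have hprodW : ∀ s : Finset V, ∏ i ∈ s, (W i)⁻¹ = Real.exp (-∑ i ∈ s, Real.log (W i)) := by
    intro s
    rw [Real.exp_neg, Real.exp_sum, Finset.prod_inv_distrib]
    congr 1
    exact Finset.prod_congr rfl fun i _ => (Real.exp_log (hWpos i)).symm
  have hprodW_le : ∀ s : Finset V, ∏ i ∈ s, (W i)⁻¹ ≤ 1 := by
    intro s
    apply Finset.prod_le_one (fun i _ => inv_nonneg.mpr (hWpos i).le)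
      (fun i _ => inv_le_one_of_one_le₀ (hW i))
  have hprodW_0 : ∀ s : Finset V, 0 ≤ ∏ i ∈ s, (W i)⁻¹ := by
    intro s
    apply Finset.prod_nonneg (fun i _ => inv_nonneg.mpr (hWpos i).le)
  have hPdiag : ∀ x, P x x = c x * p x x := by
    intro x
    have h := hform x x (hself x)
    rwa [Finset.sdiff_self, Finset.prod_empty, mul_one] at h
  have hPle1 : ∀ x y, P x y ≤ 1 := by
    intro x y
    calc P x y ≤ ∑ z, P x z := Finset.single_le_sum (fun z _ => hP0 x z) (Finset.mem_univ y)
      _ = 1 := hProw x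
  have hcle : ∀ x, c x ≤ 2^n := by
    intro x
    have h2 : c x * (2^n)⁻¹ ≤ c x * p x x := mul_le_mul_of_nonneg_left (hp0 x x) (hc x).le
    have h3 : P x x ≤ 1 := hPle1 x x
    rw [hPdiag x] at h3
    have h1 : c x * (2^n)⁻¹ ≤ 1 := le_trans h2 h3
    have h4 := mul_le_mul_of_nonneg_right h1 h2npos.le
    rwa [mul_assoc, inv_mul_cancel₀ (ne_of_gt h2npos), mul_one, one_mul] at h4
  set K := Fintype.card {s : Finset V // IsIndep G s} with hK
  have hK1 : 1 ≤ K := Fintype.card_pos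
  have hKle : K ≤ 2^n := by
    calc K ≤ Fintype.card (Finset V) := Fintype.card_subtype_le _
      _ = 2^n := Fintype.card_finset
  have hKler : (K:ℝ) ≤ 2^n := by
    have h := (Nat.cast_le (α := ℝ)).mpr hKle
    push_cast at h
    exact h
  have hcge : ∀ x, ((2:ℝ)^n)⁻¹ ≤ c x := by
    intro x
    have h2 : ∀ y, P x y ≤ c x := by
      intro y
      by_cases hcomp : IsIndep G (x.1 ∪ y.1)
      · rw [hform x y hcomp]
        have t1 : c x * (∏ i ∈ x.1 \ y.1, (W i)⁻¹) ≤ c x :=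
          mul_le_of_le_one_right (hc x).le (hprodW_le _)
        have t2 : c x * (∏ i ∈ x.1 \ y.1, (W i)⁻¹) * p x y
            ≤ c x * (∏ i ∈ x.1 \ y.1, (W i)⁻¹) :=
          mul_le_of_le_one_right (mul_nonneg (hc x).le (hprodW_0 _)) (hp1 x y)
        linarith
      · rw [hPzero x y hcomp]
        exact (hc x).le
    have h1 : (1:ℝ) ≤ K * c x := by
      calc (1:ℝ) = ∑ y, P x y := (hProw x).symm
        _ ≤ ∑ _y : {s : Finset V // IsIndep G s}, c x := Finset.sum_le_sum (fun y _ => h2 y)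
        _ = K * c x := by rw [Finset.sum_const, Finset.card_univ, nsmul_eq_mul]
    have h3 : (1:ℝ) ≤ 2^n * c x :=
      le_trans h1 (mul_le_mul_of_nonneg_right hKler (hc x).le)
    rw [inv_eq_one_div, div_le_iff₀ h2npos]
    linarith
  -- the reversibility-type estimate
  set β : ℝ := ((2:ℝ)^(3*n))⁻¹ with hβ
  have h23 : (2:ℝ)^(3*n) = 2^n * 2^n * 2^n := by
    rw [show 3*n = n+n+n by ring, pow_add, pow_add]
  have hβ0 : 0 < β := by rw [hβ]; positivity
  have hβ1 : β ≤ 1 := by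
    rw [hβ]
    apply inv_le_one_of_one_le₀
    calc (1:ℝ) = 1^(3*n) := (one_pow _).symm
      _ ≤ 2^(3*n) := pow_le_pow_left₀ (by norm_num) (by norm_num) _
  have hsd : ∀ (u t : Finset V), ∑ i ∈ u \ t, Real.log (W i)
      = ∑ i ∈ u, Real.log (W i) - ∑ i ∈ u ∩ t, Real.log (W i) := by
    intro u t
    rw [← Finset.sdiff_inter_self_left u t, Finset.sum_sdiff_eq_sub Finset.inter_subset_left]
  have hyp : ∀ x y, β * Real.exp (w y - w x) * P y x ≤ P x y := by
    intro x y
    by_cases hcomp : IsIndep G (x.1 ∪ y.1)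
    · have hcomp' : IsIndep G (y.1 ∪ x.1) := by rwa [Finset.union_comm]
      rw [hform x y hcomp, hform y x hcomp', hprodW, hprodW]
      have hic : ∑ i ∈ y.1 ∩ x.1, Real.log (W i) = ∑ i ∈ x.1 ∩ y.1, Real.log (W i) := by
        rw [Finset.inter_comm]
      have hheart : w y - w x + (-(∑ i ∈ y.1 \ x.1, Real.log (W i)))
          = -(∑ i ∈ x.1 \ y.1, Real.log (W i)) := by
        rw [hsd y.1 x.1, hsd x.1 y.1]
        have hwx : w x = ∑ i ∈ x.1, Real.log (W i) := rfl
        have hwy : w y = ∑ i ∈ y.1, Real.log (W i) := rfl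
        linarith [hic, hwx, hwy]
      have hE : Real.exp (w y - w x) * Real.exp (-(∑ i ∈ y.1 \ x.1, Real.log (W i)))
          = Real.exp (-(∑ i ∈ x.1 \ y.1, Real.log (W i))) := by
        rw [← Real.exp_add, hheart]
      have hnum : β * (c y * p y x) ≤ c x * p x y := by
        have l1 : c y ≤ 2^n := hcle y
        have l2 : p y x ≤ 1 := hp1 y x
        have l3 : ((2:ℝ)^n)⁻¹ ≤ c x := hcge x
        have l4 : ((2:ℝ)^n)⁻¹ ≤ p x y := hp0 x y
        have l5 : β * (c y * p y x) ≤ β * (2^n * 1) := by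
          apply mul_le_mul_of_nonneg_left _ hβ0.le
          exact mul_le_mul l1 l2 (hppos y x).le (by positivity)
        have l6 : β * ((2:ℝ)^n * 1) = (2^n)⁻¹ * (2^n)⁻¹ := by
          rw [hβ, h23]
          field_simp
        have l7 : ((2:ℝ)^n)⁻¹ * (2^n)⁻¹ ≤ c x * p x y := by
          apply mul_le_mul l3 l4 (by positivity) (le_trans (by positivity) l3)
        linarith
      calc β * Real.exp (w y - w x)
            * (c y * Real.exp (-(∑ i ∈ y.1 \ x.1, Real.log (W i))) * p y x)
          = (β * (c y * p y x))
            * (Real.exp (w y - w x) * Real.exp (-(∑ i ∈ y.1 \ x.1, Real.log (W i)))) := by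
            ring
        _ = (β * (c y * p y x)) * Real.exp (-(∑ i ∈ x.1 \ y.1, Real.log (W i))) := by
            rw [hE]
        _ ≤ (c x * p x y) * Real.exp (-(∑ i ∈ x.1 \ y.1, Real.log (W i))) :=
            mul_le_mul_of_nonneg_right hnum (Real.exp_pos _).le
        _ = c x * Real.exp (-(∑ i ∈ x.1 \ y.1, Real.log (W i))) * p x y := by ring
    · rw [hPzero x y hcomp,
        hPzero y x (fun h => hcomp (by rwa [Finset.union_comm] at h)), mul_zero]
  -- tree measure and uniqueness
  have hNpos : ∀ r, 0 < CSMAaux.Nw P r := CSMAaux.Nw_pos P hP0 e he1 he2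
  have hstatN : ∀ σ', ∑ τ, CSMAaux.Nw P τ * P τ σ' = CSMAaux.Nw P σ' :=
    CSMAaux.Nw_stationary P hProw
  obtain ⟨r, hr⟩ := CSMAaux.stat_prop P hP0 e he1 he2 π (CSMAaux.Nw P) hπ0 hNpos hπstat hstatN
  obtain ⟨ρ, -, hρ⟩ := Finset.exists_mem_eq_sup' Finset.univ_nonempty w
  have hrpos : 0 < r := by
    have h1 := hr e
    have h2 := hπ0 e
    have h3 := hNpos e
    nlinarith
  have hβK : 0 < β ^ K := pow_pos hβ0 K
  -- per-state bound
  have hbound : ∀ σ, π σ * Real.exp (M - w σ) ≤ (β ^ K)⁻¹ := by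
    intro σ
    have h1 : β ^ K * Real.exp (w ρ - w σ) * CSMAaux.Nw P σ ≤ CSMAaux.Nw P ρ :=
      CSMAaux.Nw_le P hP0 hdiag hβ0 hβ1 w hyp σ ρ
    have h2 : β ^ K * Real.exp (M - w σ) * π σ ≤ π ρ := by
      rw [hr σ, hr ρ, hM, hρ]
      calc β ^ K * Real.exp (w ρ - w σ) * (r * CSMAaux.Nw P σ)
          = r * (β ^ K * Real.exp (w ρ - w σ) * CSMAaux.Nw P σ) := by ring
        _ ≤ r * CSMAaux.Nw P ρ := mul_le_mul_of_nonneg_left h1 hrpos.le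
    have hπρ1 : π ρ ≤ 1 := by
      rw [← hπsum]
      exact Finset.single_le_sum (fun σ' _ => (hπ0 σ').le) (Finset.mem_univ ρ)
    have h3 : β ^ K * (π σ * Real.exp (M - w σ)) ≤ 1 := by
      have hre : β ^ K * (π σ * Real.exp (M - w σ))
          = β ^ K * Real.exp (M - w σ) * π σ := by ring
      rw [hre]
      exact le_trans h2 hπρ1
    have h4 := mul_le_mul_of_nonneg_left h3 (inv_nonneg.mpr hβK.le)
    rwa [← mul_assoc, inv_mul_cancel₀ (ne_of_gt hβK), one_mul, mul_one] at h4
  -- sum bound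
  set C : ℝ := K * (β ^ K)⁻¹ with hC
  have hβK1 : β ^ K ≤ 1 := pow_le_one₀ hβ0.le hβ1
  have hβKinv1 : 1 ≤ (β ^ K)⁻¹ := by
    have h := inv_anti₀ hβK hβK1
    simpa using h
  have hC1 : 1 ≤ C := by
    rw [hC]
    have : (1:ℝ) ≤ (K:ℝ) := by exact_mod_cast hK1
    nlinarith
  have hCpos : 0 < C := lt_of_lt_of_le one_pos hC1
  have hsumexp : ∑ σ, π σ * Real.exp (M - w σ) ≤ C := by
    calc ∑ σ, π σ * Real.exp (M - w σ)
        ≤ ∑ _σ : {s : Finset V // IsIndep G s}, (β ^ K)⁻¹ :=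
          Finset.sum_le_sum (fun σ _ => hbound σ)
      _ = K * (β ^ K)⁻¹ := by rw [Finset.sum_const, Finset.card_univ, nsmul_eq_mul]
      _ = C := hC.symm
  have hterm : ∀ σ, M - w σ ≤ Real.log C - 1 + Real.exp (M - w σ) / C := by
    intro σ
    have h1 := Real.add_one_le_exp (M - w σ - Real.log C)
    rw [Real.exp_sub, Real.exp_log hCpos] at h1
    linarith
  have hE : ∑ σ, π σ * (M - w σ) ≤ Real.log C := by
    calc ∑ σ, π σ * (M - w σ)
        ≤ ∑ σ, π σ * (Real.log C - 1 + Real.exp (M - w σ) / C) := by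
          apply Finset.sum_le_sum
          intro σ _
          exact mul_le_mul_of_nonneg_left (hterm σ) (hπ0 σ).le
      _ = (Real.log C - 1) * (∑ σ, π σ) + (∑ σ, π σ * Real.exp (M - w σ)) / C := by
          rw [Finset.sum_div, Finset.mul_sum, ← Finset.sum_add_distrib]
          apply Finset.sum_congr rfl
          intro σ _
          ring
      _ = Real.log C - 1 + (∑ σ, π σ * Real.exp (M - w σ)) / C := by
          rw [hπsum, mul_one]
      _ ≤ Real.log C - 1 + C / C := by
          apply add_le_add_right
          exact (div_le_div_iff_of_pos_right hCpos).mpr hsumexp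
      _ = Real.log C := by
          rw [div_self (ne_of_gt hCpos)]
          ring
  -- bound on log C
  have h2n1 : (1:ℝ) ≤ 2^n := by
    calc (1:ℝ) = 1^n := (one_pow _).symm
      _ ≤ 2^n := pow_le_pow_left₀ (by norm_num) (by norm_num) _
  have hlog2 : 0 ≤ Real.log 2 := Real.log_nonneg (by norm_num)
  have hn1 : 1 ≤ n := Fintype.card_pos
  have hlogC : Real.log C ≤ 13 * n * 2^n * Real.log 2 := by
    have hβKinv : (β ^ K)⁻¹ = ((2:ℝ)^(3*n))^K := by rw [hβ, inv_pow, inv_inv]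
    have h1 : C ≤ 2^n * ((2:ℝ)^(3*n))^K := by
      rw [hC, hβKinv]
      apply mul_le_mul_of_nonneg_right hKler (by positivity)
    calc Real.log C ≤ Real.log (2^n * ((2:ℝ)^(3*n))^K) := by
          apply Real.log_le_log hCpos h1
      _ = n * Real.log 2 + (3*n*K : ℕ) * Real.log 2 := by
          rw [Real.log_mul (by positivity) (by positivity), ← pow_mul, Real.log_pow,
            Real.log_pow]
      _ ≤ (n * 2^n : ℕ) * Real.log 2 + (3 * n * 2^n : ℕ) * Real.log 2 := by
          apply add_le_add
          · apply mul_le_mul_of_nonneg_right _ hlog2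
            have : n ≤ n * 2^n := Nat.le_mul_of_pos_right n (by positivity)
            exact_mod_cast this
          · apply mul_le_mul_of_nonneg_right _ hlog2
            have : 3*n*K ≤ 3*n*2^n := Nat.mul_le_mul_left _ hKle
            exact_mod_cast this
      _ = (((n * 2^n : ℕ) : ℝ) + ((3 * n * 2^n : ℕ) : ℝ)) * Real.log 2 := by ring
      _ ≤ 13 * n * 2^n * Real.log 2 := by
          have h13 : ((n * 2^n : ℕ) : ℝ) + ((3 * n * 2^n : ℕ) : ℝ) ≤ 13 * n * 2^n := by
            push_cast
            nlinarith [mul_nonneg (by positivity : (0:ℝ) ≤ (n:ℝ))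
              (by positivity : (0:ℝ) ≤ (2:ℝ)^n)]
          exact mul_le_mul_of_nonneg_right h13 hlog2
  -- conclude
  have hfinal : ∑ σ, π σ * (M - w σ) ≤ 13 * n * 2^n * Real.log 2 := le_trans hE hlogC
  have hsplit2 : ∑ σ, π σ * (M - w σ) = M - ∑ σ, π σ * w σ := by
    have h1 : ∑ σ, π σ * (M - w σ) = (∑ σ, π σ) * M - ∑ σ, π σ * w σ := by
      rw [Finset.sum_mul, ← Finset.sum_sub_distrib]
      apply Finset.sum_congr rfl
      intro σ _
      ring
    rw [h1, hπsum, one_mul]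
  show (∑ σ, π σ * w σ) ≥ M - 13 * n * 2^n * Real.log 2
  linarith
end

section
/- Let S be a finite set with m = |S| ≥ 1 elements, let Q be an irreducible row-stochastic matrix on S, let c ∈ (0,1], and let P be a row-stochastic matrix on S such that c·Q(x,y) ≤ P(x,y) ≤ c^{-1}·Q(x,y) for all x, y ∈ S (so in particular P and Q have the same support and P is also irreducible). Let π and π̂ be the unique stationary distributions of P and Q respectively. Then for every x ∈ S: c^{2(m−1)}·π̂_x ≤ π_x ≤ c^{-2(m−1)}·π̂_x. -/
open Finset Function

section Tree
variable {S : Type*} [DecidableEq S]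

lemma iter_reach_of_agree (f f' : S → S) (w : S)
    (hag : ∀ a, a ≠ w → f a = f' a) :
    ∀ n y, f^[n] y = w → ∃ u, f'^[u] y = w := by
  intro n
  induction n with
  | zero => intro y h; exact ⟨0, h⟩
  | succ n ih =>
    intro y h
    by_cases hy : y = w
    · exact ⟨0, hy⟩
    · rw [Function.iterate_succ_apply] at h
      obtain ⟨u, hu⟩ := ih (f y) h
      exact ⟨u + 1, by rw [Function.iterate_succ_apply, ← hag y hy]; exact hu⟩

lemma iter_agree (h g : S → S) (z x : S) (hag : ∀ a, a ≠ z → h a = g a) (N : ℕ)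
    (hne : ∀ i, i < N → g^[i] x ≠ z) : ∀ i ≤ N, h^[i] x = g^[i] x := by
  intro i hi
  induction i with
  | zero => rfl
  | succ i ih =>
    rw [Function.iterate_succ_apply', Function.iterate_succ_apply',
      ih (Nat.le_of_succ_le hi)]
    exact hag _ (hne i (Nat.lt_of_succ_le hi))

lemma iterate_mod (f : S → S) (x : S) (p : ℕ) (hfix : f^[p] x = x) (m : ℕ) :
    f^[m] x = f^[m % p] x := by
  have hmul : ∀ q, f^[p * q] x = x := by
    intro q
    induction q with
    | zero => rfl
    | succ q ih => rw [Nat.mul_succ, Function.iterate_add_apply, hfix, ih]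
  conv_lhs => rw [← Nat.mod_add_div m p, Function.iterate_add_apply, hmul]

lemma zp_eq (g : S → S) (x z : S) (hgz : g z = z) (hreach : ∀ y, ∃ k, g^[k] y = z)
    (hc : ∃ n, (Function.update g z x)^[n + 1] x = x) :
    (Function.update g z x)^[Nat.find hc] x = z := by
  set h : S → S := Function.update g z x with hh
  have hhz : h z = x := Function.update_self _ _ _
  have hag : ∀ a, a ≠ z → h a = g a := fun a ha => Function.update_of_ne ha _ _
  by_cases hzx : z = x
  · -- then h = g and x is fixed
    have hg : h = g := by
      funext a
      by_cases haz : a = z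
      · rw [haz, hhz, hgz]; exact hzx.symm
      · exact hag a haz
    have : ∀ k, h^[k] x = x := by
      intro k; rw [hg, ← hzx]; exact Function.iterate_fixed hgz k
    rw [this, hzx]
  · obtain ⟨j0, hj0⟩ := hreach x
    have hjex : ∃ j, g^[j] x = z := ⟨j0, hj0⟩
    set j := Nat.find hjex with hj
    have hgj : g^[j] x = z := Nat.find_spec hjex
    have hL3 : ∀ i ≤ j, h^[i] x = g^[i] x :=
      iter_agree h g z x hag j (fun i hi => Nat.find_min hjex hi)
    have hhj : h^[j] x = z := by rw [hL3 j le_rfl]; exact hgj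
    have hcycj : h^[j + 1] x = x := by
      rw [Function.iterate_succ_apply', hhj, hhz]
    have hnle : Nat.find hc ≤ j := Nat.find_min' hc hcycj
    set n := Nat.find hc with hn
    have hcn : h^[n + 1] x = x := Nat.find_spec hc
    have hnj : n = j := by
      rcases Nat.lt_or_ge n j with hlt | hge
      · exfalso
        by_cases hex : ∃ i, i ≤ n ∧ h^[i] x = z
        · obtain ⟨i0, hi0n, hi0⟩ := hex
          have hex' : ∃ i, h^[i] x = z := ⟨i0, hi0⟩
          set i1 := Nat.find hex' with hi1
          have hi1n : i1 ≤ n := le_trans (Nat.find_min' hex' hi0) hi0n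
          have : ∀ i ≤ i1, g^[i] x = h^[i] x :=
            iter_agree g h z x (fun a ha => (hag a ha).symm) i1
              (fun i hi => Nat.find_min hex' hi)
          have hgi1 : g^[i1] x = z := by rw [this i1 le_rfl]; exact Nat.find_spec hex'
          have : j ≤ i1 := Nat.find_min' hjex hgi1
          omega
        · push_neg at hex
          have hagree : ∀ i ≤ n + 1, g^[i] x = h^[i] x :=
            iter_agree g h z x (fun a ha => (hag a ha).symm) (n + 1)
              (fun i hi => hex i (Nat.lt_succ_iff.mp hi))
          have hper : g^[n + 1] x = x := by rw [hagree (n + 1) le_rfl]; exact hcn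
          have hmod : g^[j] x = g^[j % (n + 1)] x := iterate_mod g x (n + 1) hper j
          have hlt' : j % (n + 1) < n + 1 := Nat.mod_lt _ (Nat.succ_pos n)
          have : g^[j % (n + 1)] x ≠ z := by
            rw [hagree _ (le_of_lt hlt')]
            exact hex _ (Nat.lt_succ_iff.mp hlt')
          exact this (by rw [← hmod]; exact hgj)
      · omega
    rw [hnj]; exact hhj
end Tree

section ClaimA
variable {S : Type*} [Fintype S] [DecidableEq S]

open scoped Classical in
noncomputable def HSet (x : S) : Finset (S → S) :=
  Finset.univ.filter (fun h => ∀ y, ∃ k, h^[k] y = x)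

open scoped Classical in
noncomputable def FSet (x : S) : Finset (S → S) :=
  Finset.univ.filter (fun g => g x = x ∧ ∀ y, ∃ k, g^[k] y = x)

lemma mem_HSet {x : S} {h : S → S} : h ∈ HSet x ↔ ∀ y, ∃ k, h^[k] y = x := by
  classical simp [HSet]

lemma mem_FSet {x : S} {g : S → S} :
    g ∈ FSet x ↔ g x = x ∧ ∀ y, ∃ k, g^[k] y = x := by
  classical simp [FSet]

lemma cyc_of_mem_HSet {x : S} {h : S → S} (hh : h ∈ HSet x) :
    ∃ n, h^[n + 1] x = x := by
  obtain ⟨k, hk⟩ := mem_HSet.mp hh (h x)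
  exact ⟨k, by rw [Function.iterate_succ_apply]; exact hk⟩

variable (M : Matrix S S ℝ)

noncomputable def vstat (x : S) : ℝ :=
  ∑ g ∈ FSet x, ∏ y ∈ Finset.univ.erase x, M y (g y)

noncomputable def Wfun (h : S → S) : ℝ := ∏ y, M y (h y)

lemma claimA (x : S) :
    ∑ z, vstat M z * M z x = ∑ h ∈ HSet x, Wfun M h := by
  classical
  have expand : ∑ z, vstat M z * M z x
      = ∑ p ∈ (Finset.univ : Finset S).sigma (fun z => FSet z),
          (∏ y ∈ Finset.univ.erase p.1, M y (p.2 y)) * M p.1 x := by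
    rw [Finset.sum_sigma]
    refine Finset.sum_congr rfl fun z _ => ?_
    rw [vstat, Finset.sum_mul]
  rw [expand]
  refine Finset.sum_nbij' (fun p => Function.update p.2 p.1 x)
    (fun h => if hc : ∃ n, h^[n + 1] x = x then
        ⟨h^[Nat.find hc] x, Function.update h (h^[Nat.find hc] x) (h^[Nat.find hc] x)⟩
      else ⟨x, h⟩) ?_ ?_ ?_ ?_ ?_
  · rintro ⟨z, g⟩ hp
    rw [Finset.mem_sigma, mem_FSet] at hp
    obtain ⟨-, hgz, hreach⟩ := hp
    dsimp only at hgz hreach ⊢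
    rw [mem_HSet]
    intro y
    obtain ⟨k, hk⟩ := hreach y
    obtain ⟨u, hu⟩ := iter_reach_of_agree g (Function.update g z x) z
      (fun a ha => (Function.update_of_ne ha x g).symm) k y hk
    exact ⟨u + 1, by
      rw [Function.iterate_succ_apply', hu, Function.update_self]⟩
  · intro h hh
    have hc := cyc_of_mem_HSet hh
    simp only [dif_pos hc]
    set n := Nat.find hc with hn
    set z := h^[n] x with hz
    have hhz : h z = x := by
      have := Nat.find_spec hc
      rw [Function.iterate_succ_apply'] at this
      rw [hz]; exact this
    rw [Finset.mem_sigma, mem_FSet]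
    refine ⟨Finset.mem_univ _, Function.update_self _ _ _, fun y => ?_⟩
    obtain ⟨t, ht⟩ := mem_HSet.mp hh y
    have hyz : h^[n + t] y = z := by
      rw [Function.iterate_add_apply, ht]
    obtain ⟨u, hu⟩ := iter_reach_of_agree h (Function.update h z z) z
      (fun a ha => (Function.update_of_ne ha z h).symm) (n + t) y hyz
    exact ⟨u, hu⟩
  · rintro ⟨z, g⟩ hp
    rw [Finset.mem_sigma, mem_FSet] at hp
    obtain ⟨-, hgz, hreach⟩ := hp
    dsimp only at hgz hreach ⊢
    have hc : ∃ m, (Function.update g z x)^[m + 1] x = x := by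
      obtain ⟨j, hj⟩ := hreach x
      obtain ⟨u, hu⟩ := iter_reach_of_agree g (Function.update g z x) z
        (fun a ha => (Function.update_of_ne ha x g).symm) j x hj
      exact ⟨u, by rw [Function.iterate_succ_apply', hu, Function.update_self]⟩
    simp only [dif_pos hc]
    have hzz : (Function.update g z x)^[Nat.find hc] x = z :=
      zp_eq g x z hgz hreach hc
    rw [hzz]
    have h2 : Function.update (Function.update g z x) z z = g := by
      rw [Function.update_idem]
      have := Function.update_eq_self z g
      rw [hgz] at this
      exact this
    rw [h2]
  · intro h hh
    have hc := cyc_of_mem_HSet hh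
    simp only [dif_pos hc]
    set z := h^[Nat.find hc] x with hz
    have hhz : h z = x := by
      have := Nat.find_spec hc
      rw [Function.iterate_succ_apply'] at this
      rw [hz]; exact this
    rw [Function.update_idem, ← hhz]
    exact Function.update_eq_self _ _
  · rintro ⟨z, g⟩ hp
    rw [Finset.mem_sigma, mem_FSet] at hp
    obtain ⟨-, hgz, hreach⟩ := hp
    dsimp only at hgz hreach ⊢
    rw [Wfun, ← Finset.mul_prod_erase Finset.univ _ (Finset.mem_univ z),
      Function.update_self, mul_comm]
    congr 1
    refine Finset.prod_congr rfl fun y hy => ?_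
    rw [Function.update_of_ne (Finset.ne_of_mem_erase hy)]
end ClaimA


section Unique
variable {S : Type*} [Fintype S] [DecidableEq S]

lemma pow_entry_nonneg (M : Matrix S S ℝ) (h0 : ∀ x y, 0 ≤ M x y) :
    ∀ n x y, 0 ≤ (M ^ n) x y := by
  intro n
  induction n with
  | zero => intro x y; rw [pow_zero, Matrix.one_apply]; positivity
  | succ n ih =>
    intro x y
    rw [pow_succ, Matrix.mul_apply]
    exact Finset.sum_nonneg fun z _ => mul_nonneg (ih x z) (h0 z y)

lemma stat_pow (M : Matrix S S ℝ) (w : S → ℝ)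
    (hst : ∀ y, ∑ x, w x * M x y = w y) :
    ∀ k y, ∑ x, w x * (M ^ k) x y = w y := by
  intro k
  induction k with
  | zero =>
    intro y
    simp [Matrix.one_apply]
  | succ k ih =>
    intro y
    have : ∀ x, w x * (M ^ (k + 1)) x y = ∑ z, w x * ((M ^ k) x z * M z y) := by
      intro x
      rw [pow_succ, Matrix.mul_apply, Finset.mul_sum]
    rw [Finset.sum_congr rfl fun x _ => this x, Finset.sum_comm]
    have : ∀ z, ∑ x, w x * ((M ^ k) x z * M z y)
        = (∑ x, w x * (M ^ k) x z) * M z y := by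
      intro z
      rw [Finset.sum_mul]
      exact Finset.sum_congr rfl fun x _ => by ring
    rw [Finset.sum_congr rfl fun z _ => this z]
    rw [Finset.sum_congr rfl fun z _ => by rw [ih z]]
    exact hst y

/-- Uniqueness of the stationary distribution for an irreducible matrix. -/
lemma stationary_unique [Nonempty S] (M : Matrix S S ℝ)
    (h0 : ∀ x y, 0 ≤ M x y)
    (hirr : ∀ x y, ∃ k : ℕ, 1 ≤ k ∧ 0 < (M ^ k) x y)
    (π μ : S → ℝ) (hπ0 : ∀ x, 0 ≤ π x) (hπs : ∑ x, π x = 1)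
    (hπst : ∀ y, ∑ x, π x * M x y = π y)
    (hμ0 : ∀ x, 0 < μ x) (hμs : ∑ x, μ x = 1)
    (hμst : ∀ y, ∑ x, μ x * M x y = μ y) : π = μ := by
  classical
  obtain ⟨x1, -, hx1⟩ := Finset.exists_mem_eq_inf' (⟨Classical.arbitrary S,
    Finset.mem_univ _⟩ : (Finset.univ : Finset S).Nonempty) (fun x => π x / μ x)
  set t := Finset.univ.inf' ⟨Classical.arbitrary S, Finset.mem_univ _⟩
    (fun x => π x / μ x) with ht
  set d : S → ℝ := fun x => π x - t * μ x with hd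
  have hd0 : ∀ x, 0 ≤ d x := by
    intro x
    have : t ≤ π x / μ x := Finset.inf'_le _ (Finset.mem_univ x)
    have := (le_div_iff₀ (hμ0 x)).mp this
    simp only [hd]; linarith
  have hdst : ∀ y, ∑ x, d x * M x y = d y := by
    intro y
    simp only [hd, sub_mul]
    rw [Finset.sum_sub_distrib, hπst y]
    have : ∑ x, t * μ x * M x y = t * ∑ x, μ x * M x y := by
      rw [Finset.mul_sum]
      exact Finset.sum_congr rfl fun x _ => by ring
    rw [this, hμst y]
  have hdx1 : d x1 = 0 := by
    simp only [hd]
    rw [hx1, div_mul_cancel₀ _ (ne_of_gt (hμ0 x1)), sub_self]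
  have hdall : ∀ z, d z = 0 := by
    intro z
    obtain ⟨k, -, hk⟩ := hirr z x1
    have hsum : ∑ x, d x * (M ^ k) x x1 = 0 := by rw [stat_pow M d hdst k x1, hdx1]
    have hterm : d z * (M ^ k) z x1 ≤ 0 := by
      rw [← hsum]
      exact Finset.single_le_sum
        (fun x _ => mul_nonneg (hd0 x) (pow_entry_nonneg M h0 k x x1))
        (Finset.mem_univ z)
    have h1 : 0 ≤ d z * (M ^ k) z x1 :=
      mul_nonneg (hd0 z) (le_of_lt hk)
    have : d z * (M ^ k) z x1 = 0 := le_antisymm hterm h1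
    exact (mul_eq_zero.mp this).resolve_right (ne_of_gt hk)
  have hπμ : ∀ x, π x = t * μ x := by
    intro x
    have := hdall x
    simp only [hd] at this
    linarith
  have ht1 : t = 1 := by
    have : ∑ x, π x = t * ∑ x, μ x := by
      rw [Finset.mul_sum]
      exact Finset.sum_congr rfl fun x _ => hπμ x
    rw [hπs, hμs, mul_one] at this
    exact this.symm
  funext x
  rw [hπμ x, ht1, one_mul]
end Unique


section Pos
variable {S : Type*} [Fintype S] [DecidableEq S]

lemma vstat_pos (M : Matrix S S ℝ) (h0 : ∀ x y, 0 ≤ M x y)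
    (hirr : ∀ x y, ∃ k : ℕ, 1 ≤ k ∧ 0 < (M ^ k) x y) (x : S) : 0 < vstat M x := by
  classical
  have hreach : ∀ y, ∃ k, 0 < (M ^ k) y x := fun y => (hirr y x).imp fun k hk => hk.2
  have hd0 : ∀ y, y ≠ x → Nat.find (hreach y) ≠ 0 := by
    intro y hy h0'
    have := Nat.find_spec (hreach y)
    rw [h0', pow_zero, Matrix.one_apply_ne hy] at this
    exact lt_irrefl 0 this
  have step : ∀ y, y ≠ x →
      ∃ z, 0 < M y z ∧ Nat.find (hreach z) < Nat.find (hreach y) := by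
    intro y hy
    obtain ⟨m, hm⟩ : ∃ m, Nat.find (hreach y) = m + 1 :=
      Nat.exists_eq_succ_of_ne_zero (hd0 y hy)
    have hspec := Nat.find_spec (hreach y)
    rw [hm, pow_succ', Matrix.mul_apply] at hspec
    have hlt : ∑ z : S, (0 : ℝ) < ∑ z, M y z * (M ^ m) z x := by simpa using hspec
    obtain ⟨z, -, hz⟩ := Finset.exists_lt_of_sum_lt hlt
    rcases mul_pos_iff.mp hz with ⟨h1, h2⟩ | ⟨h1, h2⟩
    · refine ⟨z, h1, ?_⟩
      have : Nat.find (hreach z) ≤ m := Nat.find_le h2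
      omega
    · exact absurd h1 (not_lt.mpr (h0 y z))
  set g : S → S := fun y => if hy : y = x then x else Classical.choose (step y hy)
    with hg
  have hgx : g x = x := by simp [hg]
  have hgpos : ∀ y, y ≠ x → 0 < M y (g y) := by
    intro y hy
    have := (Classical.choose_spec (step y hy)).1
    simpa [hg, dif_neg hy] using this
  have hgdec : ∀ y, y ≠ x → Nat.find (hreach (g y)) < Nat.find (hreach y) := by
    intro y hy
    have h2 := (Classical.choose_spec (step y hy)).2
    have hgy : g y = Classical.choose (step y hy) := by simp [hg, dif_neg hy]
    rw [hgy]
    exact h2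
  have key : ∀ n y, Nat.find (hreach y) ≤ n → ∃ k, g^[k] y = x := by
    intro n
    induction n with
    | zero =>
      intro y hy
      by_cases hyx : y = x
      · exact ⟨0, hyx⟩
      · exact absurd (Nat.le_zero.mp hy) (hd0 y hyx)
    | succ n ih =>
      intro y hy
      by_cases hyx : y = x
      · exact ⟨0, hyx⟩
      · obtain ⟨k, hk⟩ := ih (g y) (by have := hgdec y hyx; omega)
        exact ⟨k + 1, by rw [Function.iterate_succ_apply, hk]⟩
  have hgF : g ∈ FSet x := mem_FSet.mpr ⟨hgx, fun y => key _ y le_rfl⟩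
  have hwpos : 0 < ∏ y ∈ Finset.univ.erase x, M y (g y) :=
    Finset.prod_pos fun y hy => hgpos y (Finset.ne_of_mem_erase hy)
  have hle := Finset.single_le_sum
    (f := fun g' : S → S => ∏ y ∈ Finset.univ.erase x, M y (g' y))
    (fun g' _ => Finset.prod_nonneg fun y _ => h0 _ _) hgF
  exact lt_of_lt_of_le hwpos hle
end Pos


section ClaimB
variable {S : Type*} [Fintype S] [DecidableEq S]

lemma claimB (M : Matrix S S ℝ) (hrow : ∀ x, ∑ y, M x y = 1) (x : S) :
    ∑ h ∈ HSet x, Wfun M h = vstat M x := by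
  classical
  have key : ∑ h ∈ HSet x, Wfun M h
      = ∑ p ∈ (FSet x) ×ˢ (Finset.univ : Finset S),
          M x p.2 * ∏ y ∈ Finset.univ.erase x, M y (p.1 y) := by
    refine Finset.sum_nbij' (fun h => (Function.update h x x, h x))
      (fun p => Function.update p.1 x p.2) ?_ ?_ ?_ ?_ ?_
    · intro h hh
      rw [mem_HSet] at hh
      simp only [Finset.mem_product, Finset.mem_univ, and_true]
      rw [mem_FSet]
      refine ⟨Function.update_self x x h, fun y => ?_⟩
      obtain ⟨k, hk⟩ := hh y
      exact iter_reach_of_agree h _ x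
        (fun a ha => (Function.update_of_ne ha x h).symm) k y hk
    · intro p hp
      simp only [Finset.mem_product] at hp
      rw [mem_FSet] at *
      obtain ⟨⟨hgx, hgr⟩, -⟩ := hp
      rw [mem_HSet]
      intro y
      obtain ⟨k, hk⟩ := hgr y
      exact iter_reach_of_agree p.1 _ x
        (fun a ha => (Function.update_of_ne ha p.2 p.1).symm) k y hk
    · intro h hh
      simp [Function.update_idem, Function.update_eq_self]
    · intro p hp
      simp only [Finset.mem_product] at hp
      rw [mem_FSet] at hp
      ext z
      · show Function.update (Function.update p.1 x p.2) x x z = p.1 z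
        rw [Function.update_idem]
        by_cases hz : z = x
        · rw [hz, Function.update_self]; exact hp.1.1.symm
        · exact Function.update_of_ne hz _ _
      · show Function.update p.1 x p.2 x = p.2
        exact Function.update_self _ _ _
    · intro h hh
      simp only
      rw [Wfun, ← Finset.mul_prod_erase Finset.univ _ (Finset.mem_univ x)]
      congr 1
      refine Finset.prod_congr rfl fun y hy => ?_
      rw [Function.update_of_ne (Finset.ne_of_mem_erase hy)]
  rw [key, Finset.sum_product, vstat]
  refine Finset.sum_congr rfl fun g hg => ?_
  simp only
  rw [← Finset.sum_mul, hrow, one_mul]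

lemma vstat_stationary (M : Matrix S S ℝ) (hrow : ∀ x, ∑ y, M x y = 1) (x : S) :
    ∑ z, vstat M z * M z x = vstat M x := by
  rw [claimA, claimB M hrow]
end ClaimB


/-- If `P` and `Q` are row-stochastic matrices on a finite set `S` of
`m` elements, `Q` is irreducible, and `c·Q(x,y) ≤ P(x,y) ≤ c⁻¹·Q(x,y)` for some
`c ∈ (0,1]`, then their stationary distributions `π` (of `P`) and `π̂` (of `Q`)
satisfy `c^{2(m-1)}·π̂_x ≤ π_x ≤ c^{-2(m-1)}·π̂_x` for every `x`. -/
theorem stationary_comparison_of_entrywise_comparable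
    {S : Type*} [Fintype S] [DecidableEq S] [Nonempty S]
    (Q P : Matrix S S ℝ) (c : ℝ) (hc0 : 0 < c) (hc1 : c ≤ 1)
    (hQ0 : ∀ x y, 0 ≤ Q x y) (hQrow : ∀ x, ∑ y, Q x y = 1)
    (hQirr : ∀ x y, ∃ k : ℕ, 1 ≤ k ∧ 0 < (Q ^ k) x y)
    (hP0 : ∀ x y, 0 ≤ P x y) (hProw : ∀ x, ∑ y, P x y = 1)
    (hsand : ∀ x y, c * Q x y ≤ P x y ∧ P x y ≤ c⁻¹ * Q x y)
    (π πhat : S → ℝ)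
    (hπ0 : ∀ x, 0 ≤ π x) (hπsum : ∑ x, π x = 1)
    (hπstat : ∀ y, ∑ x, π x * P x y = π y)
    (hπhat0 : ∀ x, 0 ≤ πhat x) (hπhatsum : ∑ x, πhat x = 1)
    (hπhatstat : ∀ y, ∑ x, πhat x * Q x y = πhat y) :
    ∀ x, c ^ (2 * (Fintype.card S - 1)) * πhat x ≤ π x ∧
      π x ≤ (c ^ (2 * (Fintype.card S - 1)))⁻¹ * πhat x := by
  classical
  set m1 := Fintype.card S - 1 with hm1
  -- entrywise power comparison, P irreducible
  have hpow : ∀ k x y, c ^ k * (Q ^ k) x y ≤ (P ^ k) x y := by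
    intro k
    induction k with
    | zero => intro x y; simp
    | succ k ih =>
      intro x y
      rw [pow_succ c, pow_succ Q, pow_succ P, Matrix.mul_apply, Matrix.mul_apply, Finset.mul_sum]
      refine Finset.sum_le_sum fun z _ => ?_
      have h1 := ih x z
      have h2 := (hsand z y).1
      have hq1 : 0 ≤ (Q ^ k) x z := pow_entry_nonneg Q hQ0 k x z
      have hq2 : 0 ≤ Q z y := hQ0 z y
      have hp1 : 0 ≤ (P ^ k) x z := pow_entry_nonneg P hP0 k x z
      calc c ^ k * c * ((Q ^ k) x z * Q z y)
          = (c ^ k * (Q ^ k) x z) * (c * Q z y) := by ring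
        _ ≤ (P ^ k) x z * P z y :=
            mul_le_mul h1 h2 (by positivity) hp1
  have hPirr : ∀ x y, ∃ k : ℕ, 1 ≤ k ∧ 0 < (P ^ k) x y := by
    intro a b
    obtain ⟨k, hk1, hk⟩ := hQirr a b
    exact ⟨k, hk1, lt_of_lt_of_le (by positivity) (hpow k a b)⟩
  have hvQpos : ∀ z, 0 < vstat Q z := vstat_pos Q hQ0 hQirr
  have hvPpos : ∀ z, 0 < vstat P z := vstat_pos P hP0 hPirr
  set sP := ∑ z, vstat P z with hsP
  set sQ := ∑ z, vstat Q z with hsQ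
  have hsPpos : 0 < sP :=
    Finset.sum_pos (fun z _ => hvPpos z) Finset.univ_nonempty
  have hsQpos : 0 < sQ :=
    Finset.sum_pos (fun z _ => hvQpos z) Finset.univ_nonempty
  -- identify π and πhat via uniqueness
  have hπeq : π = fun z => vstat P z / sP := by
    refine stationary_unique P hP0 hPirr π _ hπ0 hπsum hπstat
      (fun z => div_pos (hvPpos z) hsPpos) ?_ ?_
    · rw [← Finset.sum_div]; exact div_self (ne_of_gt hsPpos)
    · intro y
      have h1 : ∑ x, vstat P x / sP * P x y = (∑ x, vstat P x * P x y) / sP := by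
        rw [Finset.sum_div]; exact Finset.sum_congr rfl fun _ _ => by ring
      rw [h1, vstat_stationary P hProw y]
  have hπhateq : πhat = fun z => vstat Q z / sQ := by
    refine stationary_unique Q hQ0 hQirr πhat _ hπhat0 hπhatsum hπhatstat
      (fun z => div_pos (hvQpos z) hsQpos) ?_ ?_
    · rw [← Finset.sum_div]; exact div_self (ne_of_gt hsQpos)
    · intro y
      have h1 : ∑ x, vstat Q x / sQ * Q x y = (∑ x, vstat Q x * Q x y) / sQ := by
        rw [Finset.sum_div]; exact Finset.sum_congr rfl fun _ _ => by ring
      rw [h1, vstat_stationary Q hQrow y]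
  -- entrywise comparison of the tree vectors
  have hcard : ∀ z : S, (Finset.univ.erase z).card = m1 := by
    intro z
    rw [Finset.card_erase_of_mem (Finset.mem_univ z), Finset.card_univ]
  have hlow : ∀ z, c ^ m1 * vstat Q z ≤ vstat P z := by
    intro z
    rw [vstat, vstat, Finset.mul_sum]
    refine Finset.sum_le_sum fun g hg => ?_
    calc c ^ m1 * ∏ y ∈ Finset.univ.erase z, Q y (g y)
        = ∏ y ∈ Finset.univ.erase z, (c * Q y (g y)) := by
          rw [Finset.prod_mul_distrib, Finset.prod_const, hcard z]
      _ ≤ ∏ y ∈ Finset.univ.erase z, P y (g y) :=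
          Finset.prod_le_prod (fun y _ => by have := hQ0 y (g y); positivity)
            (fun y _ => (hsand y (g y)).1)
  have hhigh : ∀ z, vstat P z ≤ (c ^ m1)⁻¹ * vstat Q z := by
    intro z
    rw [vstat, vstat, Finset.mul_sum]
    refine Finset.sum_le_sum fun g hg => ?_
    calc ∏ y ∈ Finset.univ.erase z, P y (g y)
        ≤ ∏ y ∈ Finset.univ.erase z, (c⁻¹ * Q y (g y)) :=
          Finset.prod_le_prod (fun y _ => hP0 y (g y))
            (fun y _ => (hsand y (g y)).2)
      _ = (c ^ m1)⁻¹ * ∏ y ∈ Finset.univ.erase z, Q y (g y) := by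
          rw [Finset.prod_mul_distrib, Finset.prod_const, hcard z, inv_pow]
  have hslow : c ^ m1 * sQ ≤ sP := by
    rw [hsP, hsQ, Finset.mul_sum]
    exact Finset.sum_le_sum fun z _ => hlow z
  have hshigh : sP ≤ (c ^ m1)⁻¹ * sQ := by
    rw [hsP, hsQ, Finset.mul_sum]
    exact Finset.sum_le_sum fun z _ => hhigh z
  intro x
  have hπx : π x = vstat P x / sP := by rw [hπeq]
  have hπhatx : πhat x = vstat Q x / sQ := by rw [hπhateq]
  have ha : (0:ℝ) < c ^ m1 := by positivity
  have hsq : c ^ (2 * m1) = c ^ m1 * c ^ m1 := by rw [two_mul, pow_add]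
  constructor
  · rw [hπx, hπhatx]
    have h1 : (c ^ m1 * vstat Q x) / ((c ^ m1)⁻¹ * sQ) ≤ vstat P x / sP :=
      div_le_div₀ (le_of_lt (hvPpos x)) (hlow x) hsPpos hshigh
    have h2 : (c ^ m1 * vstat Q x) / ((c ^ m1)⁻¹ * sQ)
        = c ^ (2 * m1) * (vstat Q x / sQ) := by
      rw [hsq]
      field_simp
    rw [← h2]
    exact h1
  · rw [hπx, hπhatx]
    have h1 : vstat P x / sP ≤ ((c ^ m1)⁻¹ * vstat Q x) / (c ^ m1 * sQ) :=
      div_le_div₀ (mul_nonneg (inv_nonneg.mpr ha.le) (hvQpos x).le) (hhigh x)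
        (by positivity) hslow
    have h2 : ((c ^ m1)⁻¹ * vstat Q x) / (c ^ m1 * sQ)
        = (c ^ (2 * m1))⁻¹ * (vstat Q x / sQ) := by
      rw [hsq, div_eq_mul_inv, div_eq_mul_inv, mul_inv, mul_inv]
      ring
    rw [h2] at h1
    exact h1
end

section
/- Let P be a weighted CSMA chain for (G,W) with stationary distribution π, and let π̂ be as defined. Then for every σ ∈ I(G): 2^{-6n·2^n}·π̂_σ ≤ π_σ ≤ 2^{6n·2^n}·π̂_σ. -/
open Finset

namespace CSMAaux

open scoped Classical

variable {α : Type*} [Fintype α] [DecidableEq α]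

lemma iterate_agree {f g : α → α} {z : α} (hag : ∀ v, v ≠ z → g v = f v)
    (v : α) : ∀ k, (∀ i, i < k → f^[i] v ≠ z) → g^[k] v = f^[k] v := by
  intro k
  induction k with
  | zero => intro _; simp
  | succ k ih =>
    intro h
    have h1 : g^[k] v = f^[k] v := ih (fun i hi => h i (Nat.lt_succ_of_lt hi))
    rw [Function.iterate_succ_apply', Function.iterate_succ_apply', h1,
      hag _ (h k (Nat.lt_succ_self k))]

noncomputable def TreeSet (x : α) : Finset (α → α) :=
  univ.filter fun f => f x = x ∧ ∀ v, ∃ k, f^[k] v = x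

lemma mem_TreeSet {x : α} {f : α → α} :
    f ∈ TreeSet x ↔ f x = x ∧ ∀ v, ∃ k, f^[k] v = x := by
  simp [TreeSet]

noncomputable def wt (P : α → α → ℝ) (x : α) (f : α → α) : ℝ :=
  ∏ v ∈ univ.erase x, P v (f v)

noncomputable def mu (P : α → α → ℝ) (x : α) : ℝ := ∑ f ∈ TreeSet x, wt P x f

noncomputable def CycSet (y : α) : Finset (α → α) :=
  univ.filter fun g => ∀ v, ∃ k, 1 ≤ k ∧ g^[k] v = y

lemma mem_CycSet {y : α} {g : α → α} :
    g ∈ CycSet y ↔ ∀ v, ∃ k, 1 ≤ k ∧ g^[k] v = y := by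
  simp [CycSet]

lemma wt_update (P : α → α → ℝ) (a b : α) (f : α → α) :
    wt P a f * P a b = ∏ v, P v (Function.update f a b v) := by
  have h1 : ∏ v, P v (Function.update f a b v)
      = P a (Function.update f a b a) * ∏ v ∈ univ.erase a, P v (Function.update f a b v) :=
    (Finset.mul_prod_erase univ _ (mem_univ a)).symm
  have h2 : ∏ v ∈ univ.erase a, P v (Function.update f a b v)
      = ∏ v ∈ univ.erase a, P v (f v) := by
    apply Finset.prod_congr rfl
    intro v hv
    rw [Function.update_of_ne (Finset.ne_of_mem_erase hv)]
  rw [h1, h2, Function.update_self, wt]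
  ring

noncomputable def zOf (g : α → α) (y : α) : α :=
  if h : ∃ k, 1 ≤ k ∧ g^[k] y = y then g^[Nat.find h - 1] y else y

theorem mu_stationary (P : α → α → ℝ) (hProw : ∀ a, ∑ b, P a b = 1) (y : α) :
    ∑ z, mu P z * P z y = mu P y := by
  have key1 : ∑ z, mu P z * P z y = ∑ g ∈ CycSet y, ∏ v, P v (g v) := by
    have e1 : ∑ z, mu P z * P z y = ∑ z, ∑ f ∈ TreeSet z, wt P z f * P z y := by
      apply Finset.sum_congr rfl; intro z _; rw [mu, Finset.sum_mul]
    rw [e1, Finset.sum_sigma' univ TreeSet (fun z f => wt P z f * P z y)]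
    apply Finset.sum_nbij' (i := fun q => Function.update q.2 q.1 y)
      (j := fun g => ⟨zOf g y, Function.update g (zOf g y) (zOf g y)⟩)
    · -- i maps into CycSet
      rintro ⟨z, f⟩ hq
      rw [Finset.mem_sigma] at hq
      obtain ⟨hfz', hreach'⟩ := mem_TreeSet.mp hq.2
      have hfz : f z = z := hfz'
      have hreach : ∀ v, ∃ k, f^[k] v = z := hreach'
      set g := Function.update f z y with hg
      have hag : ∀ v, v ≠ z → g v = f v := fun v hv => Function.update_of_ne hv _ _
      rw [mem_CycSet]
      intro v
      have hQ := hreach v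
      set k₀ := Nat.find hQ with hk₀
      have h0 : g^[k₀] v = f^[k₀] v :=
        iterate_agree hag v k₀ (fun i hi => Nat.find_min hQ hi)
      refine ⟨k₀ + 1, Nat.succ_le_succ (Nat.zero_le _), ?_⟩
      rw [Function.iterate_succ_apply', h0, Nat.find_spec hQ]
      exact Function.update_self _ _ _
    · -- j maps into sigma
      intro g hg
      rw [mem_CycSet] at hg
      have h := hg y
      rw [Finset.mem_sigma]
      refine ⟨mem_univ _, ?_⟩
      have hz : zOf g y = g^[Nat.find h - 1] y := by
        rw [zOf, dif_pos h]
      set m := Nat.find h with hm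
      have hms := Nat.find_spec h
      set z := g^[m - 1] y with hzdef
      have hgz : g z = y := by
        have : g^[(m-1)+1] y = y := by
          rw [Nat.sub_add_cancel hms.1]; exact hms.2
        rw [Function.iterate_succ_apply'] at this
        exact this
      rw [mem_TreeSet]
      constructor
      · exact Function.update_self _ _ _
      · intro v
        have hreachz : ∃ k, g^[k] v = z := by
          obtain ⟨j, _, hjy⟩ := hg v
          exact ⟨(m-1) + j, by rw [Function.iterate_add_apply, hjy]⟩
        set k₀ := Nat.find hreachz with hk₀
        have hag : ∀ v, v ≠ zOf g y → Function.update g (zOf g y) (zOf g y) v = g v :=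
          fun v hv => Function.update_of_ne hv _ _
        have h0 : (Function.update g (zOf g y) (zOf g y))^[k₀] v = g^[k₀] v := by
          apply iterate_agree hag v k₀
          intro i hi
          rw [hz]
          exact Nat.find_min hreachz hi
        refine ⟨k₀, ?_⟩
        rw [h0, Nat.find_spec hreachz, hz]
    · -- left inverse
      rintro ⟨z, f⟩ hq
      rw [Finset.mem_sigma] at hq
      obtain ⟨hfz', hreach'⟩ := mem_TreeSet.mp hq.2
      have hfz : f z = z := hfz'
      have hreach : ∀ v, ∃ k, f^[k] v = z := hreach'
      set g := Function.update f z y with hgdef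
      have hag : ∀ v, v ≠ z → g v = f v := fun v hv => Function.update_of_ne hv _ _
      have hgzy : g z = y := Function.update_self _ _ _
      -- existence of cycle through y for g
      have hcy : ∃ k, 1 ≤ k ∧ g^[k] y = y := by
        have hQ := hreach y
        set k₀ := Nat.find hQ with hk₀
        have h0 : g^[k₀] y = f^[k₀] y :=
          iterate_agree hag y k₀ (fun i hi => Nat.find_min hQ hi)
        exact ⟨k₀ + 1, Nat.succ_le_succ (Nat.zero_le _), by
          rw [Function.iterate_succ_apply', h0, Nat.find_spec hQ, hgzy]⟩
      have hzeq : zOf g y = z := by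
        rw [zOf, dif_pos hcy]
        set m := Nat.find hcy with hm
        have hms := Nat.find_spec hcy
        have hQ := hreach y
        set ky := Nat.find hQ with hky
        have hgky : g^[ky] y = z := by
          rw [iterate_agree hag y ky (fun i hi => Nat.find_min hQ hi)]
          exact Nat.find_spec hQ
        have hle : m ≤ ky + 1 := by
          apply Nat.find_min' hcy
          refine ⟨Nat.succ_le_succ (Nat.zero_le _), ?_⟩
          rw [Function.iterate_succ_apply', hgky, hgzy]
        have hgt : ¬ m ≤ ky := by
          intro hmk
          have hfm : f^[m] y = y := by
            have : g^[m] y = f^[m] y := by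
              apply iterate_agree hag y m
              intro i hi
              exact Nat.find_min hQ (lt_of_lt_of_le hi hmk)
            rw [← this]; exact hms.2
          -- f has a cycle through y; combined with f z = z and reachability, y = z
          have hfq : ∀ t, f^[t * m] y = y := by
            intro t
            induction t with
            | zero => simp
            | succ t ih =>
              rw [Nat.succ_mul, Function.iterate_add_apply, hfm, ih]
          have hyz : y = z := by
            have h1 : f^[ky * m] y = y := hfq ky
            have h2 : ky * m = (ky * m - ky) + ky := by
              have : ky ≤ ky * m := Nat.le_mul_of_pos_right ky (lt_of_lt_of_le one_pos hms.1)
              omega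
            have hspec : f^[ky] y = z := Nat.find_spec hQ
            have h3 : f^[ky * m] y = f^[ky * m - ky] (f^[ky] y) := by
              conv_lhs => rw [h2]
              rw [Function.iterate_add_apply]
            rw [h1, hspec] at h3
            rw [h3, Function.iterate_fixed hfz]
          have hky0 : ky = 0 := by
            have : f^[0] y = z := by simpa using hyz
            exact Nat.eq_zero_of_le_zero (Nat.find_min' hQ this)
          omega
        have hmeq : m = ky + 1 := by omega
        rw [hmeq]
        simpa using hgky
      rw [hzeq]
      have : Function.update g z z = f := by
        rw [hgdef, Function.update_idem, Function.update_eq_self_iff]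
        exact hfz.symm
      simp only [this]
    · -- right inverse
      intro g hg
      rw [mem_CycSet] at hg
      have h := hg y
      have hz : zOf g y = g^[Nat.find h - 1] y := by rw [zOf, dif_pos h]
      have hgz : g (zOf g y) = y := by
        rw [hz]
        have hms := Nat.find_spec h
        have : g^[(Nat.find h - 1)+1] y = y := by
          rw [Nat.sub_add_cancel hms.1]; exact hms.2
        rw [Function.iterate_succ_apply'] at this
        exact this
      funext v
      show Function.update (Function.update g (zOf g y) (zOf g y)) (zOf g y) y v = g v
      rcases eq_or_ne v (zOf g y) with rfl | hv
      · rw [Function.update_self, hgz]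
      · rw [Function.update_of_ne hv, Function.update_of_ne hv]
    · -- terms match
      rintro ⟨z, f⟩ _
      exact wt_update P z y f
  have key2 : mu P y = ∑ g ∈ CycSet y, ∏ v, P v (g v) := by
    have e1 : mu P y = ∑ q ∈ (TreeSet y) ×ˢ (univ : Finset α), wt P y q.1 * P y q.2 := by
      rw [Finset.sum_product]
      rw [mu]
      apply Finset.sum_congr rfl
      intro f _
      dsimp only
      rw [← Finset.mul_sum, hProw y, mul_one]
    rw [e1]
    apply Finset.sum_nbij' (i := fun q => Function.update q.1 y q.2)
      (j := fun g => (Function.update g y y, g y))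
    · -- into CycSet
      rintro ⟨f, w⟩ hq
      rw [Finset.mem_product] at hq
      obtain ⟨hfy', hreach'⟩ := mem_TreeSet.mp hq.1
      have hfy : f y = y := hfy'
      have hreach : ∀ v, ∃ k, f^[k] v = y := hreach'
      set g := Function.update f y w with hgdef
      have hag : ∀ v, v ≠ y → g v = f v := fun v hv => Function.update_of_ne hv _ _
      have hgy : g y = w := Function.update_self _ _ _
      rw [mem_CycSet]
      intro v
      by_cases hvy : v = y
      · subst hvy
        have hQ := hreach w
        set kw := Nat.find hQ with hkw
        have h0 : g^[kw] w = f^[kw] w :=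
          iterate_agree hag w kw (fun i hi => Nat.find_min hQ hi)
        refine ⟨kw + 1, Nat.succ_le_succ (Nat.zero_le _), ?_⟩
        rw [Function.iterate_succ_apply, hgy, h0, Nat.find_spec hQ]
      · have hQ := hreach v
        set kv := Nat.find hQ with hkv
        have h0 : g^[kv] v = f^[kv] v :=
          iterate_agree hag v kv (fun i hi => Nat.find_min hQ hi)
        have hkv1 : 1 ≤ kv := by
          rcases Nat.eq_zero_or_pos kv with h | h
          · exfalso
            apply hvy
            have := Nat.find_spec hQ
            rw [← hkv, h] at this
            simpa using this
          · exact h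
        exact ⟨kv, hkv1, by rw [h0]; exact Nat.find_spec hQ⟩
    · -- into product
      intro g hg
      rw [mem_CycSet] at hg
      rw [Finset.mem_product]
      refine ⟨?_, mem_univ _⟩
      rw [mem_TreeSet]
      have hag : ∀ v, v ≠ y → Function.update g y y v = g v :=
        fun v hv => Function.update_of_ne hv _ _
      refine ⟨Function.update_self _ _ _, ?_⟩
      intro v
      have hreachy : ∃ k, g^[k] v = y := by
        obtain ⟨k, _, hk⟩ := hg v; exact ⟨k, hk⟩
      set kv := Nat.find hreachy with hkv
      refine ⟨kv, ?_⟩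
      rw [iterate_agree hag v kv (fun i hi => Nat.find_min hreachy hi)]
      exact Nat.find_spec hreachy
    · -- left inverse
      rintro ⟨f, w⟩ hq
      rw [Finset.mem_product] at hq
      obtain ⟨hfy', _⟩ := mem_TreeSet.mp hq.1
      have hfy : f y = y := hfy'
      have h1 : Function.update (Function.update f y w) y y = f := by
        rw [Function.update_idem, Function.update_eq_self_iff]
        exact hfy.symm
      have h2 : (Function.update f y w) y = w := Function.update_self _ _ _
      simp [h1, h2]
    · -- right inverse
      intro g _
      show Function.update (Function.update g y y) y (g y) = g
      rw [Function.update_idem]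
      exact Function.update_eq_self _ _
    · rintro ⟨f, w⟩ _
      exact wt_update P y w f
  rw [key1, key2]


/-- Path reversal: turn a spanning tree rooted at `x` into one rooted at `y`
by reversing the tree path from `y` to `x`. -/
noncomputable def rv (f : α → α) (x y : α) : α → α :=
  if hx : ∃ k, f^[k] y = x then
    fun v =>
      if hv : ∃ j, j < Nat.find hx ∧ f^[j+1] y = v then f^[Nat.find hv] y
      else if v = y then y else f v
  else f

lemma telescope (P : α → α → ℝ) (hP0 : ∀ a b, 0 ≤ P a b) (u : α → ℝ) (hu : ∀ a, 0 < u a)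
    (β : ℝ) (hβ : 1 ≤ β) (hrev : ∀ a b, u a * P a b ≤ β * (u b * P b a)) (q : ℕ → α) :
    ∀ M, u (q 0) * ∏ j ∈ range M, P (q j) (q (j+1))
      ≤ β ^ M * (u (q M) * ∏ j ∈ range M, P (q (j+1)) (q j)) := by
  intro M
  induction M with
  | zero => simp
  | succ M ih =>
    have hprodrev : 0 ≤ ∏ j ∈ range M, P (q (j+1)) (q j) :=
      Finset.prod_nonneg (fun j _ => hP0 _ _)
    have hβM : (0:ℝ) ≤ β ^ M := pow_nonneg (le_trans zero_le_one hβ) M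
    calc u (q 0) * ∏ j ∈ range (M+1), P (q j) (q (j+1))
        = (u (q 0) * ∏ j ∈ range M, P (q j) (q (j+1))) * P (q M) (q (M+1)) := by
          rw [Finset.prod_range_succ]; ring
      _ ≤ (β ^ M * (u (q M) * ∏ j ∈ range M, P (q (j+1)) (q j))) * P (q M) (q (M+1)) :=
          mul_le_mul_of_nonneg_right ih (hP0 _ _)
      _ = (β ^ M * ∏ j ∈ range M, P (q (j+1)) (q j)) * (u (q M) * P (q M) (q (M+1))) := by ring
      _ ≤ (β ^ M * ∏ j ∈ range M, P (q (j+1)) (q j)) * (β * (u (q (M+1)) * P (q (M+1)) (q M))) :=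
          mul_le_mul_of_nonneg_left (hrev _ _) (mul_nonneg hβM hprodrev)
      _ = β ^ (M+1) * (u (q (M+1)) * ∏ j ∈ range (M+1), P (q (j+1)) (q j)) := by
          rw [Finset.prod_range_succ]; ring

theorem rv_spec (P : α → α → ℝ) (hP0 : ∀ a b, 0 ≤ P a b) (u : α → ℝ) (hu : ∀ a, 0 < u a)
    (β : ℝ) (hβ : 1 ≤ β) (hrev : ∀ a b, u a * P a b ≤ β * (u b * P b a))
    {x y : α} {f : α → α} (hf : f ∈ TreeSet x) :
    rv f x y ∈ TreeSet y ∧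
      u y * wt P x f ≤ β ^ (Fintype.card α) * (u x * wt P y (rv f x y)) := by
  obtain ⟨hfx', hreach'⟩ := mem_TreeSet.mp hf
  have hfx : f x = x := hfx'
  have hreach : ∀ v, ∃ k, f^[k] v = x := hreach'
  have hx : ∃ k, f^[k] y = x := hreach y
  set m := Nat.find hx with hm
  set p : ℕ → α := fun j => f^[j] y with hp
  have hpm : p m = x := Nat.find_spec hx
  have hp0 : p 0 = y := rfl
  have hpsucc : ∀ j, p (j+1) = f (p j) := fun j => Function.iterate_succ_apply' f j y
  have hdist : ∀ i, i ≤ m → ∀ j, j ≤ m → p i = p j → i = j := by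
    have key : ∀ i j, i ≤ j → j ≤ m → p i = p j → i = j := by
      intro i j hij hjm he
      have e1 : f^[m - j] (p j) = x := by
        show f^[m-j] (f^[j] y) = x
        rw [← Function.iterate_add_apply, show m - j + j = m from by omega]
        exact hpm
      have e2 : f^[(m - j) + i] y = x := by
        rw [Function.iterate_add_apply]
        show f^[m-j] (p i) = x
        rw [he]; exact e1
      have := Nat.find_min' hx e2
      omega
    intro i hi j hj he
    rcases le_total i j with h | h
    · exact key i j h hj he
    · exact (key j i h hi he.symm).symm
  set g := rv f x y with hgdef
  have hglam : g = fun v =>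
      if hv : ∃ j, j < m ∧ f^[j+1] y = v then f^[Nat.find hv] y
      else if v = y then y else f v := by
    rw [hgdef, rv, dif_pos hx]
  have R0 : ∀ j, j < m → g (p (j+1)) = p j := by
    intro j hj
    have hcond : ∃ j', j' < m ∧ f^[j'+1] y = p (j+1) := ⟨j, hj, rfl⟩
    rw [hglam]
    dsimp only
    rw [dif_pos hcond]
    obtain ⟨hlt, heq⟩ := Nat.find_spec hcond
    have : Nat.find hcond + 1 = j + 1 := hdist _ (by omega) _ (by omega) heq
    show p (Nat.find hcond) = p j
    rw [show Nat.find hcond = j from by omega]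
  have R1 : g y = y := by
    rw [hglam]
    dsimp only
    have hnc : ¬ ∃ j, j < m ∧ f^[j+1] y = y := by
      rintro ⟨j, hj, he⟩
      have : j + 1 = 0 := hdist (j+1) (by omega) 0 (by omega) he
      omega
    rw [dif_neg hnc, if_pos rfl]
  have R2 : ∀ v, (∀ j, j ≤ m → p j ≠ v) → g v = f v := by
    intro v hv
    rw [hglam]
    dsimp only
    have hnc : ¬ ∃ j, j < m ∧ f^[j+1] y = v := by
      rintro ⟨j, hj, he⟩
      exact hv (j+1) (by omega) he
    rw [dif_neg hnc, if_neg (fun h : v = y => hv 0 (by omega) (h ▸ hp0))]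
  -- membership
  have pathReach : ∀ j, j ≤ m → ∃ k, g^[k] (p j) = y := by
    intro j
    induction j with
    | zero => intro _; exact ⟨0, hp0⟩
    | succ j ih =>
      intro hj
      obtain ⟨k, hk⟩ := ih (by omega)
      exact ⟨k+1, by rw [Function.iterate_succ_apply, R0 j (by omega), hk]⟩
  have hmem : g ∈ TreeSet y := by
    rw [mem_TreeSet]
    refine ⟨R1, ?_⟩
    have main : ∀ t, ∀ v, Nat.find (hreach v) = t → ∃ k, g^[k] v = y := by
      intro t
      induction t using Nat.strong_induction_on with
      | _ t ih =>
        intro v hv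
        by_cases hpath : ∃ j, j ≤ m ∧ p j = v
        · obtain ⟨j, hj, he⟩ := hpath
          exact he ▸ pathReach j hj
        · push_neg at hpath
          have hvx : v ≠ x := fun h => hpath m le_rfl (h ▸ hpm)
          have hfspec : f^[t] v = x := by rw [← hv]; exact Nat.find_spec (hreach v)
          have ht1 : 1 ≤ t := by
            rcases Nat.eq_zero_or_pos t with h0 | h
            · exfalso; apply hvx; rw [h0] at hfspec; exact hfspec.symm ▸ rfl
            · exact h
          have hgv : g v = f v := R2 v hpath
          have hd : Nat.find (hreach (f v)) < t := by
            have h2 : f^[t-1] (f v) = x := by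
              have h3 : f^[(t-1)+1] v = x := by
                rw [show t - 1 + 1 = t from by omega]; exact hfspec
              rw [Function.iterate_succ_apply] at h3
              exact h3
            have := Nat.find_min' (hreach (f v)) h2
            omega
          obtain ⟨k, hk⟩ := ih _ hd (f v) rfl
          exact ⟨k+1, by rw [Function.iterate_succ_apply, hgv, hk]⟩
    exact fun v => main _ v rfl
  refine ⟨hmem, ?_⟩
  -- weight inequality
  set PathF : Finset α := (range (m+1)).image p with hPathF
  have hxP : x ∈ PathF := by
    rw [hPathF]; exact Finset.mem_image.mpr ⟨m, Finset.mem_range.mpr (by omega), hpm⟩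
  have hyP : y ∈ PathF := by
    rw [hPathF]; exact Finset.mem_image.mpr ⟨0, Finset.mem_range.mpr (by omega), hp0⟩
  set D : Finset α := univ \ PathF with hD
  have hsplitx : univ.erase x = ((range m).image p) ∪ D := by
    ext v
    constructor
    · intro hv
      have hvx : v ≠ x := Finset.ne_of_mem_erase hv
      by_cases hpv : v ∈ PathF
      · obtain ⟨j, hj, he⟩ := Finset.mem_image.mp hpv
        rw [Finset.mem_range] at hj
        have hjm : j ≠ m := fun h => hvx (by rw [← he, h, hpm])
        exact Finset.mem_union_left _
          (Finset.mem_image.mpr ⟨j, Finset.mem_range.mpr (by omega), he⟩)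
      · exact Finset.mem_union_right _ (Finset.mem_sdiff.mpr ⟨mem_univ v, hpv⟩)
    · intro hv
      rcases Finset.mem_union.mp hv with h | h
      · obtain ⟨j, hj, he⟩ := Finset.mem_image.mp h
        rw [Finset.mem_range] at hj
        apply Finset.mem_erase.mpr
        refine ⟨?_, mem_univ v⟩
        intro hveq
        rw [hveq] at he
        have := hdist j (by omega) m le_rfl (by rw [he, hpm])
        omega
      · apply Finset.mem_erase.mpr
        rw [Finset.mem_sdiff] at h
        refine ⟨?_, mem_univ v⟩
        intro hveq
        exact h.2 (by rw [hveq]; exact hxP)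
  have hsplity : univ.erase y = ((range m).image (fun j => p (j+1))) ∪ D := by
    ext v
    constructor
    · intro hv
      have hvy : v ≠ y := Finset.ne_of_mem_erase hv
      by_cases hpv : v ∈ PathF
      · obtain ⟨j, hj, he⟩ := Finset.mem_image.mp hpv
        rw [Finset.mem_range] at hj
        have hj0 : j ≠ 0 := fun h => hvy (by rw [← he, h, hp0])
        refine Finset.mem_union_left _
          (Finset.mem_image.mpr ⟨j - 1, Finset.mem_range.mpr (by omega), ?_⟩)
        rw [show j - 1 + 1 = j from by omega]
        exact he
      · exact Finset.mem_union_right _ (Finset.mem_sdiff.mpr ⟨mem_univ v, hpv⟩)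
    · intro hv
      rcases Finset.mem_union.mp hv with h | h
      · obtain ⟨j, hj, he⟩ := Finset.mem_image.mp h
        rw [Finset.mem_range] at hj
        apply Finset.mem_erase.mpr
        refine ⟨?_, mem_univ v⟩
        intro hveq
        rw [hveq] at he
        have := hdist (j+1) (by omega) 0 (by omega) (by rw [he, hp0])
        omega
      · apply Finset.mem_erase.mpr
        rw [Finset.mem_sdiff] at h
        refine ⟨?_, mem_univ v⟩
        intro hveq
        exact h.2 (by rw [hveq]; exact hyP)
  have hdisjx : Disjoint ((range m).image p) D := by
    apply Finset.disjoint_left.mpr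
    intro v hv hvD
    rw [hD, Finset.mem_sdiff] at hvD
    apply hvD.2
    obtain ⟨j, hj, he⟩ := Finset.mem_image.mp hv
    rw [Finset.mem_range] at hj
    exact Finset.mem_image.mpr ⟨j, Finset.mem_range.mpr (by omega), he⟩
  have hdisjy : Disjoint ((range m).image (fun j => p (j+1))) D := by
    apply Finset.disjoint_left.mpr
    intro v hv hvD
    rw [hD, Finset.mem_sdiff] at hvD
    apply hvD.2
    obtain ⟨j, hj, he⟩ := Finset.mem_image.mp hv
    rw [Finset.mem_range] at hj
    exact Finset.mem_image.mpr ⟨j+1, Finset.mem_range.mpr (by omega), he⟩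
  have prodDfg : ∏ v ∈ D, P v (g v) = ∏ v ∈ D, P v (f v) := by
    apply Finset.prod_congr rfl
    intro v hv
    rw [hD, Finset.mem_sdiff] at hv
    have : ∀ j, j ≤ m → p j ≠ v := by
      intro j hj he
      exact hv.2 (Finset.mem_image.mpr ⟨j, Finset.mem_range.mpr (by omega), he⟩)
    rw [R2 v this]
  have prodA : ∏ v ∈ (range m).image p, P v (f v) = ∏ j ∈ range m, P (p j) (p (j+1)) := by
    rw [Finset.prod_image]
    · apply Finset.prod_congr rfl
      intro j hj
      rw [hpsucc j]
    · intro i hi j hj he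
      exact hdist i (by rw [Finset.mem_coe, Finset.mem_range] at hi; omega) j
        (by rw [Finset.mem_coe, Finset.mem_range] at hj; omega) he
  have prodA' : ∏ v ∈ (range m).image (fun j => p (j+1)), P v (g v)
      = ∏ j ∈ range m, P (p (j+1)) (p j) := by
    rw [Finset.prod_image]
    · apply Finset.prod_congr rfl
      intro j hj
      rw [Finset.mem_range] at hj
      rw [R0 j hj]
    · intro i hi j hj he
      rw [Finset.mem_coe, Finset.mem_range] at hi hj
      have := hdist (i+1) (by omega) (j+1) (by omega) he
      omega
  have wtf : wt P x f = (∏ j ∈ range m, P (p j) (p (j+1))) * ∏ v ∈ D, P v (f v) := by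
    rw [wt, hsplitx, Finset.prod_union hdisjx, prodA]
  have wtg : wt P y g = (∏ j ∈ range m, P (p (j+1)) (p j)) * ∏ v ∈ D, P v (f v) := by
    rw [wt, hsplity, Finset.prod_union hdisjy, prodA', prodDfg]
  have htel := telescope P hP0 u hu β hβ hrev p m
  have hRD : (0:ℝ) ≤ ∏ v ∈ D, P v (f v) := Finset.prod_nonneg (fun v _ => hP0 _ _)
  have hmlecard : m ≤ Fintype.card α := by
    have hinj : Set.InjOn p (range (m+1)) := by
      intro i hi j hj he
      rw [Finset.coe_range, Set.mem_Iio] at hi hj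
      exact hdist i (by omega) j (by omega) he
    have := Finset.card_image_of_injOn hinj
    have hle := Finset.card_le_univ ((range (m+1)).image p)
    rw [this, Finset.card_range] at hle
    omega
  calc u y * wt P x f
      = (u (p 0) * ∏ j ∈ range m, P (p j) (p (j+1))) * ∏ v ∈ D, P v (f v) := by
        rw [wtf, hp0]; ring
    _ ≤ (β ^ m * (u (p m) * ∏ j ∈ range m, P (p (j+1)) (p j))) * ∏ v ∈ D, P v (f v) :=
        mul_le_mul_of_nonneg_right htel hRD
    _ = β ^ m * (u x * wt P y g) := by rw [wtg, hpm]; ring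
    _ ≤ β ^ (Fintype.card α) * (u x * wt P y g) := by
        apply mul_le_mul_of_nonneg_right (pow_le_pow_right₀ hβ hmlecard)
        exact mul_nonneg (le_of_lt (hu x)) (Finset.prod_nonneg (fun v _ => hP0 _ _))

lemma mu_pos (P : α → α → ℝ) (hP0 : ∀ a b, 0 ≤ P a b) (o : α)
    (hpo : ∀ z, 0 < P z o) (hop : ∀ z, 0 < P o z) (x : α) : 0 < mu P x := by
  set f0 : α → α := fun v => if v = x then x else if v = o then x else o with hf0
  have hf0x : f0 x = x := by rw [hf0]; simp
  have hf0o : f0 o = x := by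
    rw [hf0]
    by_cases h : o = x <;> simp [h]
  have hmem : f0 ∈ TreeSet x := by
    rw [mem_TreeSet]
    refine ⟨hf0x, ?_⟩
    intro v
    by_cases hvx : v = x
    · exact ⟨0, by simp [hvx]⟩
    by_cases hvo : v = o
    · exact ⟨1, by simp [hvo, hf0o]⟩
    · refine ⟨2, ?_⟩
      have h1 : f0 v = o := by rw [hf0]; simp [hvx, hvo]
      show f0 (f0 v) = x
      rw [h1, hf0o]
  have hwt : 0 < wt P x f0 := by
    apply Finset.prod_pos
    intro v hv
    by_cases hvo : v = o
    · rw [hvo, hf0o]; exact hop x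
    · have hvx : v ≠ x := Finset.ne_of_mem_erase hv
      have : f0 v = o := by rw [hf0]; simp [hvx, hvo]
      rw [this]; exact hpo v
  apply Finset.sum_pos'
  · intro f _
    exact Finset.prod_nonneg (fun v _ => hP0 _ _)
  · exact ⟨f0, hmem, hwt⟩

lemma mu_nonneg (P : α → α → ℝ) (hP0 : ∀ a b, 0 ≤ P a b) (x : α) : 0 ≤ mu P x :=
  Finset.sum_nonneg (fun f _ => Finset.prod_nonneg (fun v _ => hP0 _ _))

lemma mu_comp (P : α → α → ℝ) (hP0 : ∀ a b, 0 ≤ P a b) (u : α → ℝ) (hu : ∀ a, 0 < u a)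
    (β : ℝ) (hβ : 1 ≤ β) (hrev : ∀ a b, u a * P a b ≤ β * (u b * P b a)) (x y : α) :
    u y * mu P x ≤ β ^ (Fintype.card α) * (Fintype.card α : ℝ) ^ (Fintype.card α)
      * (u x * mu P y) := by
  have step1 : u y * mu P x ≤ β ^ (Fintype.card α) *
      (u x * ∑ f ∈ TreeSet x, wt P y (rv f x y)) := by
    have hrhs : β ^ (Fintype.card α) * (u x * ∑ f ∈ TreeSet x, wt P y (rv f x y))
        = ∑ f ∈ TreeSet x, β ^ (Fintype.card α) * (u x * wt P y (rv f x y)) := by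
      rw [Finset.mul_sum, Finset.mul_sum]
    rw [mu, Finset.mul_sum, hrhs]
    apply Finset.sum_le_sum
    intro f hf
    exact (rv_spec P hP0 u hu β hβ hrev (y := y) hf).2
  have step2 : ∑ f ∈ TreeSet x, wt P y (rv f x y) ≤ (Fintype.card α : ℝ) ^ (Fintype.card α) * mu P y := by
    have each : ∀ f ∈ TreeSet x, wt P y (rv f x y) ≤ mu P y := by
      intro f hf
      have hmem := (rv_spec P hP0 u hu β hβ hrev (y := y) hf).1
      exact Finset.single_le_sum (f := fun g => wt P y g)
        (fun g _ => Finset.prod_nonneg (fun v _ => hP0 _ _)) hmem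
    calc ∑ f ∈ TreeSet x, wt P y (rv f x y) ≤ ∑ _f ∈ TreeSet x, mu P y :=
          Finset.sum_le_sum each
      _ = (TreeSet x).card * mu P y := by rw [Finset.sum_const, nsmul_eq_mul]
      _ ≤ (Fintype.card α : ℝ) ^ (Fintype.card α) * mu P y := by
          apply mul_le_mul_of_nonneg_right _ (mu_nonneg P hP0 y)
          have h1 : (TreeSet x).card ≤ Fintype.card (α → α) := Finset.card_le_univ _
          have h2 : Fintype.card (α → α) = (Fintype.card α) ^ (Fintype.card α) :=
            Fintype.card_fun
          have : ((TreeSet x).card : ℝ) ≤ ((Fintype.card α ^ Fintype.card α : ℕ) : ℝ) := by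
            exact_mod_cast h2 ▸ h1
          rw [Nat.cast_pow] at this
          exact this
  calc u y * mu P x ≤ β ^ (Fintype.card α) * (u x * ∑ f ∈ TreeSet x, wt P y (rv f x y)) := step1
    _ ≤ β ^ (Fintype.card α) * (u x * ((Fintype.card α : ℝ) ^ (Fintype.card α) * mu P y)) := by
        apply mul_le_mul_of_nonneg_left _ (pow_nonneg (le_trans zero_le_one hβ) _)
        exact mul_le_mul_of_nonneg_left step2 (le_of_lt (hu x))
    _ = β ^ (Fintype.card α) * (Fintype.card α : ℝ) ^ (Fintype.card α) * (u x * mu P y) := by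
        ring

lemma stationary_unique (P : α → α → ℝ) (hP0 : ∀ a b, 0 ≤ P a b) (o : α)
    (hpo : ∀ z, 0 < P z o) (hop : ∀ z, 0 < P o z)
    (π μ : α → ℝ) (hπ0 : ∀ a, 0 < π a) (hμ0 : ∀ a, 0 < μ a)
    (hπs : ∀ a, ∑ z, π z * P z a = π a) (hμs : ∀ a, ∑ z, μ z * P z a = μ a)
    (hπ1 : ∑ a, π a = 1) :
    ∀ a, π a * (∑ z, μ z) = μ a := by
  obtain ⟨x₀, -, hx₀⟩ := Finset.exists_min_image univ (fun a => π a / μ a) ⟨o, mem_univ o⟩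
  set t := π x₀ / μ x₀ with ht
  have ht0 : 0 < t := div_pos (hπ0 x₀) (hμ0 x₀)
  set ν : α → ℝ := fun a => π a - t * μ a with hν
  have hν0 : ∀ a, 0 ≤ ν a := by
    intro a
    have := hx₀ a (mem_univ a)
    rw [div_le_div_iff₀ (hμ0 x₀) (hμ0 a)] at this
    have h2 : t * μ a ≤ π a := by
      rw [ht, div_mul_eq_mul_div, div_le_iff₀ (hμ0 x₀)]
      linarith [this]
    simp only [hν]
    linarith
  have hνs : ∀ a, ∑ z, ν z * P z a = ν a := by
    intro a
    simp only [hν, sub_mul]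
    rw [Finset.sum_sub_distrib, hπs a]
    have : ∑ z, t * μ z * P z a = t * μ a := by
      rw [show (fun z => t * μ z * P z a) = (fun z => t * (μ z * P z a)) from by
        funext z; ring]
      rw [← Finset.mul_sum, hμs a]
    rw [this]
  have hνx₀ : ν x₀ = 0 := by
    simp only [hν, ht]
    rw [div_mul_cancel₀ _ (ne_of_gt (hμ0 x₀))]
    ring
  have hνo : ν o = 0 := by
    have h1 : ∑ z, ν z * P z x₀ = 0 := by rw [hνs x₀, hνx₀]
    have h2 : ∀ z ∈ univ, 0 ≤ ν z * P z x₀ :=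
      fun z _ => mul_nonneg (hν0 z) (hP0 z x₀)
    have h3 := (Finset.sum_eq_zero_iff_of_nonneg h2).mp h1 o (mem_univ o)
    rcases mul_eq_zero.mp h3 with h | h
    · exact h
    · exact absurd h (ne_of_gt (hop x₀))
  have hνall : ∀ z, ν z = 0 := by
    intro z
    have h1 : ∑ w, ν w * P w o = 0 := by rw [hνs o, hνo]
    have h2 : ∀ w ∈ univ, 0 ≤ ν w * P w o :=
      fun w _ => mul_nonneg (hν0 w) (hP0 w o)
    have h3 := (Finset.sum_eq_zero_iff_of_nonneg h2).mp h1 z (mem_univ z)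
    rcases mul_eq_zero.mp h3 with h | h
    · exact h
    · exact absurd h (ne_of_gt (hpo z))
  have hπt : ∀ a, π a = t * μ a := by
    intro a
    have := hνall a
    simp only [hν] at this
    linarith
  have hsum : (1:ℝ) = t * ∑ z, μ z := by
    rw [← hπ1]
    rw [Finset.mul_sum]
    exact Finset.sum_congr rfl (fun a _ => hπt a)
  intro a
  rw [hπt a]
  have he : t * μ a * (∑ z, μ z) = (t * ∑ z, μ z) * μ a := by ring
  rw [he, ← hsum, one_mul]


end CSMAaux

open Finset

/-- For a weighted CSMA chain `P` for `(G, W)` with stationary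
distribution `π`, and `π̂_σ = (∏_{i∈σ} W_i)/Z`, one has
`2^{-6n·2^n}·π̂_σ ≤ π_σ ≤ 2^{6n·2^n}·π̂_σ` for every independent set `σ`. -/
theorem csma_stationary_comparable_to_pihat
    {V : Type*} [Fintype V] [DecidableEq V] [Nonempty V]
    (G : SimpleGraph V) [DecidableRel G.Adj]
    (W : V → ℝ) (hW : ∀ i, 1 ≤ W i)
    (P : {s : Finset V // IsIndep G s} → {s : Finset V // IsIndep G s} → ℝ)
    (hP0 : ∀ σ σ', 0 ≤ P σ σ')
    (hProw : ∀ σ, ∑ σ', P σ σ' = 1)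
    (hPpos : ∀ σ σ', 0 < P σ σ' ↔ IsIndep G (σ.1 ∪ σ'.1))
    (hPform : ∀ σ, ∃ c : ℝ, 0 < c ∧ ∃ p : {s : Finset V // IsIndep G s} → ℝ,
      (∀ σ', p σ' ∈ Set.Icc (((2 : ℝ) ^ (Fintype.card V))⁻¹) 1) ∧
      ∀ σ', IsIndep G (σ.1 ∪ σ'.1) →
        P σ σ' = c * (∏ i ∈ σ.1 \ σ'.1, (W i)⁻¹) * p σ')
    (π : {s : Finset V // IsIndep G s} → ℝ)
    (hπ0 : ∀ σ, 0 < π σ) (hπsum : ∑ σ, π σ = 1)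
    (hπstat : ∀ σ', ∑ σ, π σ * P σ σ' = π σ')
    (pihat : {s : Finset V // IsIndep G s} → ℝ)
    (hpihat : ∀ σ, pihat σ =
      (∏ i ∈ σ.1, W i) / ∑ ρ : {s : Finset V // IsIndep G s}, ∏ i ∈ ρ.1, W i) :
    ∀ σ : {s : Finset V // IsIndep G s},
      ((2 : ℝ) ^ (6 * Fintype.card V * 2 ^ (Fintype.card V)))⁻¹ * pihat σ ≤ π σ ∧
      π σ ≤ (2 : ℝ) ^ (6 * Fintype.card V * 2 ^ (Fintype.card V)) * pihat σ := by
  set n := Fintype.card V with hn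
  set N := Fintype.card {s : Finset V // IsIndep G s} with hNdef
  set u : {s : Finset V // IsIndep G s} → ℝ := fun σ => ∏ i ∈ σ.1, W i with hu_def
  have hWpos : ∀ i, 0 < W i := fun i => lt_of_lt_of_le one_pos (hW i)
  have hu : ∀ σ, 0 < u σ := fun σ => Finset.prod_pos (fun i _ => hWpos i)
  set o := (⟨∅, fun i hi => absurd hi (Finset.notMem_empty i)⟩ :
    {s : Finset V // IsIndep G s}) with ho
  have ho1 : o.1 = ∅ := rfl
  have hpo : ∀ z, 0 < P z o := by
    intro z
    apply (hPpos z o).mpr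
    rw [ho1, Finset.union_empty]
    exact z.2
  have hop : ∀ z, 0 < P o z := by
    intro z
    apply (hPpos o z).mpr
    rw [ho1, Finset.empty_union]
    exact z.2
  have h2npos : (0:ℝ) < 2 ^ n := by positivity
  have hPle1 : ∀ a b, P a b ≤ 1 := by
    intro a b
    rw [← hProw a]
    exact Finset.single_le_sum (fun b' _ => hP0 a b') (mem_univ b)
  have hPzero : ∀ a b, ¬ IsIndep G (a.1 ∪ b.1) → P a b = 0 := by
    intro a b hni
    rcases (hP0 a b).eq_or_lt with h | h
    · exact h.symm
    · exact absurd ((hPpos a b).mp h) hni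
  have hQle1 : ∀ (s : Finset V), ∏ i ∈ s, (W i)⁻¹ ≤ 1 :=
    fun s => Finset.prod_le_one (fun i _ => inv_nonneg.mpr (le_of_lt (hWpos i)))
      (fun i _ => inv_le_one_of_one_le₀ (hW i))
  have hQpos : ∀ (s : Finset V), 0 < ∏ i ∈ s, (W i)⁻¹ :=
    fun s => Finset.prod_pos (fun i _ => inv_pos.mpr (hWpos i))
  have hN2 : N ≤ 2 ^ n := by
    rw [hNdef, hn]
    calc Fintype.card {s : Finset V // IsIndep G s} ≤ Fintype.card (Finset V) :=
        Fintype.card_subtype_le _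
      _ = 2 ^ Fintype.card V := Fintype.card_finset
  have hNle : (N : ℝ) ≤ (2:ℝ) ^ n := by
    calc (N : ℝ) ≤ ((2^n : ℕ) : ℝ) := by exact_mod_cast hN2
      _ = (2:ℝ) ^ n := by push_cast; ring
  -- transition probability bounds
  have hPbnd : ∀ a b, IsIndep G (a.1 ∪ b.1) →
      ((2:ℝ)^n)⁻¹ * ((2:ℝ)^n)⁻¹ * ∏ i ∈ a.1 \ b.1, (W i)⁻¹ ≤ P a b ∧
      P a b ≤ (2:ℝ)^n * ∏ i ∈ a.1 \ b.1, (W i)⁻¹ := by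
    intro a b hab
    obtain ⟨c, hc, p, hp, hform⟩ := hPform a
    have hplo : ∀ b', ((2:ℝ)^n)⁻¹ ≤ p b' := fun b' => (hp b').1
    have hphi : ∀ b', p b' ≤ 1 := fun b' => (hp b').2
    have hself : P a a = c * p a := by
      have hii : IsIndep G (a.1 ∪ a.1) := by rw [Finset.union_self]; exact a.2
      rw [hform a hii, Finset.sdiff_self, Finset.prod_empty, mul_one]
    have hcle : c ≤ (2:ℝ)^n := by
      have h1 : c * p a ≤ 1 := by rw [← hself]; exact hPle1 a a
      have h3 : c * ((2:ℝ)^n)⁻¹ ≤ 1 :=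
        le_trans (mul_le_mul_of_nonneg_left (hplo a) hc.le) h1
      calc c = c * (((2:ℝ)^n)⁻¹ * 2^n) := by
            rw [inv_mul_cancel₀ (ne_of_gt h2npos), mul_one]
        _ = (c * ((2:ℝ)^n)⁻¹) * 2^n := by ring
        _ ≤ 1 * 2^n := mul_le_mul_of_nonneg_right h3 (le_of_lt h2npos)
        _ = 2^n := one_mul _
    have hcge : ((2:ℝ)^n)⁻¹ ≤ c := by
      have hterm : ∀ b', P a b' ≤ c := by
        intro b'
        by_cases hib : IsIndep G (a.1 ∪ b'.1)
        · rw [hform b' hib]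
          calc c * (∏ i ∈ a.1 \ b'.1, (W i)⁻¹) * p b'
              ≤ c * (∏ i ∈ a.1 \ b'.1, (W i)⁻¹) * 1 := by
                apply mul_le_mul_of_nonneg_left (hphi b')
                exact mul_nonneg hc.le (hQpos _).le
            _ = c * (∏ i ∈ a.1 \ b'.1, (W i)⁻¹) := mul_one _
            _ ≤ c * 1 := mul_le_mul_of_nonneg_left (hQle1 _) hc.le
            _ = c := mul_one _
        · rw [hPzero a b' hib]; exact hc.le
      have hsum : (1:ℝ) ≤ (N : ℝ) * c := by
        rw [← hProw a]
        calc ∑ b', P a b' ≤ ∑ _b' : {s : Finset V // IsIndep G s}, c :=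
            Finset.sum_le_sum (fun b' _ => hterm b')
          _ = (N : ℝ) * c := by
              rw [Finset.sum_const, Finset.card_univ, nsmul_eq_mul, hNdef]
      have h4 : (1:ℝ) ≤ 2^n * c :=
        le_trans hsum (mul_le_mul_of_nonneg_right hNle hc.le)
      rw [inv_eq_one_div, div_le_iff₀ h2npos]
      nlinarith [h4]
    rw [hform b hab]
    constructor
    · calc ((2:ℝ)^n)⁻¹ * ((2:ℝ)^n)⁻¹ * ∏ i ∈ a.1 \ b.1, (W i)⁻¹
          = (((2:ℝ)^n)⁻¹ * ∏ i ∈ a.1 \ b.1, (W i)⁻¹) * ((2:ℝ)^n)⁻¹ := by ring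
        _ ≤ (c * ∏ i ∈ a.1 \ b.1, (W i)⁻¹) * ((2:ℝ)^n)⁻¹ := by
            apply mul_le_mul_of_nonneg_right _ (by positivity)
            exact mul_le_mul_of_nonneg_right hcge (hQpos _).le
        _ ≤ (c * ∏ i ∈ a.1 \ b.1, (W i)⁻¹) * p b := by
            apply mul_le_mul_of_nonneg_left (hplo b)
            exact mul_nonneg hc.le (hQpos _).le
    · calc c * (∏ i ∈ a.1 \ b.1, (W i)⁻¹) * p b
          ≤ c * (∏ i ∈ a.1 \ b.1, (W i)⁻¹) * 1 := by
            apply mul_le_mul_of_nonneg_left (hphi b)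
            exact mul_nonneg hc.le (hQpos _).le
        _ = c * ∏ i ∈ a.1 \ b.1, (W i)⁻¹ := mul_one _
        _ ≤ (2:ℝ)^n * ∏ i ∈ a.1 \ b.1, (W i)⁻¹ :=
            mul_le_mul_of_nonneg_right hcle (hQpos _).le
  -- approximate reversibility
  have hβ1 : (1:ℝ) ≤ (2:ℝ)^(3*n) := one_le_pow₀ one_le_two
  have hrev : ∀ a b, u a * P a b ≤ (2:ℝ)^(3*n) * (u b * P b a) := by
    intro a b
    by_cases hab : IsIndep G (a.1 ∪ b.1)
    · have hba : IsIndep G (b.1 ∪ a.1) := by rwa [Finset.union_comm]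
      have hKpos : (0:ℝ) < ∏ i ∈ a.1 ∩ b.1, W i := Finset.prod_pos (fun i _ => hWpos i)
      have idA : u a * ∏ i ∈ a.1 \ b.1, (W i)⁻¹ = ∏ i ∈ a.1 ∩ b.1, W i := by
        have e1 : (∏ i ∈ a.1 ∩ b.1, W i) * ∏ i ∈ a.1 \ b.1, W i = ∏ i ∈ a.1, W i :=
          Finset.prod_inter_mul_prod_diff a.1 b.1 W
        have e2 : ∏ i ∈ a.1 \ b.1, (W i)⁻¹ = (∏ i ∈ a.1 \ b.1, W i)⁻¹ :=
          Finset.prod_inv_distrib _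
        have hDpos : (0:ℝ) < ∏ i ∈ a.1 \ b.1, W i := Finset.prod_pos (fun i _ => hWpos i)
        rw [hu_def]
        dsimp only
        rw [e2, ← e1]
        field_simp
      have idB : u b * ∏ i ∈ b.1 \ a.1, (W i)⁻¹ = ∏ i ∈ a.1 ∩ b.1, W i := by
        have e1 : (∏ i ∈ b.1 ∩ a.1, W i) * ∏ i ∈ b.1 \ a.1, W i = ∏ i ∈ b.1, W i :=
          Finset.prod_inter_mul_prod_diff b.1 a.1 W
        have e2 : ∏ i ∈ b.1 \ a.1, (W i)⁻¹ = (∏ i ∈ b.1 \ a.1, W i)⁻¹ :=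
          Finset.prod_inv_distrib _
        have hDpos : (0:ℝ) < ∏ i ∈ b.1 \ a.1, W i := Finset.prod_pos (fun i _ => hWpos i)
        rw [hu_def]
        dsimp only
        rw [e2, ← e1, Finset.inter_comm]
        field_simp
      have h3n : (2:ℝ)^(3*n) * (((2:ℝ)^n)⁻¹ * ((2:ℝ)^n)⁻¹) = (2:ℝ)^n := by
        rw [show 3*n = n + (n + n) from by ring, pow_add, pow_add]
        field_simp
      calc u a * P a b ≤ u a * ((2:ℝ)^n * ∏ i ∈ a.1 \ b.1, (W i)⁻¹) :=
            mul_le_mul_of_nonneg_left (hPbnd a b hab).2 (hu a).le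
        _ = (2:ℝ)^n * (u a * ∏ i ∈ a.1 \ b.1, (W i)⁻¹) := by ring
        _ = (2:ℝ)^n * ∏ i ∈ a.1 ∩ b.1, W i := by rw [idA]
        _ = (2:ℝ)^(3*n) * ((((2:ℝ)^n)⁻¹ * ((2:ℝ)^n)⁻¹) * ∏ i ∈ a.1 ∩ b.1, W i) := by
            rw [← mul_assoc, h3n]
        _ = (2:ℝ)^(3*n) * ((((2:ℝ)^n)⁻¹ * ((2:ℝ)^n)⁻¹ * ∏ i ∈ b.1 \ a.1, (W i)⁻¹) * u b) := by
            rw [show (((2:ℝ)^n)⁻¹ * ((2:ℝ)^n)⁻¹ * ∏ i ∈ b.1 \ a.1, (W i)⁻¹) * u b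
              = (((2:ℝ)^n)⁻¹ * ((2:ℝ)^n)⁻¹) * (u b * ∏ i ∈ b.1 \ a.1, (W i)⁻¹) from by ring,
              idB]
        _ ≤ (2:ℝ)^(3*n) * (P b a * u b) := by
            apply mul_le_mul_of_nonneg_left _ (by positivity)
            exact mul_le_mul_of_nonneg_right (hPbnd b a hba).1 (hu b).le
        _ = (2:ℝ)^(3*n) * (u b * P b a) := by ring
    · rw [hPzero a b hab, mul_zero]
      exact mul_nonneg (by positivity) (mul_nonneg (hu b).le (hP0 b a))
  -- instantiate the abstract theory
  have hstat : ∀ y, ∑ z, CSMAaux.mu P z * P z y = CSMAaux.mu P y :=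
    CSMAaux.mu_stationary P hProw
  have hμpos : ∀ x, 0 < CSMAaux.mu P x := CSMAaux.mu_pos P hP0 o hpo hop
  have huniq : ∀ a, π a * (∑ z, CSMAaux.mu P z) = CSMAaux.mu P a :=
    CSMAaux.stationary_unique P hP0 o hpo hop π (CSMAaux.mu P) hπ0 hμpos hπstat hstat hπsum
  have hcomp := CSMAaux.mu_comp P hP0 u hu ((2:ℝ)^(3*n)) hβ1 hrev
  set B := (2:ℝ) ^ (6 * n * 2 ^ n) with hB
  have hBpos : (0:ℝ) < B := by rw [hB]; positivity
  have hBle : ((2:ℝ)^(3*n))^N * (N:ℝ)^N ≤ B := by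
    have h1 : ((2:ℝ)^(3*n))^N = (2:ℝ)^(3*n*N) := (pow_mul (2:ℝ) (3*n) N).symm
    have h2 : (N:ℝ)^N ≤ ((2:ℝ)^n)^N := pow_le_pow_left₀ (Nat.cast_nonneg N) hNle N
    have h3 : ((2:ℝ)^n)^N = (2:ℝ)^(n*N) := (pow_mul (2:ℝ) n N).symm
    have hexp : 3*n*N + n*N ≤ 6*n*2^n := by nlinarith [hN2]
    calc ((2:ℝ)^(3*n))^N * (N:ℝ)^N ≤ ((2:ℝ)^(3*n))^N * ((2:ℝ)^n)^N := by
          apply mul_le_mul_of_nonneg_left h2 (by positivity)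
      _ = (2:ℝ)^(3*n*N + n*N) := by rw [h1, h3, pow_add]
      _ ≤ B := by rw [hB]; exact pow_le_pow_right₀ one_le_two hexp
  have hcompB : ∀ x y, u y * CSMAaux.mu P x ≤ B * (u x * CSMAaux.mu P y) := by
    intro x y
    calc u y * CSMAaux.mu P x
        ≤ ((2:ℝ)^(3*n))^N * (N:ℝ)^N * (u x * CSMAaux.mu P y) := hcomp x y
      _ ≤ B * (u x * CSMAaux.mu P y) := by
          apply mul_le_mul_of_nonneg_right hBle
          exact mul_nonneg (hu x).le (hμpos y).le
  set T := ∑ z, CSMAaux.mu P z with hT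
  have hTpos : (0:ℝ) < T := Finset.sum_pos (fun z _ => hμpos z) ⟨o, mem_univ o⟩
  set Z := Finset.univ.sum u with hZ
  have hZu : Z = ∑ ρ, u ρ := rfl
  have hZpos : (0:ℝ) < Z := by
    rw [hZu]; exact Finset.sum_pos (fun ρ _ => hu ρ) ⟨o, mem_univ o⟩
  have ineq1 : ∀ x, CSMAaux.mu P x * Z ≤ B * (u x * T) := by
    intro x
    have e1 : CSMAaux.mu P x * Z = ∑ y, u y * CSMAaux.mu P x := by
      rw [mul_comm (CSMAaux.mu P x) Z, hZu, Finset.sum_mul]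
    have e2 : B * (u x * T) = ∑ y, B * (u x * CSMAaux.mu P y) := by
      rw [hT, Finset.mul_sum, Finset.mul_sum]
    rw [e1, e2]
    exact Finset.sum_le_sum (fun y _ => hcompB x y)
  have ineq2 : ∀ x, u x * T ≤ B * (Z * CSMAaux.mu P x) := by
    intro x
    have e1 : u x * T = ∑ y, u x * CSMAaux.mu P y := by
      rw [hT, Finset.mul_sum]
    have e2 : B * (Z * CSMAaux.mu P x) = ∑ y, B * (u y * CSMAaux.mu P x) := by
      rw [hZu, Finset.sum_mul, Finset.mul_sum]
    rw [e1, e2]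
    exact Finset.sum_le_sum (fun y _ => hcompB y x)
  intro σ
  have hπσ : π σ * T = CSMAaux.mu P σ := huniq σ
  have hpihatσ : pihat σ = u σ / Z := by
    rw [hpihat σ]
  constructor
  · -- lower bound
    rw [hpihatσ, inv_mul_le_iff₀ hBpos, div_le_iff₀ hZpos]
    have hfin : (u σ * T) ≤ (B * π σ * Z) * T := by
      calc u σ * T ≤ B * (Z * CSMAaux.mu P σ) := ineq2 σ
        _ = B * (Z * (π σ * T)) := by rw [hπσ]
        _ = (B * π σ * Z) * T := by ring
    exact le_of_mul_le_mul_right hfin hTpos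
  · -- upper bound
    rw [hpihatσ]
    rw [show B * (u σ / Z) = B * u σ / Z from by ring, le_div_iff₀ hZpos]
    have hfin : (π σ * Z) * T ≤ (B * u σ) * T := by
      calc (π σ * Z) * T = (π σ * T) * Z := by ring
        _ = CSMAaux.mu P σ * Z := by rw [hπσ]
        _ ≤ B * (u σ * T) := ineq1 σ
        _ = (B * u σ) * T := by ring
    exact le_of_mul_le_mul_right hfin hTpos
end

section
/- Let P be a weighted CSMA chain for (G,W) with stationary distribution π. Then for every σ ∈ I(G): π_σ ≥ 1/(2^{n(6·2^n + 1)} · W_max^n). -/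
/-- For a weighted CSMA chain `P` for `(G, W)` with stationary
distribution `π`, every independent set `σ` satisfies
`π_σ ≥ 1/(2^{n(6·2^n + 1)} · W_max^n)`. -/
theorem csma_stationary_lower_bound
    {V : Type*} [Fintype V] [DecidableEq V] [Nonempty V]
    (G : SimpleGraph V) [DecidableRel G.Adj]
    (W : V → ℝ) (hW : ∀ i, 1 ≤ W i)
    (P : {s : Finset V // IsIndep G s} → {s : Finset V // IsIndep G s} → ℝ)
    (hP0 : ∀ σ σ', 0 ≤ P σ σ')
    (hProw : ∀ σ, ∑ σ', P σ σ' = 1)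
    (hPpos : ∀ σ σ', 0 < P σ σ' ↔ IsIndep G (σ.1 ∪ σ'.1))
    (hPform : ∀ σ, ∃ c : ℝ, 0 < c ∧ ∃ p : {s : Finset V // IsIndep G s} → ℝ,
      (∀ σ', p σ' ∈ Set.Icc (((2 : ℝ) ^ (Fintype.card V))⁻¹) 1) ∧
      ∀ σ', IsIndep G (σ.1 ∪ σ'.1) →
        P σ σ' = c * (∏ i ∈ σ.1 \ σ'.1, (W i)⁻¹) * p σ')
    (π : {s : Finset V // IsIndep G s} → ℝ)
    (hπ0 : ∀ σ, 0 < π σ) (hπsum : ∑ σ, π σ = 1)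
    (hπstat : ∀ σ', ∑ σ, π σ * P σ σ' = π σ')
    (Wmax : ℝ) (hWmax : Wmax = Finset.univ.sup' Finset.univ_nonempty W) :
    ∀ σ : {s : Finset V // IsIndep G s},
      ((2 : ℝ) ^ (Fintype.card V * (6 * 2 ^ (Fintype.card V) + 1))
        * Wmax ^ (Fintype.card V))⁻¹ ≤ π σ := by
  classical
  intro σ
  obtain ⟨i0⟩ := ‹Nonempty V›
  set n := Fintype.card V with hn
  have hW1 : (1:ℝ) ≤ Wmax := hWmax ▸ le_trans (hW i0) (Finset.le_sup' W (Finset.mem_univ i0))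
  have hWmaxpos : (0:ℝ) < Wmax := lt_of_lt_of_le one_pos hW1
  have hWle : ∀ i, W i ≤ Wmax := fun i => hWmax ▸ Finset.le_sup' W (Finset.mem_univ i)
  have h2pos : (0:ℝ) < 2 ^ n := by positivity
  have hcard : (Fintype.card {s : Finset V // IsIndep G s} : ℝ) ≤ 2 ^ n := by
    have h := Fintype.card_subtype_le (fun s : Finset V => IsIndep G s)
    rw [Fintype.card_finset] at h
    exact_mod_cast h
  have hprod_le_one : ∀ s : Finset V, ∏ i ∈ s, (W i)⁻¹ ≤ 1 := by
    intro s
    apply Finset.prod_le_one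
    · intro i _; exact inv_nonneg.mpr (by linarith [hW i])
    · intro i _; exact inv_le_one_of_one_le₀ (hW i)
  have hprod_pos : ∀ s : Finset V, 0 < ∏ i ∈ s, (W i)⁻¹ := by
    intro s; apply Finset.prod_pos; intro i _
    exact inv_pos.mpr (lt_of_lt_of_le one_pos (hW i))
  have hprod_ge : ∀ s : Finset V, (Wmax ^ n)⁻¹ ≤ ∏ i ∈ s, (W i)⁻¹ := by
    intro s
    have h1 : ∏ i ∈ s, Wmax⁻¹ ≤ ∏ i ∈ s, (W i)⁻¹ := by
      apply Finset.prod_le_prod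
      · intro i _; positivity
      · intro i _; exact inv_anti₀ (lt_of_lt_of_le one_pos (hW i)) (hWle i)
    have h2 : (Wmax⁻¹) ^ n ≤ (Wmax⁻¹) ^ s.card := by
      apply pow_le_pow_of_le_one (by positivity) (inv_le_one_of_one_le₀ hW1)
      calc s.card ≤ Finset.univ.card := Finset.card_le_card (Finset.subset_univ s)
        _ = n := Finset.card_univ
    calc (Wmax ^ n)⁻¹ = (Wmax⁻¹) ^ n := by rw [inv_pow]
      _ ≤ (Wmax⁻¹) ^ s.card := h2
      _ = ∏ i ∈ s, Wmax⁻¹ := by rw [Finset.prod_const]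
      _ ≤ ∏ i ∈ s, (W i)⁻¹ := h1
  -- lower bound on transition probabilities
  have hPlb : ∀ τ σ' : {s : Finset V // IsIndep G s}, IsIndep G (τ.1 ∪ σ'.1) →
      ((2:ℝ) ^ n)⁻¹ * (∏ i ∈ τ.1 \ σ'.1, (W i)⁻¹) * ((2:ℝ) ^ n)⁻¹ ≤ P τ σ' := by
    intro τ σ' hind
    obtain ⟨c, hc, p, hp, hform⟩ := hPform τ
    have hcge : ((2:ℝ) ^ n)⁻¹ ≤ c := by
      have hle : ∀ σ'', P τ σ'' ≤ c := by
        intro σ''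
        by_cases h : IsIndep G (τ.1 ∪ σ''.1)
        · rw [hform σ'' h]
          have hA := hprod_le_one (τ.1 \ σ''.1)
          have hA0 := (hprod_pos (τ.1 \ σ''.1)).le
          have hq := hp σ''
          have hq0 : 0 ≤ p σ'' := le_trans (by positivity) hq.1
          calc c * (∏ i ∈ τ.1 \ σ''.1, (W i)⁻¹) * p σ''
              ≤ c * 1 * 1 := by
                apply mul_le_mul _ hq.2 hq0 (by nlinarith)
                exact mul_le_mul_of_nonneg_left hA hc.le
            _ = c := by ring
        · have h0 : P τ σ'' = 0 := by
            by_contra h0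
            exact h ((hPpos τ σ'').1 (lt_of_le_of_ne (hP0 τ σ'') (Ne.symm h0)))
          rw [h0]; exact hc.le
      have h1 : (1:ℝ) ≤ 2 ^ n * c := by
        have : (1:ℝ) ≤ (Fintype.card {s : Finset V // IsIndep G s} : ℝ) * c := by
          calc (1:ℝ) = ∑ σ'', P τ σ'' := (hProw τ).symm
            _ ≤ ∑ _σ'' : {s : Finset V // IsIndep G s}, c :=
                Finset.sum_le_sum (fun σ'' _ => hle σ'')
            _ = (Fintype.card {s : Finset V // IsIndep G s} : ℝ) * c := by
                rw [Finset.sum_const, Finset.card_univ, nsmul_eq_mul]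
        exact le_trans this (mul_le_mul_of_nonneg_right hcard hc.le)
      rw [inv_eq_one_div, div_le_iff₀ h2pos]
      linarith
    rw [hform σ' hind]
    have hq := hp σ'
    have hA0 := (hprod_pos (τ.1 \ σ'.1)).le
    exact mul_le_mul (mul_le_mul_of_nonneg_right hcge hA0) hq.1 (by positivity)
      (mul_nonneg hc.le hA0)
  -- some state has π ≥ 2⁻ⁿ
  have hσ0 : ∃ σ₀, ((2:ℝ) ^ n)⁻¹ ≤ π σ₀ := by
    by_contra h
    push_neg at h
    have hlt : ∑ σ', π σ' < ∑ _σ' : {s : Finset V // IsIndep G s}, ((2:ℝ) ^ n)⁻¹ :=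
      Finset.sum_lt_sum_of_nonempty Finset.univ_nonempty (fun i _ => h i)
    rw [hπsum, Finset.sum_const, Finset.card_univ, nsmul_eq_mul] at hlt
    have : (Fintype.card {s : Finset V // IsIndep G s} : ℝ) * ((2:ℝ) ^ n)⁻¹ ≤ 1 := by
      calc (Fintype.card {s : Finset V // IsIndep G s} : ℝ) * ((2:ℝ) ^ n)⁻¹
          ≤ 2 ^ n * ((2:ℝ) ^ n)⁻¹ := by
            exact mul_le_mul_of_nonneg_right hcard (by positivity)
        _ = 1 := mul_inv_cancel₀ (ne_of_gt h2pos)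
    linarith
  obtain ⟨σ₀, hσ₀⟩ := hσ0
  set σe : {s : Finset V // IsIndep G s} :=
    ⟨∅, fun i hi => absurd hi (Finset.notMem_empty i)⟩ with hσe
  -- single term lower bounds from stationarity
  have hstep : ∀ τ σ' : {s : Finset V // IsIndep G s}, π τ * P τ σ' ≤ π σ' := by
    intro τ σ'
    rw [← hπstat σ']
    exact Finset.single_le_sum
      (fun i _ => mul_nonneg (hπ0 i).le (hP0 i σ')) (Finset.mem_univ τ)
  have hPe1 : ((2:ℝ) ^ n)⁻¹ * (Wmax ^ n)⁻¹ * ((2:ℝ) ^ n)⁻¹ ≤ P σ₀ σe := by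
    have hind : IsIndep G (σ₀.1 ∪ σe.1) := by
      simpa [hσe, Finset.union_empty] using σ₀.2
    calc ((2:ℝ) ^ n)⁻¹ * (Wmax ^ n)⁻¹ * ((2:ℝ) ^ n)⁻¹
        ≤ ((2:ℝ) ^ n)⁻¹ * (∏ i ∈ σ₀.1 \ σe.1, (W i)⁻¹) * ((2:ℝ) ^ n)⁻¹ := by
          gcongr
          · exact hprod_ge _
      _ ≤ P σ₀ σe := hPlb σ₀ σe hind
  have hPe2 : ((2:ℝ) ^ n)⁻¹ * ((2:ℝ) ^ n)⁻¹ ≤ P σe σ := by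
    have hind : IsIndep G (σe.1 ∪ σ.1) := by
      simpa [hσe, Finset.empty_union] using σ.2
    have h := hPlb σe σ hind
    have hpe : σe.1 \ σ.1 = (∅ : Finset V) := by simp [hσe]
    rw [hpe] at h
    simpa using h
  have hπe : ((2:ℝ) ^ n)⁻¹ * (((2:ℝ) ^ n)⁻¹ * (Wmax ^ n)⁻¹ * ((2:ℝ) ^ n)⁻¹) ≤ π σe := by
    calc ((2:ℝ) ^ n)⁻¹ * (((2:ℝ) ^ n)⁻¹ * (Wmax ^ n)⁻¹ * ((2:ℝ) ^ n)⁻¹)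
        ≤ π σ₀ * P σ₀ σe :=
          mul_le_mul hσ₀ hPe1 (by positivity) (hπ0 σ₀).le
      _ ≤ π σe := hstep σ₀ σe
  have hfin : ((2:ℝ) ^ n)⁻¹ * (((2:ℝ) ^ n)⁻¹ * (Wmax ^ n)⁻¹ * ((2:ℝ) ^ n)⁻¹)
      * (((2:ℝ) ^ n)⁻¹ * ((2:ℝ) ^ n)⁻¹) ≤ π σ := by
    calc ((2:ℝ) ^ n)⁻¹ * (((2:ℝ) ^ n)⁻¹ * (Wmax ^ n)⁻¹ * ((2:ℝ) ^ n)⁻¹)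
          * (((2:ℝ) ^ n)⁻¹ * ((2:ℝ) ^ n)⁻¹)
        ≤ π σe * P σe σ :=
          mul_le_mul hπe hPe2 (by positivity) (hπ0 σe).le
      _ ≤ π σ := hstep σe σ
  refine le_trans ?_ hfin
  have hexp : ((2:ℝ) ^ (n * (6 * 2 ^ n + 1)))⁻¹ ≤ ((2:ℝ) ^ (n * 5))⁻¹ := by
    apply inv_anti₀ (by positivity)
    apply pow_le_pow_right₀ one_le_two
    apply Nat.mul_le_mul_left
    have : 1 ≤ 2 ^ n := Nat.one_le_two_pow
    omega
  have heq : ((2:ℝ) ^ n)⁻¹ * (((2:ℝ) ^ n)⁻¹ * (Wmax ^ n)⁻¹ * ((2:ℝ) ^ n)⁻¹)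
      * (((2:ℝ) ^ n)⁻¹ * ((2:ℝ) ^ n)⁻¹)
      = ((2:ℝ) ^ (n * 5))⁻¹ * (Wmax ^ n)⁻¹ := by
    rw [pow_mul]
    ring
  rw [mul_inv, heq]
  exact mul_le_mul_of_nonneg_right hexp (by positivity)
end

section
/- Let P be a weighted CSMA chain for (G,W) with stationary distribution π, and let P* be the adjoint of P with respect to π. Then for every function v : I(G) → ℝ with Σ_{σ∈I(G)} π_σ v_σ = 0, one has ⟨v, PP* v⟩_π ≤ (1 − 2^{-(24n·2^n + 12n + 1)} · W_max^{-8n}) · ⟨v, v⟩_π. -/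
/-- For a weighted CSMA chain `P` for `(G, W)` with stationary
distribution `π` and adjoint `P*`, every mean-zero `v : I(G) → ℝ` satisfies
`⟨v, PP* v⟩_π ≤ (1 - 2^{-(24n·2^n + 12n + 1)}·W_max^{-8n})·⟨v, v⟩_π`. -/
theorem csma_PPstar_spectral_gap
    {V : Type*} [Fintype V] [DecidableEq V] [Nonempty V]
    (G : SimpleGraph V) [DecidableRel G.Adj]
    (W : V → ℝ) (hW : ∀ i, 1 ≤ W i)
    (P : {s : Finset V // IsIndep G s} → {s : Finset V // IsIndep G s} → ℝ)
    (hP0 : ∀ σ σ', 0 ≤ P σ σ')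
    (hProw : ∀ σ, ∑ σ', P σ σ' = 1)
    (hPpos : ∀ σ σ', 0 < P σ σ' ↔ IsIndep G (σ.1 ∪ σ'.1))
    (hPform : ∀ σ, ∃ c : ℝ, 0 < c ∧ ∃ p : {s : Finset V // IsIndep G s} → ℝ,
      (∀ σ', p σ' ∈ Set.Icc (((2 : ℝ) ^ (Fintype.card V))⁻¹) 1) ∧
      ∀ σ', IsIndep G (σ.1 ∪ σ'.1) →
        P σ σ' = c * (∏ i ∈ σ.1 \ σ'.1, (W i)⁻¹) * p σ')
    (π : {s : Finset V // IsIndep G s} → ℝ)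
    (hπ0 : ∀ σ, 0 < π σ) (hπsum : ∑ σ, π σ = 1)
    (hπstat : ∀ σ', ∑ σ, π σ * P σ σ' = π σ')
    (Wmax : ℝ) (hWmax : Wmax = Finset.univ.sup' Finset.univ_nonempty W)
    (Pstar : {s : Finset V // IsIndep G s} → {s : Finset V // IsIndep G s} → ℝ)
    (hPstar : ∀ σ σ', Pstar σ σ' = π σ' * P σ' σ / π σ) :
    ∀ v : {s : Finset V // IsIndep G s} → ℝ, (∑ σ, π σ * v σ) = 0 →
      ∑ σ, π σ * v σ * (∑ σ', (∑ ρ, P σ ρ * Pstar ρ σ') * v σ')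
        ≤ (1 - ((2 : ℝ) ^ (24 * Fintype.card V * 2 ^ (Fintype.card V)
              + 12 * Fintype.card V + 1)
            * Wmax ^ (8 * Fintype.card V))⁻¹)
          * ∑ σ, π σ * v σ * v σ := by
  intro v hv
  classical
  set n := Fintype.card V with hn
  let S := {s : Finset V // IsIndep G s}
  let e : {s : Finset V // IsIndep G s} := ⟨∅, fun i hi => absurd hi (Finset.notMem_empty i)⟩
  have he1 : (e.1 : Finset V) = ∅ := rfl
  set α : ℝ := ((2 : ℝ) ^ (24 * n * 2 ^ n + 12 * n + 1) * Wmax ^ (8 * n))⁻¹ with hα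
  -- basic facts
  have hWmax1 : (1 : ℝ) ≤ Wmax := by
    obtain ⟨i⟩ := ‹Nonempty V›
    exact le_trans (hW i) (hWmax ▸ Finset.le_sup' W (Finset.mem_univ i))
  have hWmaxpos : (0 : ℝ) < Wmax := lt_of_lt_of_le one_pos hWmax1
  have hWle : ∀ i : V, W i ≤ Wmax := fun i =>
    hWmax ▸ Finset.le_sup' W (Finset.mem_univ i)
  have hπle1 : ∀ σ : S, π σ ≤ 1 := by
    intro σ
    rw [← hπsum]
    exact Finset.single_le_sum (fun σ' _ => (hπ0 σ').le) (Finset.mem_univ σ)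
  have hPstar0 : ∀ σ σ', 0 ≤ Pstar σ σ' := by
    intro σ σ'
    rw [hPstar]
    exact div_nonneg (mul_nonneg (hπ0 _).le (hP0 _ _)) (hπ0 _).le
  have hPstarrow : ∀ ρ : S, ∑ σ', Pstar ρ σ' = 1 := by
    intro ρ
    simp only [hPstar]
    rw [← Finset.sum_div, hπstat ρ, div_self (hπ0 ρ).ne']
  have hcardS : (Fintype.card S : ℝ) ≤ 2 ^ n := by
    have h1 : Fintype.card S ≤ Fintype.card (Finset V) :=
      Fintype.card_le_of_injective _ Subtype.val_injective
    have h2 : Fintype.card (Finset V) = 2 ^ n := by simp [Fintype.card_finset, hn]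
    calc (Fintype.card S : ℝ) ≤ (Fintype.card (Finset V) : ℝ) := by exact_mod_cast h1
      _ = 2 ^ n := by rw [h2]; push_cast; ring
  -- lower bound on P σ e
  set β : ℝ := ((2 : ℝ) ^ n)⁻¹ * ((Wmax ^ n)⁻¹ * ((2 : ℝ) ^ n)⁻¹) with hβ
  have hβpos : 0 < β := by positivity
  have key1 : ∀ σ : S, β ≤ P σ e := by
    intro σ
    obtain ⟨c, hc, p, hp, hform⟩ := hPform σ
    have hindep : IsIndep G (σ.1 ∪ (e : S).1) := by
      show IsIndep G (σ.1 ∪ ∅)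
      rw [Finset.union_empty]; exact σ.2
    have hPe : P σ e = c * (∏ i ∈ σ.1 \ e.1, (W i)⁻¹) * p e :=
      hform e hindep
    -- c ≥ (2^n)⁻¹
    have hPlec : ∀ σ' : S, P σ σ' ≤ c := by
      intro σ'
      rcases eq_or_lt_of_le (hP0 σ σ') with h | h
      · exact le_of_eq_of_le h.symm hc.le
      · have hind := (hPpos σ σ').1 h
        rw [hform σ' hind]
        have h1 : ∏ i ∈ σ.1 \ σ'.1, (W i)⁻¹ ≤ 1 :=
          Finset.prod_le_one (fun i _ => inv_nonneg.2 (le_trans zero_le_one (hW i)))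
            (fun i _ => inv_le_one_of_one_le₀ (hW i))
        have h2 : p σ' ≤ 1 := (hp σ').2
        have h3 : 0 ≤ p σ' := le_trans (by positivity) (hp σ').1
        calc c * (∏ i ∈ σ.1 \ σ'.1, (W i)⁻¹) * p σ'
            ≤ c * 1 * 1 := by
              apply mul_le_mul _ h2 h3 (by positivity)
              exact mul_le_mul_of_nonneg_left h1 hc.le
          _ = c := by ring
    have hc2 : ((2 : ℝ) ^ n)⁻¹ ≤ c := by
      have h1 : (1 : ℝ) ≤ (Fintype.card S : ℝ) * c := by
        rw [← hProw σ]
        calc ∑ σ', P σ σ' ≤ ∑ _σ' : S, c := Finset.sum_le_sum fun σ' _ => hPlec σ'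
          _ = (Fintype.card S : ℝ) * c := by
            rw [Finset.sum_const, nsmul_eq_mul]; rfl
      have h2 : (1 : ℝ) ≤ 2 ^ n * c :=
        le_trans h1 (mul_le_mul_of_nonneg_right hcardS hc.le)
      rw [inv_le_iff_one_le_mul₀ (by positivity)]
      linarith
    -- product lower bound
    have hprodlb : (Wmax ^ n)⁻¹ ≤ ∏ i ∈ σ.1 \ e.1, (W i)⁻¹ := by
      rw [he1, Finset.sdiff_empty]
      have h1 : ∏ i ∈ σ.1, (Wmax)⁻¹ ≤ ∏ i ∈ σ.1, (W i)⁻¹ := by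
        apply Finset.prod_le_prod (fun i _ => by positivity)
        intro i _
        exact inv_anti₀ (lt_of_lt_of_le one_pos (hW i)) (hWle i)
      have h2 : (Wmax ^ n)⁻¹ ≤ ∏ i ∈ σ.1, (Wmax)⁻¹ := by
        rw [Finset.prod_const, ← inv_pow]
        apply pow_le_pow_of_le_one (by positivity) (inv_le_one_of_one_le₀ hWmax1)
        exact Finset.card_le_univ σ.1
      exact le_trans h2 h1
    have hpe : ((2 : ℝ) ^ n)⁻¹ ≤ p e := (hp e).1
    rw [hPe, hβ]
    have h0 : (0 : ℝ) ≤ (Wmax ^ n)⁻¹ * ((2 : ℝ) ^ n)⁻¹ := by positivity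
    calc ((2 : ℝ) ^ n)⁻¹ * ((Wmax ^ n)⁻¹ * ((2 : ℝ) ^ n)⁻¹)
        ≤ c * ((Wmax ^ n)⁻¹ * ((2 : ℝ) ^ n)⁻¹) :=
          mul_le_mul_of_nonneg_right hc2 h0
      _ ≤ c * ((∏ i ∈ σ.1 \ e.1, (W i)⁻¹) * p e) := by
          apply mul_le_mul_of_nonneg_left _ hc.le
          exact mul_le_mul hprodlb hpe (by positivity)
            (le_trans (by positivity) hprodlb)
      _ = c * (∏ i ∈ σ.1 \ e.1, (W i)⁻¹) * p e := by ring
  -- α ≤ β * β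
  have hαββ : α ≤ β * β := by
    have hββ : β * β = ((2 : ℝ) ^ (4 * n) * Wmax ^ (2 * n))⁻¹ := by
      rw [hβ]
      rw [show 4 * n = n + n + (n + n) by ring, show 2 * n = n + n by ring]
      rw [pow_add, pow_add, pow_add]
      field_simp
    rw [hββ, hα]
    apply inv_anti₀ (by positivity)
    have h1 : (2 : ℝ) ^ (4 * n) ≤ 2 ^ (24 * n * 2 ^ n + 12 * n + 1) := by
      apply pow_le_pow_right₀ one_le_two
      calc 4 * n ≤ 12 * n := by omega
        _ ≤ 24 * n * 2 ^ n + 12 * n + 1 := by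
          calc 12 * n ≤ 24 * n * 2 ^ n + 12 * n := Nat.le_add_left _ _
            _ ≤ 24 * n * 2 ^ n + 12 * n + 1 := Nat.le_succ _
    have h2 : Wmax ^ (2 * n) ≤ Wmax ^ (8 * n) :=
      pow_le_pow_right₀ hWmax1 (by omega)
    exact mul_le_mul h1 h2 (by positivity) (by positivity)
  -- the kernel Q and its properties
  set Q : S → S → ℝ := fun σ σ' => ∑ ρ, P σ ρ * Pstar ρ σ' with hQ
  have hQα : ∀ σ σ', α * π σ' ≤ Q σ σ' := by
    intro σ σ'
    have hterm : β * β * π σ' ≤ P σ e * Pstar e σ' := by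
      rw [hPstar]
      have h1 : π σ' * P σ' e ≤ π σ' * P σ' e / π e := by
        rw [le_div_iff₀ (hπ0 e)]
        exact mul_le_of_le_one_right (mul_nonneg (hπ0 σ').le (hP0 σ' e)) (hπle1 e)
      have h2 : β * (β * π σ') ≤ P σ e * (π σ' * P σ' e) := by
        apply mul_le_mul (key1 σ) _ (mul_nonneg hβpos.le (hπ0 σ').le)
          (hP0 σ e)
        calc β * π σ' = π σ' * β := by ring
          _ ≤ π σ' * P σ' e := mul_le_mul_of_nonneg_left (key1 σ') (hπ0 σ').le
      calc β * β * π σ' = β * (β * π σ') := by ring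
        _ ≤ P σ e * (π σ' * P σ' e) := h2
        _ ≤ P σ e * (π σ' * P σ' e / π e) :=
            mul_le_mul_of_nonneg_left h1 (hP0 σ e)
    have hsum : P σ e * Pstar e σ' ≤ Q σ σ' := by
      apply Finset.single_le_sum (fun ρ _ => mul_nonneg (hP0 σ ρ) (hPstar0 ρ σ'))
        (Finset.mem_univ e)
    calc α * π σ' ≤ β * β * π σ' :=
          mul_le_mul_of_nonneg_right hαββ (hπ0 σ').le
      _ ≤ P σ e * Pstar e σ' := hterm
      _ ≤ Q σ σ' := hsum
  have hQrow : ∀ σ : S, ∑ σ', Q σ σ' = 1 := by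
    intro σ
    rw [hQ]
    rw [Finset.sum_comm]
    simp only [← Finset.mul_sum]
    refine (Finset.sum_congr rfl fun ρ _ => ?_).trans (hProw σ)
    convert mul_one (P σ ρ) using 2
    exact hPstarrow ρ
  have hQsym : ∀ σ σ', π σ * Q σ σ' = π σ' * Q σ' σ := by
    intro σ σ'
    rw [hQ]
    simp only [Finset.mul_sum]
    apply Finset.sum_congr rfl
    intro ρ _
    rw [hPstar, hPstar]
    ring
  -- symmetric nonnegative kernel K
  set K : S → S → ℝ := fun σ σ' => π σ * (Q σ σ' - α * π σ') with hK
  have hK0 : ∀ σ σ', 0 ≤ K σ σ' := fun σ σ' =>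
    mul_nonneg (hπ0 σ).le (sub_nonneg.2 (hQα σ σ'))
  have hKsym : ∀ σ σ', K σ σ' = K σ' σ := by
    intro σ σ'
    show π σ * (Q σ σ' - α * π σ') = π σ' * (Q σ' σ - α * π σ)
    linear_combination hQsym σ σ'
  have hKrow : ∀ σ : S, ∑ σ', K σ σ' = π σ * (1 - α) := by
    intro σ
    rw [hK]
    simp only
    rw [← Finset.mul_sum]
    congr 1
    rw [Finset.sum_sub_distrib, hQrow σ, ← Finset.mul_sum, hπsum, mul_one]
  -- rewrite LHS
  have expand : ∀ σ : S, π σ * v σ * (∑ σ', Q σ σ' * v σ')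
      = ∑ σ', K σ σ' * (v σ * v σ') := by
    intro σ
    have step : ∀ σ' : S, π σ * v σ * (Q σ σ' * v σ')
        = K σ σ' * (v σ * v σ') + α * π σ * v σ * (π σ' * v σ') := by
      intro σ'
      rw [hK]; ring
    calc π σ * v σ * (∑ σ', Q σ σ' * v σ')
        = ∑ σ', π σ * v σ * (Q σ σ' * v σ') := by rw [Finset.mul_sum]
      _ = ∑ σ', (K σ σ' * (v σ * v σ') + α * π σ * v σ * (π σ' * v σ')) :=
          Finset.sum_congr rfl fun σ' _ => step σ'
      _ = (∑ σ', K σ σ' * (v σ * v σ')) + α * π σ * v σ * ∑ σ', π σ' * v σ' := by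
          rw [Finset.sum_add_distrib, ← Finset.mul_sum]
      _ = ∑ σ', K σ σ' * (v σ * v σ') := by rw [hv, mul_zero, add_zero]
  have hLHS : ∑ σ, π σ * v σ * (∑ σ', (∑ ρ, P σ ρ * Pstar ρ σ') * v σ')
      = ∑ σ, ∑ σ', K σ σ' * (v σ * v σ') :=
    Finset.sum_congr rfl fun σ _ => expand σ
  rw [hLHS]
  -- main estimate
  have hstep1 : ∑ σ, ∑ σ', K σ σ' * (v σ * v σ')
      ≤ ∑ σ, ∑ σ', K σ σ' * ((v σ * v σ + v σ' * v σ') / 2) := by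
    apply Finset.sum_le_sum
    intro σ _
    apply Finset.sum_le_sum
    intro σ' _
    apply mul_le_mul_of_nonneg_left _ (hK0 σ σ')
    nlinarith [sq_nonneg (v σ - v σ')]
  have hstep2 : ∑ σ, ∑ σ', K σ σ' * ((v σ * v σ + v σ' * v σ') / 2)
      = (1 - α) * ∑ σ, π σ * v σ * v σ := by
    have hA : ∀ σ : {s : Finset V // IsIndep G s},
        ∑ σ', K σ σ' * (v σ * v σ) = π σ * (1 - α) * (v σ * v σ) := by
      intro σ
      rw [← Finset.sum_mul, hKrow σ]
    have hB : ∑ σ, ∑ σ', K σ σ' * (v σ' * v σ')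
        = ∑ σ, π σ * (1 - α) * (v σ * v σ) := by
      rw [Finset.sum_comm]
      apply Finset.sum_congr rfl
      intro σ' _
      calc ∑ σ, K σ σ' * (v σ' * v σ') = ∑ σ, K σ' σ * (v σ' * v σ') :=
            Finset.sum_congr rfl fun σ _ => by rw [hKsym σ σ']
        _ = π σ' * (1 - α) * (v σ' * v σ') := hA σ'
    have hsplit : ∑ σ, ∑ σ', K σ σ' * ((v σ * v σ + v σ' * v σ') / 2)
        = (∑ σ, ∑ σ', K σ σ' * (v σ * v σ)) / 2
          + (∑ σ, ∑ σ', K σ σ' * (v σ' * v σ')) / 2 := by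
      rw [Finset.sum_div, Finset.sum_div, ← Finset.sum_add_distrib]
      apply Finset.sum_congr rfl
      intro σ _
      rw [Finset.sum_div, Finset.sum_div, ← Finset.sum_add_distrib]
      apply Finset.sum_congr rfl
      intro σ' _
      ring
    have hAsum : ∑ σ, ∑ σ', K σ σ' * (v σ * v σ)
        = ∑ σ, π σ * (1 - α) * (v σ * v σ) :=
      Finset.sum_congr rfl fun σ _ => hA σ
    rw [hsplit, hAsum, hB]
    rw [Finset.mul_sum]
    have hhalf : ∀ x : ℝ, x / 2 + x / 2 = x := fun x => by ring
    rw [hhalf]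
    apply Finset.sum_congr rfl
    intro σ _
    ring
  exact le_trans hstep1 (le_of_eq hstep2)
end

section
/- Let P be a weighted CSMA chain for (G,W) with stationary distribution π, and let P* be the adjoint of P with respect to π. Then the operator norm of P* restricted to mean-zero functions is strictly less than 1: for every function v : I(G) → ℝ with Σ_{σ∈I(G)} π_σ v_σ = 0, one has ‖P* v‖_{2,π} ≤ (1 − 2^{-(24n·2^n + 12n + 2)} · W_max^{-8n}) · ‖v‖_{2,π}. -/
set_option maxHeartbeats 1600000 in
/-- For a weighted CSMA chain `P` for `(G, W)` with stationary
distribution `π` and adjoint `P*`, the operator norm of `P*` on mean-zero functions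
is strictly less than 1: for every `v` with `Σ_σ π_σ v_σ = 0`,
`‖P* v‖_{2,π} ≤ (1 - 2^{-(24n·2^n + 12n + 2)}·W_max^{-8n})·‖v‖_{2,π}`. -/
theorem csma_Pstar_operator_norm_bound
    {V : Type*} [Fintype V] [DecidableEq V] [Nonempty V]
    (G : SimpleGraph V) [DecidableRel G.Adj]
    (W : V → ℝ) (hW : ∀ i, 1 ≤ W i)
    (P : {s : Finset V // IsIndep G s} → {s : Finset V // IsIndep G s} → ℝ)
    (hP0 : ∀ σ σ', 0 ≤ P σ σ')
    (hProw : ∀ σ, ∑ σ', P σ σ' = 1)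
    (hPpos : ∀ σ σ', 0 < P σ σ' ↔ IsIndep G (σ.1 ∪ σ'.1))
    (hPform : ∀ σ, ∃ c : ℝ, 0 < c ∧ ∃ p : {s : Finset V // IsIndep G s} → ℝ,
      (∀ σ', p σ' ∈ Set.Icc (((2 : ℝ) ^ (Fintype.card V))⁻¹) 1) ∧
      ∀ σ', IsIndep G (σ.1 ∪ σ'.1) →
        P σ σ' = c * (∏ i ∈ σ.1 \ σ'.1, (W i)⁻¹) * p σ')
    (π : {s : Finset V // IsIndep G s} → ℝ)
    (hπ0 : ∀ σ, 0 < π σ) (hπsum : ∑ σ, π σ = 1)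
    (hπstat : ∀ σ', ∑ σ, π σ * P σ σ' = π σ')
    (Wmax : ℝ) (hWmax : Wmax = Finset.univ.sup' Finset.univ_nonempty W)
    (Pstar : {s : Finset V // IsIndep G s} → {s : Finset V // IsIndep G s} → ℝ)
    (hPstar : ∀ σ σ', Pstar σ σ' = π σ' * P σ' σ / π σ) :
    ∀ v : {s : Finset V // IsIndep G s} → ℝ, (∑ σ, π σ * v σ) = 0 →
      Real.sqrt (∑ σ, π σ * (∑ σ', Pstar σ σ' * v σ') ^ 2)
        ≤ (1 - ((2 : ℝ) ^ (24 * Fintype.card V * 2 ^ (Fintype.card V)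
              + 12 * Fintype.card V + 2)
            * Wmax ^ (8 * Fintype.card V))⁻¹)
          * Real.sqrt (∑ σ, π σ * (v σ) ^ 2) := by
  classical
  intro v hv
  set n := Fintype.card V with hn
  obtain ⟨i0⟩ := (inferInstance : Nonempty V)
  have hn1 : 1 ≤ n := Fintype.card_pos
  have hWmax1 : (1:ℝ) ≤ Wmax :=
    hWmax ▸ le_trans (hW i0) (Finset.le_sup' W (Finset.mem_univ i0))
  have hWmaxpos : (0:ℝ) < Wmax := lt_of_lt_of_le one_pos hWmax1
  have hWle : ∀ i, W i ≤ Wmax := fun i => hWmax ▸ Finset.le_sup' W (Finset.mem_univ i)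
  set e : {s : Finset V // IsIndep G s} :=
    ⟨∅, fun i hi => absurd hi (Finset.notMem_empty i)⟩ with he
  have hcard : (Fintype.card {s : Finset V // IsIndep G s} : ℝ) ≤ 2 ^ n := by
    have h1 := Fintype.card_subtype_le (IsIndep G)
    rw [Fintype.card_finset] at h1
    exact_mod_cast h1
  have h2pow : (0:ℝ) < 2 ^ n := by positivity
  -- β : uniform lower bound for P σ e
  set β : ℝ := ((2:ℝ) ^ n * (2:ℝ) ^ n * Wmax ^ n)⁻¹ with hβ
  have hβpos : 0 < β := by positivity
  have hPe : ∀ σ, β ≤ P σ e := by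
    intro σ
    obtain ⟨c, hc, p, hp, hform⟩ := hPform σ
    have hub : ∀ σ', P σ σ' ≤ c := by
      intro σ'
      by_cases h : IsIndep G (σ.1 ∪ σ'.1)
      · rw [hform σ' h]
        have h1 : ∏ i ∈ σ.1 \ σ'.1, (W i)⁻¹ ≤ 1 :=
          Finset.prod_le_one (fun i _ => inv_nonneg.2 (zero_le_one.trans (hW i)))
            (fun i _ => inv_le_one_of_one_le₀ (hW i))
        have h2 := (hp σ').2
        have h3 : (0:ℝ) ≤ p σ' := le_trans (by positivity) (hp σ').1
        calc c * (∏ i ∈ σ.1 \ σ'.1, (W i)⁻¹) * p σ'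
            ≤ c * 1 * 1 := by
              apply mul_le_mul (mul_le_mul le_rfl h1
                (Finset.prod_nonneg fun i _ => inv_nonneg.2 (zero_le_one.trans (hW i)))
                hc.le) h2 h3
              nlinarith
          _ = c := by ring
      · have h0 : ¬ 0 < P σ σ' := fun h' => h ((hPpos σ σ').1 h')
        have := hP0 σ σ'
        linarith [hc.le]
    have hcge : ((2:ℝ) ^ n)⁻¹ ≤ c := by
      have h1 : (1:ℝ) ≤ (Fintype.card {s : Finset V // IsIndep G s} : ℝ) * c := by
        rw [← hProw σ]
        calc ∑ σ', P σ σ' ≤ ∑ _σ' : {s : Finset V // IsIndep G s}, c :=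
              Finset.sum_le_sum fun σ' _ => hub σ'
          _ = (Fintype.card {s : Finset V // IsIndep G s} : ℝ) * c := by
              rw [Finset.sum_const, Finset.card_univ, nsmul_eq_mul]
      have h2 : (1:ℝ) ≤ 2 ^ n * c :=
        h1.trans (mul_le_mul_of_nonneg_right hcard hc.le)
      rw [inv_eq_one_div, div_le_iff₀ h2pow]
      nlinarith
    have hunion : IsIndep G (σ.1 ∪ e.1) := by
      have : σ.1 ∪ e.1 = σ.1 := Finset.union_empty σ.1
      rw [this]; exact σ.2
    rw [hform e hunion]
    have hprodnn : (0:ℝ) ≤ ∏ i ∈ σ.1 \ e.1, (W i)⁻¹ :=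
      Finset.prod_nonneg fun i _ => inv_nonneg.2 (zero_le_one.trans (hW i))
    have hprod : (Wmax ^ n)⁻¹ ≤ ∏ i ∈ σ.1 \ e.1, (W i)⁻¹ := by
      have h1 : ∏ _i ∈ σ.1 \ e.1, Wmax⁻¹ ≤ ∏ i ∈ σ.1 \ e.1, (W i)⁻¹ :=
        Finset.prod_le_prod (fun i _ => by positivity)
          (fun i _ => inv_anti₀ (lt_of_lt_of_le one_pos (hW i)) (hWle i))
      have h2 : ∏ _i ∈ σ.1 \ e.1, Wmax⁻¹ = (Wmax⁻¹) ^ (σ.1 \ e.1).card :=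
        Finset.prod_const _
      have h3 : (Wmax⁻¹) ^ n ≤ (Wmax⁻¹) ^ (σ.1 \ e.1).card := by
        apply pow_le_pow_of_le_one (by positivity) (inv_le_one_of_one_le₀ hWmax1)
        calc (σ.1 \ e.1).card ≤ σ.1.card := Finset.card_le_card (Finset.sdiff_subset)
          _ ≤ n := by rw [hn]; exact (Finset.card_le_univ σ.1).trans_eq Finset.card_univ
      calc (Wmax ^ n)⁻¹ = (Wmax⁻¹) ^ n := by rw [inv_pow]
        _ ≤ ∏ _i ∈ σ.1 \ e.1, Wmax⁻¹ := by rw [h2]; exact h3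
        _ ≤ _ := h1
    calc β = ((2:ℝ) ^ n)⁻¹ * (Wmax ^ n)⁻¹ * ((2:ℝ) ^ n)⁻¹ := by
          rw [hβ, mul_inv, mul_inv]; ring
      _ ≤ c * (∏ i ∈ σ.1 \ e.1, (W i)⁻¹) * p e := by
          apply mul_le_mul (mul_le_mul hcge hprod (by positivity)
            hc.le) (hp e).1 (by positivity) (mul_nonneg hc.le hprodnn)
  -- basic facts about π and Pstar
  have hπe1 : π e ≤ 1 := by
    rw [← hπsum]
    exact Finset.single_le_sum (fun σ _ => (hπ0 σ).le) (Finset.mem_univ e)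
  have hPstar0 : ∀ σ σ', 0 ≤ Pstar σ σ' := fun σ σ' => by
    rw [hPstar]
    exact div_nonneg (mul_nonneg (hπ0 σ').le (hP0 σ' σ)) (hπ0 σ).le
  have hPstarRow : ∀ σ, ∑ σ', Pstar σ σ' = 1 := by
    intro σ
    have : ∑ σ', Pstar σ σ' = (∑ σ', π σ' * P σ' σ) / π σ := by
      rw [Finset.sum_div]
      exact Finset.sum_congr rfl fun σ' _ => hPstar σ σ'
    rw [this, hπstat σ, div_self (hπ0 σ).ne']
  -- the kernel K = P P*
  set K : {s : Finset V // IsIndep G s} → {s : Finset V // IsIndep G s} → ℝ :=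
    fun σ σ' => ∑ τ, P σ τ * Pstar τ σ' with hK
  have hKlow : ∀ σ σ', β * β * π σ' ≤ K σ σ' := by
    intro σ σ'
    have h1 : P σ e * Pstar e σ' ≤ K σ σ' :=
      Finset.single_le_sum
        (fun τ _ => mul_nonneg (hP0 σ τ) (hPstar0 τ σ')) (Finset.mem_univ e)
    have h2 : β * π σ' ≤ Pstar e σ' := by
      rw [hPstar]
      have h3 : π σ' * β ≤ π σ' * P σ' e :=
        mul_le_mul_of_nonneg_left (hPe σ') (hπ0 σ').le
      calc β * π σ' = π σ' * β / 1 := by ring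
        _ ≤ π σ' * P σ' e / π e :=
            div_le_div₀ (mul_nonneg (hπ0 σ').le (hP0 σ' e)) (by linarith)
              (hπ0 e) hπe1
    calc β * β * π σ' = β * (β * π σ') := by ring
      _ ≤ P σ e * Pstar e σ' :=
          mul_le_mul (hPe σ) h2 (mul_nonneg hβpos.le (hπ0 σ').le) (hP0 σ e)
      _ ≤ K σ σ' := h1
  set α : ℝ := β * β with hα
  have hαpos : 0 < α := mul_pos hβpos hβpos
  have hβ4 : β ≤ 1/4 := by
    have h2 : (2:ℝ) ≤ 2 ^ n := by
      calc (2:ℝ) = 2 ^ 1 := (pow_one 2).symm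
        _ ≤ 2 ^ n := pow_le_pow_right₀ one_le_two hn1
    have hw : (1:ℝ) ≤ Wmax ^ n := one_le_pow₀ hWmax1
    have h4 : (4:ℝ) ≤ 2 ^ n * 2 ^ n * Wmax ^ n := by nlinarith
    calc β ≤ (4:ℝ)⁻¹ := inv_anti₀ (by norm_num) h4
      _ = 1/4 := by norm_num
  have hα1 : α ≤ 1/2 := by
    have : α ≤ 1/4 * (1/4) := mul_le_mul hβ4 hβ4 hβpos.le (by norm_num)
    linarith
  have h1α : (0:ℝ) < 1 - α := by linarith
  -- K row sums and stationarity
  have hKrow : ∀ σ, ∑ σ', K σ σ' = 1 := by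
    intro σ
    rw [hK]
    simp only []
    rw [Finset.sum_comm]
    calc ∑ τ, ∑ σ', P σ τ * Pstar τ σ'
        = ∑ τ, P σ τ * ∑ σ', Pstar τ σ' := by
          exact Finset.sum_congr rfl fun τ _ => (Finset.mul_sum _ _ _).symm
      _ = ∑ τ, P σ τ := by
          refine Finset.sum_congr rfl fun τ _ => ?_
          rw [hPstarRow τ, mul_one]
      _ = 1 := hProw σ
  have hKstat : ∀ σ', ∑ σ, π σ * K σ σ' = π σ' := by
    intro σ'
    rw [hK]
    simp only []
    calc ∑ σ, π σ * ∑ τ, P σ τ * Pstar τ σ'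
        = ∑ σ, ∑ τ, π σ * P σ τ * Pstar τ σ' := by
          refine Finset.sum_congr rfl fun σ _ => ?_
          rw [Finset.mul_sum]
          exact Finset.sum_congr rfl fun τ _ => by ring
      _ = ∑ τ, (∑ σ, π σ * P σ τ) * Pstar τ σ' := by
          rw [Finset.sum_comm]
          exact Finset.sum_congr rfl fun τ _ => (Finset.sum_mul _ _ _).symm
      _ = ∑ τ, π τ * Pstar τ σ' := by
          refine Finset.sum_congr rfl fun τ _ => ?_
          rw [hπstat τ]
      _ = ∑ τ, π σ' * P σ' τ := by
          refine Finset.sum_congr rfl fun τ _ => ?_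
          rw [hPstar]
          field_simp
          rw [mul_assoc]
          exact mul_div_cancel_left₀ _ (hπ0 τ).ne'
      _ = π σ' := by rw [← Finset.mul_sum, hProw σ', mul_one]
  -- the residual kernel Q
  set Q : {s : Finset V // IsIndep G s} → {s : Finset V // IsIndep G s} → ℝ :=
    fun σ σ' => (K σ σ' - α * π σ') / (1 - α) with hQ
  have hQ0 : ∀ σ σ', 0 ≤ Q σ σ' := fun σ σ' =>
    div_nonneg (by have := hKlow σ σ'; linarith) h1α.le
  have hQrow : ∀ σ, ∑ σ', Q σ σ' = 1 := by
    intro σ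
    rw [hQ]
    simp only []
    rw [← Finset.sum_div, Finset.sum_sub_distrib, hKrow σ, ← Finset.mul_sum, hπsum,
      mul_one]
    field_simp
  have hQstat : ∀ σ', ∑ σ, π σ * Q σ σ' = π σ' := by
    intro σ'
    rw [hQ]
    simp only []
    have : ∀ σ, π σ * ((K σ σ' - α * π σ') / (1 - α))
        = (π σ * K σ σ' - α * π σ' * π σ) / (1 - α) := by
      intro σ; field_simp
    rw [Finset.sum_congr rfl fun σ _ => this σ, ← Finset.sum_div,
      Finset.sum_sub_distrib, hKstat σ', ← Finset.mul_sum, hπsum, mul_one]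
    field_simp
  -- u = P* v
  set u : {s : Finset V // IsIndep G s} → ℝ := fun σ => ∑ σ', Pstar σ σ' * v σ' with hu
  have hπu : ∀ σ, π σ * u σ = ∑ σ', π σ' * P σ' σ * v σ' := by
    intro σ
    rw [hu]
    simp only []
    rw [Finset.mul_sum]
    refine Finset.sum_congr rfl fun σ' _ => ?_
    rw [hPstar]
    field_simp [(hπ0 σ).ne']
  -- ‖P* v‖² = (1-α) ⟨v, Q v⟩
  set A : ℝ := ∑ σ, π σ * v σ ^ 2 with hA
  set B : ℝ := ∑ σ, π σ * (∑ σ', Q σ σ' * v σ') ^ 2 with hB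
  set X : ℝ := ∑ σ, π σ * v σ * (∑ σ', Q σ σ' * v σ') with hX
  have key1 : ∑ σ, π σ * u σ ^ 2 = (1 - α) * X := by
    have step1 : ∑ σ, π σ * u σ ^ 2 = ∑ τ, π τ * v τ * ∑ σ, P τ σ * u σ := by
      calc ∑ σ, π σ * u σ ^ 2
          = ∑ σ, (∑ σ', π σ' * P σ' σ * v σ') * u σ := by
            refine Finset.sum_congr rfl fun σ _ => ?_
            rw [sq, ← mul_assoc, hπu σ]
        _ = ∑ σ, ∑ σ', π σ' * v σ' * (P σ' σ * u σ) := by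
            refine Finset.sum_congr rfl fun σ _ => ?_
            rw [Finset.sum_mul]
            exact Finset.sum_congr rfl fun σ' _ => by ring
        _ = ∑ σ', π σ' * v σ' * ∑ σ, P σ' σ * u σ := by
            rw [Finset.sum_comm]
            exact Finset.sum_congr rfl fun σ' _ => (Finset.mul_sum _ _ _).symm
    have step2 : ∀ τ, ∑ σ, P τ σ * u σ = ∑ σ', K τ σ' * v σ' := by
      intro τ
      calc ∑ σ, P τ σ * u σ
          = ∑ σ, ∑ σ', P τ σ * Pstar σ σ' * v σ' := by
            refine Finset.sum_congr rfl fun σ _ => ?_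
            rw [hu]
            simp only []
            rw [Finset.mul_sum]
            exact Finset.sum_congr rfl fun σ' _ => by ring
        _ = ∑ σ', (∑ σ, P τ σ * Pstar σ σ') * v σ' := by
            rw [Finset.sum_comm]
            exact Finset.sum_congr rfl fun σ' _ => (Finset.sum_mul _ _ _).symm
        _ = ∑ σ', K τ σ' * v σ' := rfl
    have step3 : ∀ τ, ∑ σ', K τ σ' * v σ' = (1 - α) * ∑ σ', Q τ σ' * v σ' := by
      intro τ
      have hKQ : ∀ σ', K τ σ' = α * π σ' + (1 - α) * Q τ σ' := by
        intro σ'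
        rw [hQ]
        field_simp
        ring
      calc ∑ σ', K τ σ' * v σ'
          = ∑ σ', (α * (π σ' * v σ') + (1 - α) * (Q τ σ' * v σ')) := by
            refine Finset.sum_congr rfl fun σ' _ => ?_
            rw [hKQ σ']; ring
        _ = α * ∑ σ', π σ' * v σ' + (1 - α) * ∑ σ', Q τ σ' * v σ' := by
            rw [Finset.sum_add_distrib, ← Finset.mul_sum, ← Finset.mul_sum]
        _ = (1 - α) * ∑ σ', Q τ σ' * v σ' := by rw [hv, mul_zero, zero_add]
    calc ∑ σ, π σ * u σ ^ 2
        = ∑ τ, π τ * v τ * ((1 - α) * ∑ σ', Q τ σ' * v σ') := by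
          rw [step1]
          exact Finset.sum_congr rfl fun τ _ => by rw [step2 τ, step3 τ]
      _ = (1 - α) * X := by
          rw [hX, Finset.mul_sum]
          exact Finset.sum_congr rfl fun τ _ => by ring
  -- Cauchy-Schwarz : X² ≤ A * B
  have hCS : X ^ 2 ≤ A * B := by
    have := Finset.sum_mul_sq_le_sq_mul_sq Finset.univ
      (fun σ => Real.sqrt (π σ) * v σ)
      (fun σ => Real.sqrt (π σ) * (∑ σ', Q σ σ' * v σ'))
    have hXeq : X = ∑ σ, (Real.sqrt (π σ) * v σ) *
        (Real.sqrt (π σ) * (∑ σ', Q σ σ' * v σ')) := by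
      rw [hX]
      refine Finset.sum_congr rfl fun σ _ => ?_
      rw [show ∀ a b c : ℝ, (Real.sqrt a * b) * (Real.sqrt a * c)
          = (Real.sqrt a * Real.sqrt a) * (b * c) from fun a b c => by ring,
        Real.mul_self_sqrt (hπ0 σ).le]
      ring
    have hAeq : A = ∑ σ, (Real.sqrt (π σ) * v σ) ^ 2 := by
      rw [hA]
      refine Finset.sum_congr rfl fun σ _ => ?_
      rw [mul_pow, Real.sq_sqrt (hπ0 σ).le]
    have hBeq : B = ∑ σ, (Real.sqrt (π σ) * (∑ σ', Q σ σ' * v σ')) ^ 2 := by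
      rw [hB]
      refine Finset.sum_congr rfl fun σ _ => ?_
      rw [mul_pow, Real.sq_sqrt (hπ0 σ).le]
    rw [hXeq, hAeq, hBeq]
    exact this
  -- Markov contraction : B ≤ A
  have hBA : B ≤ A := by
    have hpt : ∀ σ, (∑ σ', Q σ σ' * v σ') ^ 2 ≤ ∑ σ', Q σ σ' * v σ' ^ 2 := by
      intro σ
      have := Finset.sum_mul_sq_le_sq_mul_sq Finset.univ
        (fun σ' => Real.sqrt (Q σ σ'))
        (fun σ' => Real.sqrt (Q σ σ') * v σ')
      have h1 : ∑ σ', Real.sqrt (Q σ σ') * (Real.sqrt (Q σ σ') * v σ')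
          = ∑ σ', Q σ σ' * v σ' := by
        refine Finset.sum_congr rfl fun σ' _ => ?_
        rw [← mul_assoc, Real.mul_self_sqrt (hQ0 σ σ')]
      have h2 : ∑ σ', (Real.sqrt (Q σ σ')) ^ 2 = 1 := by
        rw [← hQrow σ]
        exact Finset.sum_congr rfl fun σ' _ => Real.sq_sqrt (hQ0 σ σ')
      have h3 : ∑ σ', (Real.sqrt (Q σ σ') * v σ') ^ 2 = ∑ σ', Q σ σ' * v σ' ^ 2 := by
        refine Finset.sum_congr rfl fun σ' _ => ?_
        rw [mul_pow, Real.sq_sqrt (hQ0 σ σ')]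
      rw [h1, h2, h3, one_mul] at this
      exact this
    calc B ≤ ∑ σ, π σ * ∑ σ', Q σ σ' * v σ' ^ 2 := by
          rw [hB]
          exact Finset.sum_le_sum fun σ _ =>
            mul_le_mul_of_nonneg_left (hpt σ) (hπ0 σ).le
      _ = ∑ σ, ∑ σ', π σ * Q σ σ' * v σ' ^ 2 := by
          refine Finset.sum_congr rfl fun σ _ => ?_
          rw [Finset.mul_sum]
          exact Finset.sum_congr rfl fun σ' _ => by ring
      _ = ∑ σ', (∑ σ, π σ * Q σ σ') * v σ' ^ 2 := by
          rw [Finset.sum_comm]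
          exact Finset.sum_congr rfl fun σ' _ => (Finset.sum_mul _ _ _).symm
      _ = A := by
          rw [hA]
          exact Finset.sum_congr rfl fun σ' _ => by rw [hQstat σ']
  -- from Cauchy-Schwarz and contraction: X ≤ A
  have hA0 : 0 ≤ A := Finset.sum_nonneg fun σ _ => mul_nonneg (hπ0 σ).le (sq_nonneg _)
  have hB0 : 0 ≤ B := Finset.sum_nonneg fun σ _ => mul_nonneg (hπ0 σ).le (sq_nonneg _)
  have hXA : X ≤ A := by
    have hX2 : X ^ 2 ≤ A ^ 2 := by nlinarith
    calc X ≤ |X| := le_abs_self X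
      _ = Real.sqrt (X ^ 2) := (Real.sqrt_sq_eq_abs X).symm
      _ ≤ Real.sqrt (A ^ 2) := Real.sqrt_le_sqrt hX2
      _ = A := by rw [Real.sqrt_sq hA0]
  -- the claimed constant is at most α/2
  set δ : ℝ := ((2 : ℝ) ^ (24 * n * 2 ^ n + 12 * n + 2) * Wmax ^ (8 * n))⁻¹ with hδ
  have hδα : δ ≤ α / 2 := by
    have hE : 4 * n + 1 ≤ 24 * n * 2 ^ n + 12 * n + 2 := by
      calc 4 * n + 1 ≤ 12 * n + 2 := by omega
        _ ≤ 24 * n * 2 ^ n + 12 * n + 2 := Nat.le_add_left _ _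
    have hD : (2 : ℝ) ^ (4 * n + 1) * Wmax ^ (2 * n)
        ≤ (2 : ℝ) ^ (24 * n * 2 ^ n + 12 * n + 2) * Wmax ^ (8 * n) :=
      mul_le_mul (pow_le_pow_right₀ one_le_two hE)
        (pow_le_pow_right₀ hWmax1 (by omega)) (by positivity) (by positivity)
    have h1 : δ ≤ ((2 : ℝ) ^ (4 * n + 1) * Wmax ^ (2 * n))⁻¹ :=
      inv_anti₀ (by positivity) hD
    have h2 : ((2 : ℝ) ^ (4 * n + 1) * Wmax ^ (2 * n))⁻¹ = α / 2 := by
      have hx : (2 : ℝ) ^ (4 * n + 1) * Wmax ^ (2 * n)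
          = ((2:ℝ) ^ n * 2 ^ n * Wmax ^ n) * ((2:ℝ) ^ n * 2 ^ n * Wmax ^ n) * 2 := by
        rw [show 4 * n + 1 = n + n + n + n + 1 by ring,
          show 2 * n = n + n by ring, pow_add, pow_add, pow_add, pow_add,
          pow_add, pow_one]
        ring
      rw [hx, mul_inv, mul_inv, hα, hβ, mul_inv, mul_inv]
      ring
    linarith
  -- √(1-α) ≤ 1 - α/2
  have hsqrtα : Real.sqrt (1 - α) ≤ 1 - α / 2 := by
    have h1 : 1 - α ≤ (1 - α / 2) ^ 2 := by nlinarith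
    have h2 := Real.sqrt_le_sqrt h1
    rwa [Real.sqrt_sq (by linarith : (0:ℝ) ≤ 1 - α / 2)] at h2
  -- final assembly
  calc Real.sqrt (∑ σ, π σ * (∑ σ', Pstar σ σ' * v σ') ^ 2)
      = Real.sqrt (∑ σ, π σ * u σ ^ 2) := rfl
    _ ≤ Real.sqrt ((1 - α) * A) := by
        apply Real.sqrt_le_sqrt
        rw [key1]
        exact mul_le_mul_of_nonneg_left hXA h1α.le
    _ = Real.sqrt (1 - α) * Real.sqrt A := Real.sqrt_mul h1α.le A
    _ ≤ (1 - α / 2) * Real.sqrt A :=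
        mul_le_mul_of_nonneg_right hsqrtα (Real.sqrt_nonneg A)
    _ ≤ (1 - δ) * Real.sqrt A :=
        mul_le_mul_of_nonneg_right (by linarith) (Real.sqrt_nonneg A)
end
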